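/- arXiv:2503.16878 — 10 statements merged into one kernel-verified Lean document; each statement's English description precedes it below -/
import Mathlib

section
/- For every real number $\lambda$ with $0 < \lambda < 1$ and every integer $n \ge 1$, $\int_0^\infty \prod_{k=0}^{n} (1 + t^2 \lambda^k)^{-1} \, dt = \frac{\pi}{2} \prod_{k=0}^{n-1} \frac{1 - \lambda^{k+1/2}}{1 - \lambda^{k+1}}$. -/
open MeasureTheory Real Finset

lemma aux_cont (a : ℕ → ℝ) (ha : ∀ k, 0 < a k) (n : ℕ) :
    Continuous (fun t : ℝ => ∏ k ∈ Finset.range n, (1 + t^2 * a k)⁻¹) := by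
  apply continuous_finset_prod
  intro k _
  apply Continuous.inv₀ (by continuity)
  intro t
  have := ha k
  positivity

lemma aux_int (a : ℕ → ℝ) (ha : ∀ k, 0 < a k) (n : ℕ) (hn : 1 ≤ n) :
    IntegrableOn (fun t : ℝ => ∏ k ∈ Finset.range n, (1 + t^2 * a k)⁻¹) (Set.Ioi 0) := by
  have h0 : (0:ℕ) ∈ Finset.range n := Finset.mem_range.mpr hn
  have hg : Integrable (fun t : ℝ => (1 + t^2 * a 0)⁻¹) := by
    have h := integrable_inv_one_add_sq.comp_mul_left' (R := Real.sqrt (a 0))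
      (ne_of_gt (Real.sqrt_pos.mpr (ha 0)))
    convert h using 3 with t
    rw [mul_pow, Real.sq_sqrt (ha 0).le]
    ring
  apply (hg.integrableOn).mono' ((aux_cont a ha n).aestronglyMeasurable.restrict)
  filter_upwards with t
  have hfac : ∀ k, (0:ℝ) < 1 + t^2 * a k := fun k => by have := ha k; positivity
  rw [Real.norm_eq_abs, abs_of_nonneg (Finset.prod_nonneg fun k _ => (inv_nonneg.mpr (hfac k).le))]
  calc ∏ k ∈ Finset.range n, (1 + t^2 * a k)⁻¹
      = (1 + t^2 * a 0)⁻¹ * ∏ k ∈ (Finset.range n).erase 0, (1 + t^2 * a k)⁻¹ :=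
        (Finset.mul_prod_erase _ _ h0).symm
    _ ≤ (1 + t^2 * a 0)⁻¹ * 1 := by
        apply mul_le_mul_of_nonneg_left _ (inv_nonneg.mpr (hfac 0).le)
        apply Finset.prod_le_one (fun k _ => inv_nonneg.mpr (hfac k).le)
        intro k _
        rw [inv_le_one_iff₀]
        right
        have := ha k; nlinarith [sq_nonneg t]
    _ = (1 + t^2 * a 0)⁻¹ := mul_one _

lemma key (l : ℝ) (hl0 : 0 < l) (hl1 : l < 1) : ∀ n : ℕ,
    ∫ t in Set.Ioi (0:ℝ), ∏ k ∈ Finset.range (n+1), (1 + t^2 * l^k)⁻¹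
      = (Real.pi / 2) * ∏ k ∈ Finset.range n,
          (1 - l ^ ((k : ℝ) + 1/2)) / (1 - l ^ (k+1)) := by
  intro n
  induction n with
  | zero =>
      simp only [zero_add, Finset.range_one, Finset.prod_singleton, pow_zero, mul_one,
        Finset.range_zero, Finset.prod_empty]
      rw [integral_Ioi_inv_one_add_sq, Real.arctan_zero, sub_zero]
  | succ n ih =>
      set P : ℝ → ℝ := fun t => ∏ k ∈ Finset.range (n+1), (1 + t^2 * l^k)⁻¹ with hP
      set Q : ℝ → ℝ := fun t => ∏ k ∈ Finset.range (n+1), (1 + t^2 * l^(k+1))⁻¹ with hQ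
      have hfac : ∀ (t : ℝ) (k : ℕ), (0:ℝ) < 1 + t^2 * l^k := fun t k => by positivity
      have hlp1 : l^(n+1) < 1 := pow_lt_one₀ hl0.le hl1 (Nat.succ_ne_zero n)
      have hden : (1:ℝ) - l^(n+1) ≠ 0 := by linarith
      have hs0 : 0 < Real.sqrt l := Real.sqrt_pos.mpr hl0
      have hss : Real.sqrt l * Real.sqrt l = l := Real.mul_self_sqrt hl0.le
      -- pointwise partial fraction identity
      have hpt : ∀ t : ℝ, ∏ k ∈ Finset.range (n+2), (1 + t^2 * l^k)⁻¹
          = (1 - l^(n+1))⁻¹ * (P t - l^(n+1) * Q t) := by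
        intro t
        have h1 : P t = (∏ k ∈ Finset.range (n+2), (1 + t^2 * l^k)⁻¹) * (1 + t^2 * l^(n+1)) := by
          rw [Finset.prod_range_succ]
          field_simp
          simp only [hP, one_div]
        have h2 : Q t = (∏ k ∈ Finset.range (n+2), (1 + t^2 * l^k)⁻¹) * (1 + t^2) := by
          rw [Finset.prod_range_succ' (fun k => (1 + t^2 * l^k)⁻¹)]
          simp only [pow_zero, mul_one]
          field_simp
          simp only [hQ, one_div]
        rw [h1, h2]
        field_simp
        ring
      have hintP : IntegrableOn P (Set.Ioi (0:ℝ)) :=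
        aux_int (fun k => l^k) (fun k => pow_pos hl0 k) (n+1) (by omega)
      have hintQ : IntegrableOn Q (Set.Ioi (0:ℝ)) :=
        aux_int (fun k => l^(k+1)) (fun k => pow_pos hl0 (k+1)) (n+1) (by omega)
      -- substitution for Q
      have hsub : ∫ t in Set.Ioi (0:ℝ), Q t = (Real.sqrt l)⁻¹ * ∫ t in Set.Ioi (0:ℝ), P t := by
        have h := integral_comp_mul_left_Ioi P 0 hs0
        rw [mul_zero, smul_eq_mul] at h
        rw [← h]
        apply integral_congr_ae (Filter.Eventually.of_forall ?_)
        intro t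
        simp only [hP, hQ]
        apply Finset.prod_congr rfl
        intro k _
        congr 2
        rw [mul_pow, Real.sq_sqrt hl0.le, pow_succ]
        ring
      have hstep : ∫ t in Set.Ioi (0:ℝ), ∏ k ∈ Finset.range (n+2), (1 + t^2 * l^k)⁻¹
          = (1 - l^(n+1))⁻¹ *
            ((∫ t in Set.Ioi (0:ℝ), P t) - l^(n+1) * ∫ t in Set.Ioi (0:ℝ), Q t) := by
        rw [integral_congr_ae (Filter.Eventually.of_forall hpt), integral_const_mul,
          integral_sub hintP (hintQ.const_mul _), integral_const_mul]
      have hr : l ^ ((n:ℝ) + 1/2) = l^n * Real.sqrt l := by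
        rw [Real.rpow_add hl0, Real.rpow_natCast, ← Real.sqrt_eq_rpow]
      show ∫ t in Set.Ioi (0:ℝ), ∏ k ∈ Finset.range (n+2), (1 + t^2 * l^k)⁻¹ = _
      rw [hstep, hsub, ih, Finset.prod_range_succ, hr]
      have hl1n : l^(n+1) * (Real.sqrt l)⁻¹ = l^n * Real.sqrt l := by
        field_simp
        rw [Real.sq_sqrt hl0.le]; ring
      rw [← mul_assoc, hl1n]
      simp only [div_eq_mul_inv]
      ring

theorem stmt_0 (l : ℝ) (hl0 : 0 < l) (hl1 : l < 1) (n : ℕ) (hn : 1 ≤ n) :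
    ∫ t in Set.Ioi (0:ℝ), ∏ k ∈ Finset.range (n+1), (1 + t^2 * l^k)⁻¹
      = (Real.pi / 2) * ∏ k ∈ Finset.range n,
          (1 - l ^ ((k : ℝ) + 1/2)) / (1 - l ^ (k+1)) := by
  exact key l hl0 hl1 n
end

section
/- For every real number $\lambda$ with $0 < \lambda < 1$ and every integer $n \ge 1$, $\int_0^\infty \prod_{k=0}^{n} (1 + t \lambda^k)^{-1} \, dt = \frac{\log(\lambda^{-1})}{1 - \lambda^{n}}$. -/
open MeasureTheory Real Finset Filter Topology

lemma two_factor (a b : ℝ) (hb : 0 < b) (hba : b < a) :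
    IntegrableOn (fun t => (1 + t*a)⁻¹ * (1 + t*b)⁻¹) (Set.Ioi (0:ℝ)) ∧
    ∫ t in Set.Ioi (0:ℝ), (1 + t*a)⁻¹ * (1 + t*b)⁻¹
      = (Real.log a - Real.log b) / (a - b) := by
  have ha : 0 < a := hb.trans hba
  have hab : a - b ≠ 0 := sub_ne_zero.2 (ne_of_gt hba)
  set F : ℝ → ℝ := fun t => (Real.log (1 + t*a) - Real.log (1 + t*b)) / (a - b) with hF
  have hderiv : ∀ x ∈ Set.Ici (0:ℝ), HasDerivAt F ((1 + x*a)⁻¹ * (1 + x*b)⁻¹) x := by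
    intro x hx
    simp only [Set.mem_Ici] at hx
    have h1 : (0:ℝ) < 1 + x*a := by positivity
    have h2 : (0:ℝ) < 1 + x*b := by positivity
    have d1 : HasDerivAt (fun t : ℝ => 1 + t*a) a x := by
      simpa using ((hasDerivAt_id x).mul_const a).const_add 1
    have d2 : HasDerivAt (fun t : ℝ => 1 + t*b) b x := by
      simpa using ((hasDerivAt_id x).mul_const b).const_add 1
    have h : HasDerivAt F ((a/(1+x*a) - b/(1+x*b))/(a-b)) x :=
      ((d1.log h1.ne').sub (d2.log h2.ne')).div_const _
    convert h using 1
    field_simp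
    ring
  have hlim : Tendsto F atTop (𝓝 ((Real.log a - Real.log b) / (a-b))) := by
    have h0 : Tendsto (fun t : ℝ => (t⁻¹ + a)/(t⁻¹ + b)) atTop (𝓝 (a/b)) := by
      have := (tendsto_inv_atTop_zero.add_const a).div
        (tendsto_inv_atTop_zero.add_const b) (by simpa using hb.ne')
      simp only [zero_add] at this
      exact this
    have hr : Tendsto (fun t : ℝ => (1 + t*a)/(1 + t*b)) atTop (𝓝 (a/b)) := by
      apply h0.congr'
      filter_upwards [eventually_gt_atTop (0:ℝ)] with t ht
      have h2 : (0:ℝ) < 1 + t*b := by positivity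
      rw [div_eq_div_iff (by positivity) h2.ne']
      field_simp
    have hlog : Tendsto (fun t : ℝ => Real.log ((1 + t*a)/(1 + t*b))) atTop
        (𝓝 (Real.log a - Real.log b)) := by
      rw [← Real.log_div ha.ne' hb.ne']
      exact (Real.continuousAt_log (by positivity)).tendsto.comp hr
    apply (hlog.div_const (a-b)).congr'
    filter_upwards [eventually_gt_atTop (0:ℝ)] with t ht
    have h1 : (0:ℝ) < 1 + t*a := by positivity
    have h2 : (0:ℝ) < 1 + t*b := by positivity
    rw [hF]
    rw [Real.log_div h1.ne' h2.ne']
  have hpos : ∀ x ∈ Set.Ioi (0:ℝ), 0 ≤ (1 + x*a)⁻¹ * (1 + x*b)⁻¹ := by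
    intro x hx
    simp only [Set.mem_Ioi] at hx
    positivity
  have hcont : ContinuousWithinAt F (Set.Ici 0) 0 :=
    (hderiv 0 Set.self_mem_Ici).continuousAt.continuousWithinAt
  have hder' := fun x (hx : x ∈ Set.Ioi (0:ℝ)) => hderiv x (Set.mem_Ici.2 (le_of_lt hx))
  have hint := integrableOn_Ioi_deriv_of_nonneg hcont hder' hpos hlim
  refine ⟨hint, ?_⟩
  rw [integral_Ioi_of_hasDerivAt_of_tendsto hcont hder' hint hlim]
  simp [hF]


lemma factor_pos {l : ℝ} (hl0 : 0 < l) (k : ℕ) {t : ℝ} (ht : 0 ≤ t) :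
    0 < 1 + t * l^k := by positivity

lemma prod_le {l : ℝ} (hl0 : 0 < l) (n : ℕ) (hn : 1 ≤ n) {t : ℝ} (ht : 0 ≤ t) :
    ∏ k ∈ Finset.range (n+1), (1 + t * l^k)⁻¹ ≤ (1 + t*1)⁻¹ * (1 + t*l)⁻¹ := by
  obtain ⟨m, rfl⟩ : ∃ m, n = m + 1 := ⟨n - 1, (Nat.succ_pred_eq_of_pos hn).symm⟩
  have : m + 1 + 1 = 2 + m := by ring
  rw [this, Finset.prod_range_add]
  have h2 : ∏ k ∈ Finset.range 2, (1 + t * l^k)⁻¹ = (1 + t*1)⁻¹ * (1 + t*l)⁻¹ := by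
    simp [Finset.prod_range_succ]
    ring
  rw [h2]
  have hle : ∏ k ∈ Finset.range m, (1 + t * l^(2+k))⁻¹ ≤ 1 := by
    apply Finset.prod_le_one
    · intro k _; positivity
    · intro k _
      rw [inv_le_one_iff₀]
      right
      nlinarith [pow_pos hl0 (2+k), mul_nonneg ht (pow_pos hl0 (2+k)).le]
  have hAB : (0:ℝ) ≤ (1 + t*1)⁻¹ * (1 + t*l)⁻¹ := by positivity
  calc (1 + t*1)⁻¹ * (1 + t*l)⁻¹ * ∏ k ∈ Finset.range m, (1 + t * l^(2+k))⁻¹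
      ≤ (1 + t*1)⁻¹ * (1 + t*l)⁻¹ * 1 := by
        exact mul_le_mul_of_nonneg_left hle hAB
    _ = (1 + t*1)⁻¹ * (1 + t*l)⁻¹ := mul_one _

lemma integrable_P {l : ℝ} (hl0 : 0 < l) (hl1 : l < 1) (n : ℕ) (hn : 1 ≤ n) :
    IntegrableOn (fun t => ∏ k ∈ Finset.range (n+1), (1 + t * l^k)⁻¹)
      (Set.Ioi (0:ℝ)) := by
  refine MeasureTheory.Integrable.mono ((two_factor 1 l hl0 hl1).1) ?_ ?_
  · apply ContinuousOn.aestronglyMeasurable _ measurableSet_Ioi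
    apply continuousOn_finset_prod
    intro k _
    exact ((continuous_const.add (continuous_id.mul continuous_const)).continuousOn).inv₀
      (fun t ht => (factor_pos hl0 k (le_of_lt ht)).ne')
  · filter_upwards [ae_restrict_mem measurableSet_Ioi] with t ht
    have ht' : (0:ℝ) ≤ t := le_of_lt ht
    rw [Real.norm_eq_abs, Real.norm_eq_abs, abs_of_nonneg, abs_of_nonneg]
    · exact prod_le hl0 n hn ht'
    · positivity
    · exact Finset.prod_nonneg fun k _ => by positivity

theorem stmt_1 (l : ℝ) (hl0 : 0 < l) (hl1 : l < 1) (n : ℕ) (hn : 1 ≤ n) :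
    ∫ t in Set.Ioi (0:ℝ), ∏ k ∈ Finset.range (n+1), (1 + t * l^k)⁻¹
      = Real.log l⁻¹ / (1 - l ^ n) := by
  induction n, hn using Nat.le_induction with
  | base =>
    have h := (two_factor 1 l hl0 hl1).2
    simp only [Real.log_one, zero_sub, pow_one] at h ⊢
    rw [Real.log_inv]
    rw [← h]
    apply setIntegral_congr_fun measurableSet_Ioi
    intro t _
    simp [Finset.prod_range_succ]
    ring
  | succ n hn ih =>
    set g : ℝ → ℝ := fun t => ∏ k ∈ Finset.range (n+1), (1 + t * l^k)⁻¹ with hg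
    have hlN : l^(n+1) < 1 := pow_lt_one₀ hl0.le hl1 (Nat.succ_ne_zero n)
    have hlN' : l^(n+1) - 1 ≠ 0 := by nlinarith
    have hln1 : (1:ℝ) - l^n ≠ 0 := by
      have : l^n < 1 := pow_lt_one₀ hl0.le hl1 (by omega)
      nlinarith
    -- pointwise identity
    have key : ∀ t ∈ Set.Ioi (0:ℝ),
        ∏ k ∈ Finset.range (n+1+1), (1 + t * l^k)⁻¹
          = (l^(n+1) - 1)⁻¹ * (l^(n+1) * g (l*t) - g t) := by
      intro t ht
      simp only [Set.mem_Ioi] at ht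
      have hgl : g (l*t) = ∏ k ∈ Finset.range (n+1), (1 + t * l^(k+1))⁻¹ := by
        apply Finset.prod_congr rfl
        intro k _
        ring_nf
      have hsplitF : ∏ k ∈ Finset.range (n+1+1), (1 + t * l^k)⁻¹
          = (1 + t)⁻¹ * ∏ k ∈ Finset.range (n+1), (1 + t * l^(k+1))⁻¹ := by
        rw [Finset.prod_range_succ']
        simp [mul_comm]
      have hsplitg : g t = (1 + t)⁻¹ * ∏ k ∈ Finset.range n, (1 + t * l^(k+1))⁻¹ := by
        rw [hg]
        simp only
        rw [Finset.prod_range_succ']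
        simp [mul_comm]
      have hsplitB : ∏ k ∈ Finset.range (n+1), (1 + t * l^(k+1))⁻¹
          = (∏ k ∈ Finset.range n, (1 + t * l^(k+1))⁻¹) * (1 + t * l^(n+1))⁻¹ := by
        rw [Finset.prod_range_succ]
      set B := ∏ k ∈ Finset.range n, (1 + t * l^(k+1))⁻¹ with hB
      rw [hsplitF, hgl, hsplitg, hsplitB]
      have h1 : (1:ℝ) + t ≠ 0 := by positivity
      have h2 : (1:ℝ) + t * l^(n+1) ≠ 0 := by positivity
      field_simp
      ring
    rw [setIntegral_congr_fun measurableSet_Ioi key]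
    have hint1 : IntegrableOn (fun t => g (l*t)) (Set.Ioi (0:ℝ)) := by
      rw [integrableOn_Ioi_comp_mul_left_iff g 0 hl0, mul_zero]
      exact integrable_P hl0 hl1 n hn
    have hint2 : IntegrableOn g (Set.Ioi (0:ℝ)) := integrable_P hl0 hl1 n hn
    rw [integral_const_mul]
    rw [integral_sub (hint1.const_mul _) hint2]
    rw [integral_const_mul]
    have hcomp : ∫ t in Set.Ioi (0:ℝ), g (l*t) = l⁻¹ * ∫ t in Set.Ioi (0:ℝ), g t := by
      rw [integral_comp_mul_left_Ioi g 0 hl0, mul_zero, smul_eq_mul]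
    rw [hcomp, ih]
    have : l^(n+1) * (l⁻¹ * (Real.log l⁻¹ / (1 - l^n))) = l^n * (Real.log l⁻¹ / (1 - l^n)) := by
      rw [pow_succ]
      field_simp
    rw [this]
    have h3 : (1:ℝ) - l^(n+1) ≠ 0 := sub_ne_zero_of_ne (ne_of_gt hlN)
    field_simp
    ring
end

section
/- For every real number $\lambda$ with $0 < \lambda < 1$, $\int_0^\infty \prod_{k=0}^{\infty} (1 + t \lambda^k)^{-1} \, dt = \log(\lambda^{-1})$. -/
set_option linter.unusedSectionVars false

open MeasureTheory Real Filter Topology Set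

namespace Stmt2Aux

noncomputable def S (l t : ℝ) : ℝ := ∑' k : ℕ, Real.log (1 + max t 0 * l ^ k)
noncomputable def F (l t : ℝ) : ℝ := Real.exp (-S l t)

variable {l : ℝ} (hl0 : 0 < l) (hl1 : l < 1)
include hl0 hl1

lemma term_pos (t : ℝ) (k : ℕ) (ht : 0 ≤ t) : 0 < 1 + t * l ^ k := by
  have := pow_pos hl0 k
  nlinarith

lemma hsummable (t : ℝ) : Summable (fun k : ℕ => Real.log (1 + max t 0 * l ^ k)) := by
  apply Summable.of_nonneg_of_le (fun k => ?_) (fun k => ?_)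
    ((summable_geometric_of_lt_one hl0.le hl1).mul_left (max t 0))
  · exact Real.log_nonneg (by nlinarith [pow_pos hl0 k, le_max_right t 0])
  · have h := Real.log_le_sub_one_of_pos (term_pos hl0 hl1 (max t 0) k (le_max_right t 0))
    linarith

lemma hasProd_F (t : ℝ) (ht : 0 ≤ t) :
    HasProd (fun k : ℕ => (1 + t * l ^ k)⁻¹) (F l t) := by
  have h := ((hsummable hl0 hl1 t).hasSum.neg).rexp
  have he : (rexp ∘ fun k : ℕ => -(Real.log (1 + max t 0 * l ^ k)))
      = fun k : ℕ => (1 + t * l ^ k)⁻¹ := by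
    funext k
    simp [Function.comp, Real.exp_neg,
      Real.exp_log (term_pos hl0 hl1 t k ht), max_eq_left ht]
  rw [he] at h
  exact h

lemma tprod_eq (t : ℝ) (ht : 0 ≤ t) :
    (∏' k : ℕ, (1 + t * l ^ k)⁻¹) = F l t :=
  (hasProd_F hl0 hl1 t ht).tprod_eq


lemma hsummable' (t : ℝ) (ht : 0 ≤ t) :
    Summable (fun k : ℕ => Real.log (1 + t * l ^ k)) := by
  have h := hsummable hl0 hl1 t
  simpa only [max_eq_left ht] using h

lemma S_eq (t : ℝ) (ht : 0 ≤ t) : S l t = ∑' k : ℕ, Real.log (1 + t * l ^ k) := by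
  rw [S, max_eq_left ht]

lemma S_shift (t : ℝ) (ht : 0 ≤ t) : S l (l * t) = S l t - Real.log (1 + t) := by
  have hlt : 0 ≤ l * t := mul_nonneg hl0.le ht
  rw [S_eq hl0 hl1 t ht, S_eq hl0 hl1 (l * t) hlt,
    Summable.tsum_eq_zero_add (hsummable' hl0 hl1 t ht)]
  have : ∀ k : ℕ, Real.log (1 + l * t * l ^ k) = Real.log (1 + t * l ^ (k + 1)) := by
    intro k; ring_nf
  rw [tsum_congr this]
  simp only [pow_zero, mul_one]
  ring

omit hl0 hl1 in
lemma F_pos (t : ℝ) : 0 < F l t := Real.exp_pos _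

lemma F_shift (t : ℝ) (ht : 0 ≤ t) : F l (l * t) = (1 + t) * F l t := by
  rw [F, F, S_shift hl0 hl1 t ht, neg_sub, sub_eq_add_neg, Real.exp_add,
    Real.exp_log (by linarith : (0:ℝ) < 1 + t)]

lemma F_le_prod (t : ℝ) (ht : 0 ≤ t) (n : ℕ) :
    F l t ≤ ∏ k ∈ Finset.range n, (1 + t * l ^ k)⁻¹ := by
  have hsum : ∑ k ∈ Finset.range n, Real.log (1 + t * l ^ k) ≤ S l t := by
    rw [S_eq hl0 hl1 t ht]
    exact Summable.sum_le_tsum _ (fun k _ => Real.log_nonneg (by nlinarith [pow_pos hl0 k]))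
      (hsummable' hl0 hl1 t ht)
  calc F l t ≤ Real.exp (-(∑ k ∈ Finset.range n, Real.log (1 + t * l ^ k))) :=
        Real.exp_le_exp.2 (by linarith)
    _ = ∏ k ∈ Finset.range n, (1 + t * l ^ k)⁻¹ := by
        rw [← Finset.sum_neg_distrib, Real.exp_sum]
        exact Finset.prod_congr rfl fun k _ => by
          rw [Real.exp_neg, Real.exp_log (term_pos hl0 hl1 t k ht)]

lemma F_le_one (t : ℝ) (ht : 0 ≤ t) : F l t ≤ 1 := by
  simpa using F_le_prod hl0 hl1 t ht 0

lemma F_le_cube (t : ℝ) (ht : 1 ≤ t) : F l t ≤ (l^3)⁻¹ * (t^3)⁻¹ := by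
  have h := F_le_prod hl0 hl1 t (by linarith) 3
  have h0 : (0:ℝ) < t := by linarith
  have h3 : ∏ k ∈ Finset.range 3, (1 + t * l ^ k)⁻¹
      = (1 + t)⁻¹ * (1 + t * l)⁻¹ * (1 + t * l ^ 2)⁻¹ := by
    simp [Finset.prod_range_succ]; ring
  rw [h3] at h
  have e1 : (1 + t)⁻¹ ≤ t⁻¹ := by
    apply inv_anti₀ h0; linarith
  have e2 : (1 + t * l)⁻¹ ≤ (t * l)⁻¹ := by
    apply inv_anti₀ (by positivity); linarith
  have e3 : (1 + t * l ^ 2)⁻¹ ≤ (t * l ^ 2)⁻¹ := by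
    apply inv_anti₀ (by positivity); linarith
  have := mul_le_mul (mul_le_mul e1 e2 (by positivity) (by positivity)) e3
    (by positivity) (by positivity)
  calc F l t ≤ t⁻¹ * (t * l)⁻¹ * (t * l ^ 2)⁻¹ := le_trans h this
    _ = (l^3)⁻¹ * (t^3)⁻¹ := by field_simp

lemma S_le (t : ℝ) (ht : 0 ≤ t) : S l t ≤ t * (1 - l)⁻¹ := by
  rw [S_eq hl0 hl1 t ht]
  calc (∑' k : ℕ, Real.log (1 + t * l ^ k)) ≤ ∑' k : ℕ, t * l ^ k := by
        apply Summable.tsum_le_tsum _ (hsummable' hl0 hl1 t ht)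
          ((summable_geometric_of_lt_one hl0.le hl1).mul_left t)
        intro k
        have h := Real.log_le_sub_one_of_pos (term_pos hl0 hl1 t k ht)
        linarith
    _ = t * (1 - l)⁻¹ := by
        rw [tsum_mul_left, tsum_geometric_of_lt_one hl0.le hl1]

lemma F_ge (t : ℝ) (ht : 0 ≤ t) : Real.exp (-(t * (1 - l)⁻¹)) ≤ F l t :=
  Real.exp_le_exp.2 (neg_le_neg (S_le hl0 hl1 t ht))

lemma one_sub_F_le (t : ℝ) (ht : 0 ≤ t) : 1 - F l t ≤ t * (1 - l)⁻¹ := by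
  have h1 := F_ge hl0 hl1 t ht
  have h2 := Real.add_one_le_exp (-(t * (1 - l)⁻¹))
  linarith

lemma measurable_S : Measurable (S l) := by
  apply measurable_of_tendsto_metrizable
    (f := fun n t => ∑ k ∈ Finset.range n, Real.log (1 + max t 0 * l ^ k))
  · intro n
    apply Finset.measurable_sum
    intro k _
    exact Real.measurable_log.comp
      (((measurable_id.max measurable_const).mul_const _).const_add 1)
  · rw [tendsto_pi_nhds]
    intro t
    exact (hsummable hl0 hl1 t).hasSum.tendsto_sum_nat

lemma measurable_F : Measurable (F l) :=
  Real.measurable_exp.comp (measurable_S hl0 hl1).neg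


lemma aesm (p : ℝ) {s : Set ℝ} (hs : MeasurableSet s) (hsub : s ⊆ Ioi 0) :
    AEStronglyMeasurable (fun t => t ^ p * F l t) (volume.restrict s) := by
  apply AEStronglyMeasurable.mul
  · exact ContinuousOn.aestronglyMeasurable (fun t ht =>
      (Real.continuousAt_rpow_const t p (Or.inl (ne_of_gt (hsub ht)))).continuousWithinAt) hs
  · exact (measurable_F hl0 hl1).aestronglyMeasurable

lemma integrableOn_Ioc (p : ℝ) (hp1 : -1 < p) :
    IntegrableOn (fun t => t ^ p * F l t) (Ioc (0:ℝ) 1) := by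
  have hbig : IntegrableOn (fun t : ℝ => t ^ p) (Ioc (0:ℝ) 1) :=
    (intervalIntegral.intervalIntegrable_rpow' hp1 (a := 0) (b := 1)).1
  apply hbig.mono' (aesm hl0 hl1 p measurableSet_Ioc Ioc_subset_Ioi_self)
  filter_upwards [ae_restrict_mem measurableSet_Ioc] with t ht
  have ht0 : 0 < t := ht.1
  have h1 : 0 ≤ t ^ p := Real.rpow_nonneg ht0.le p
  have h2 : 0 < F l t := F_pos t
  rw [Real.norm_eq_abs, abs_of_nonneg (by positivity)]
  nlinarith [F_le_one hl0 hl1 t ht0.le]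

lemma integrableOn_Ioi_one (p : ℝ) (hp2 : p ≤ 1) :
    IntegrableOn (fun t => t ^ p * F l t) (Ioi (1:ℝ)) := by
  have hbig : IntegrableOn (fun t : ℝ => (l ^ 3)⁻¹ * t ^ (-2:ℝ)) (Ioi (1:ℝ)) :=
    (integrableOn_Ioi_rpow_of_lt (by norm_num) one_pos).const_mul _
  apply hbig.mono' (aesm hl0 hl1 p measurableSet_Ioi
    (fun t (ht : 1 < t) => lt_trans one_pos ht))
  filter_upwards [ae_restrict_mem measurableSet_Ioi] with t (ht : 1 < t)
  have ht0 : 0 < t := lt_trans one_pos ht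
  have h1 : 0 ≤ t ^ p := Real.rpow_nonneg ht0.le p
  have h2 : 0 < F l t := F_pos t
  rw [Real.norm_eq_abs, abs_of_nonneg (by positivity)]
  have e1 : t ^ p ≤ t := by
    calc t ^ p ≤ t ^ (1:ℝ) := Real.rpow_le_rpow_of_exponent_le ht.le hp2
      _ = t := Real.rpow_one t
  have e2 : F l t ≤ (l ^ 3)⁻¹ * (t ^ 3)⁻¹ := F_le_cube hl0 hl1 t ht.le
  have e3 : (t:ℝ) ^ (-2:ℝ) = t * (t ^ 3)⁻¹ := by
    rw [show (-2:ℝ) = -((2:ℕ):ℝ) by norm_num, Real.rpow_neg ht0.le, Real.rpow_natCast]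
    rw [inv_eq_iff_eq_inv]
    field_simp
  calc t ^ p * F l t ≤ t * ((l ^ 3)⁻¹ * (t ^ 3)⁻¹) := by
        apply mul_le_mul e1 e2 h2.le ht0.le
    _ = (l ^ 3)⁻¹ * t ^ (-2:ℝ) := by rw [e3]; ring

lemma integrableOn_Ioi (p : ℝ) (hp1 : -1 < p) (hp2 : p ≤ 1) :
    IntegrableOn (fun t => t ^ p * F l t) (Ioi (0:ℝ)) := by
  rw [← Ioc_union_Ioi_eq_Ioi (by norm_num : (0:ℝ) ≤ 1)]
  exact (integrableOn_Ioc hl0 hl1 p hp1).union (integrableOn_Ioi_one hl0 hl1 p hp2)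


lemma mellin_rel (s : ℝ) (hs0 : 0 < s) (hs1 : s < 1) :
    ∫ t in Ioi (0:ℝ), t ^ s * F l t
      = (l ^ (-s) - 1) * ∫ t in Ioi (0:ℝ), t ^ (s-1) * F l t := by
  have hM1 : IntegrableOn (fun t => t ^ (s-1) * F l t) (Ioi (0:ℝ)) :=
    integrableOn_Ioi hl0 hl1 (s-1) (by linarith) (by linarith)
  have hM2 : IntegrableOn (fun t => t ^ s * F l t) (Ioi (0:ℝ)) :=
    integrableOn_Ioi hl0 hl1 s (by linarith) (by linarith)
  have hls : (0:ℝ) < l ^ (s-1) := Real.rpow_pos_of_pos hl0 _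
  -- change of variables
  have h0 := integral_comp_mul_left_Ioi (fun u => u ^ (s-1) * F l u) 0 hl0
  rw [mul_zero] at h0
  -- rewrite LHS of h0
  have e1 : ∫ t in Ioi (0:ℝ), (l * t) ^ (s-1) * F l (l * t)
      = l ^ (s-1) * ∫ t in Ioi (0:ℝ), t ^ (s-1) * ((1 + t) * F l t) := by
    rw [← integral_const_mul]
    apply setIntegral_congr_fun measurableSet_Ioi
    intro t (ht : 0 < t)
    simp only [Real.mul_rpow hl0.le ht.le, F_shift hl0 hl1 t ht.le]
    ring
  have e2 : ∫ t in Ioi (0:ℝ), t ^ (s-1) * ((1 + t) * F l t)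
      = (∫ t in Ioi (0:ℝ), t ^ (s-1) * F l t) + ∫ t in Ioi (0:ℝ), t ^ s * F l t := by
    rw [← integral_add hM1 hM2]
    apply setIntegral_congr_fun measurableSet_Ioi
    intro t (ht : 0 < t)
    have : t ^ (s-1) * t = t ^ s := by
      rw [show t ^ (s-1) * t = t ^ (s-1) * t ^ (1:ℝ) by rw [Real.rpow_one],
        ← Real.rpow_add ht]
      norm_num
    simp only [← this]
    ring
  rw [e1, e2] at h0
  have hinv : l ^ (s-1) ≠ 0 := ne_of_gt hls
  have key : (∫ t in Ioi (0:ℝ), t ^ (s-1) * F l t) + ∫ t in Ioi (0:ℝ), t ^ s * F l t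
      = l ^ (-s) * ∫ t in Ioi (0:ℝ), t ^ (s-1) * F l t := by
    have : (l:ℝ) ^ (-s) = (l ^ (s-1))⁻¹ * l⁻¹ := by
      rw [← mul_inv, Real.rpow_neg hl0.le]
      congr 1
      rw [show l ^ (s-1) * l = l ^ (s-1) * l ^ (1:ℝ) by rw [Real.rpow_one],
        ← Real.rpow_add hl0]
      norm_num
    rw [this]
    have h0' := congrArg (fun x => (l ^ (s-1))⁻¹ * x) h0
    simp only [smul_eq_mul, one_div] at h0'
    rw [← mul_assoc (l ^ (s-1))⁻¹, inv_mul_cancel₀ hinv, one_mul] at h0'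
    rw [h0']
    ring
  linarith [key]


lemma rpow_le_one_add (t s : ℝ) (ht : 0 < t) (hs0 : 0 ≤ s) (hs1 : s ≤ 1) :
    t ^ s ≤ 1 + t := by
  rcases le_or_gt t 1 with h | h
  · have := Real.rpow_le_one ht.le h hs0
    linarith
  · have : t ^ s ≤ t := by
      calc t ^ s ≤ t ^ (1:ℝ) := Real.rpow_le_rpow_of_exponent_le h.le hs1
        _ = t := Real.rpow_one t
    linarith

lemma integrable_bound : IntegrableOn (fun t => (1 + t) * F l t) (Ioi (0:ℝ)) := by
  have h := (integrableOn_Ioi hl0 hl1 0 (by norm_num) (by norm_num)).add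
    (integrableOn_Ioi hl0 hl1 1 (by norm_num) (by norm_num))
  apply IntegrableOn.congr_fun h ?_ measurableSet_Ioi
  intro t (ht : 0 < t)
  simp only [Pi.add_apply, Real.rpow_zero, Real.rpow_one, one_mul]
  ring

lemma tendsto_M0 : Tendsto (fun s => ∫ t in Ioi (0:ℝ), t ^ s * F l t)
    (𝓝[>] (0:ℝ)) (𝓝 (∫ t in Ioi (0:ℝ), F l t)) := by
  apply tendsto_integral_filter_of_dominated_convergence
    (fun t => (1 + t) * F l t)
  · exact Eventually.of_forall fun s => aesm hl0 hl1 s measurableSet_Ioi subset_rfl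
  · filter_upwards [Ioo_mem_nhdsGT_of_mem (by norm_num : (0:ℝ) ∈ Ico 0 1)] with s hs
    filter_upwards [ae_restrict_mem measurableSet_Ioi] with t (ht : 0 < t)
    have h1 : 0 ≤ t ^ s := Real.rpow_nonneg ht.le s
    have h2 : 0 < F l t := F_pos t
    rw [Real.norm_eq_abs, abs_of_nonneg (by positivity)]
    exact mul_le_mul_of_nonneg_right
      (rpow_le_one_add hl0 hl1 t s ht hs.1.le hs.2.le) h2.le
  · exact integrable_bound hl0 hl1
  · filter_upwards [ae_restrict_mem measurableSet_Ioi] with t (ht : 0 < t)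
    have heq : (fun s : ℝ => t ^ s * F l t)
        = fun s : ℝ => Real.exp (Real.log t * s) * F l t := by
      funext s; rw [Real.rpow_def_of_pos ht]
    rw [heq]
    have : Tendsto (fun s : ℝ => Real.exp (Real.log t * s) * F l t) (𝓝 0)
        (𝓝 (Real.exp (Real.log t * 0) * F l t)) := by
      apply Tendsto.mul_const
      exact (Real.continuous_exp.comp (continuous_const.mul continuous_id)).tendsto 0
    simpa using this.mono_left nhdsWithin_le_nhds


lemma tendsto_slope_l : Tendsto (fun s : ℝ => (l ^ (-s) - 1) / s)
    (𝓝[>] (0:ℝ)) (𝓝 (Real.log l⁻¹)) := by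
  have hfun : ∀ s : ℝ, l ^ (-s) = Real.exp (-Real.log l * s) := by
    intro s; rw [Real.rpow_def_of_pos hl0]; ring_nf
  have hd : HasDerivAt (fun s : ℝ => l ^ (-s)) (Real.log l⁻¹) 0 := by
    have h1 : HasDerivAt (fun s : ℝ => -Real.log l * s) (-Real.log l) 0 := by
      simpa using (hasDerivAt_id (0:ℝ)).const_mul (-Real.log l)
    have h2 := (Real.hasDerivAt_exp (-Real.log l * 0)).comp 0 h1
    have : HasDerivAt (fun s : ℝ => Real.exp (-Real.log l * s)) (-Real.log l) 0 := by
      simpa [Function.comp_def, neg_mul] using h2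
    rw [show Real.log l⁻¹ = -Real.log l from Real.log_inv l]
    apply this.congr_of_eventuallyEq
    filter_upwards with s
    rw [hfun s]
  have hs := hasDerivAt_iff_tendsto_slope.1 hd
  have : Tendsto (slope (fun s : ℝ => l ^ (-s)) 0) (𝓝[>] 0) (𝓝 (Real.log l⁻¹)) :=
    hs.mono_left (nhdsWithin_mono 0 (fun x hx => ne_of_gt hx))
  apply this.congr'
  filter_upwards [self_mem_nhdsWithin] with s (hs' : 0 < s)
  rw [slope_def_field]
  have : ((l:ℝ) ^ (-(0:ℝ))) = 1 := by norm_num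
  rw [this, sub_zero]


omit hl0 hl1 in
lemma int_rpow_Ioc (s : ℝ) (hs0 : 0 < s) :
    ∫ t in Ioc (0:ℝ) 1, t ^ (s-1) = 1 / s := by
  rw [← intervalIntegral.integral_of_le (by norm_num : (0:ℝ) ≤ 1),
    integral_rpow (Or.inl (by linarith : (-1:ℝ) < s - 1))]
  rw [Real.one_rpow, Real.zero_rpow (by linarith : s - 1 + 1 ≠ 0)]
  norm_num

omit hl0 hl1 in
lemma integrableOn_rpow_Ioc (s : ℝ) (hs0 : 0 < s) :
    IntegrableOn (fun t : ℝ => t ^ (s-1)) (Ioc (0:ℝ) 1) :=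
  (intervalIntegral.intervalIntegrable_rpow' (by linarith) (a := 0) (b := 1)).1

lemma tendsto_sM : Tendsto (fun s : ℝ => s * ∫ t in Ioi (0:ℝ), t ^ (s-1) * F l t)
    (𝓝[>] (0:ℝ)) (𝓝 1) := by
  set C0 : ℝ := ∫ t in Ioi (1:ℝ), F l t with hC0
  set B : ℝ → ℝ := fun s => ∫ t in Ioc (0:ℝ) 1, t ^ (s-1) * (F l t - 1) with hB
  set C : ℝ → ℝ := fun s => ∫ t in Ioi (1:ℝ), t ^ (s-1) * F l t with hC
  have hCint : IntegrableOn (F l) (Ioi (1:ℝ)) := by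
    apply IntegrableOn.congr_fun (integrableOn_Ioi_one hl0 hl1 0 (by norm_num))
      ?_ measurableSet_Ioi
    intro t _
    simp
  -- key decomposition
  have key : ∀ s : ℝ, s ∈ Ioo (0:ℝ) 1 →
      s * (∫ t in Ioi (0:ℝ), t ^ (s-1) * F l t) = 1 + s * B s + s * C s := by
    intro s hs
    have hIoc : IntegrableOn (fun t => t ^ (s-1) * F l t) (Ioc (0:ℝ) 1) :=
      integrableOn_Ioc hl0 hl1 (s-1) (by linarith [hs.1])
    have hIoi1 : IntegrableOn (fun t => t ^ (s-1) * F l t) (Ioi (1:ℝ)) :=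
      integrableOn_Ioi_one hl0 hl1 (s-1) (by linarith [hs.2])
    have hsplit : (∫ t in Ioi (0:ℝ), t ^ (s-1) * F l t)
        = (∫ t in Ioc (0:ℝ) 1, t ^ (s-1) * F l t) + C s := by
      rw [← setIntegral_union (Ioc_disjoint_Ioi le_rfl) measurableSet_Ioi hIoc hIoi1,
        Ioc_union_Ioi_eq_Ioi (by norm_num : (0:ℝ) ≤ 1)]
    have hIocsplit : (∫ t in Ioc (0:ℝ) 1, t ^ (s-1) * F l t) = (1/s) + B s := by
      have hg : IntegrableOn (fun t : ℝ => t ^ (s-1) * (F l t - 1)) (Ioc (0:ℝ) 1) := by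
        apply IntegrableOn.congr_fun (hIoc.sub (integrableOn_rpow_Ioc s hs.1))
          ?_ measurableSet_Ioc
        intro t _
        simp only [Pi.sub_apply]
        ring
      rw [← int_rpow_Ioc s hs.1, hB]
      rw [← integral_add (integrableOn_rpow_Ioc s hs.1) hg]
      apply setIntegral_congr_fun measurableSet_Ioc
      intro t _
      ring
    have hsne : s ≠ 0 := ne_of_gt hs.1
    rw [hsplit, hIocsplit]
    field_simp
  -- bounds
  have hBbd : ∀ s : ℝ, s ∈ Ioo (0:ℝ) 1 → ‖B s‖ ≤ (1 - l)⁻¹ := by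
    intro s hs
    have hvol : volume (Ioc (0:ℝ) 1) < ⊤ := by
      rw [Real.volume_Ioc]; exact ENNReal.ofReal_lt_top
    have hbd : ∀ t ∈ Ioc (0:ℝ) 1, ‖t ^ (s-1) * (F l t - 1)‖ ≤ (1 - l)⁻¹ := by
      intro t ht
      have ht0 : 0 < t := ht.1
      have h1 : 0 ≤ t ^ (s-1) := Real.rpow_nonneg ht0.le _
      have hF1 : F l t ≤ 1 := F_le_one hl0 hl1 t ht0.le
      have hFl : 1 - F l t ≤ t * (1 - l)⁻¹ := one_sub_F_le hl0 hl1 t ht0.le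
      rw [Real.norm_eq_abs, abs_mul, abs_of_nonneg h1,
        abs_of_nonpos (by linarith : F l t - 1 ≤ 0)]
      have e1 : t ^ (s-1) * -(F l t - 1) ≤ t ^ (s-1) * (t * (1 - l)⁻¹) := by
        apply mul_le_mul_of_nonneg_left (by linarith) h1
      have e2 : t ^ (s-1) * (t * (1 - l)⁻¹) = t ^ s * (1 - l)⁻¹ := by
        have : t ^ (s-1) * t = t ^ s := by
          rw [show t ^ (s-1) * t = t ^ (s-1) * t ^ (1:ℝ) by rw [Real.rpow_one],
            ← Real.rpow_add ht0]
          norm_num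
        rw [← this]; ring
      have e3 : t ^ s ≤ 1 := Real.rpow_le_one ht0.le ht.2 hs.1.le
      have hil : (0:ℝ) < (1 - l)⁻¹ := by
        rw [inv_pos]; linarith
      calc t ^ (s-1) * -(F l t - 1) ≤ t ^ s * (1 - l)⁻¹ := by rw [← e2]; exact e1
        _ ≤ 1 * (1 - l)⁻¹ := mul_le_mul_of_nonneg_right e3 hil.le
        _ = (1 - l)⁻¹ := one_mul _
    have := norm_setIntegral_le_of_norm_le_const hvol hbd
    calc ‖B s‖ ≤ (1 - l)⁻¹ * (volume (Ioc (0:ℝ) 1)).toReal := this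
      _ = (1 - l)⁻¹ := by rw [Real.volume_Ioc]; norm_num
  have hCbd : ∀ s : ℝ, s ∈ Ioo (0:ℝ) 1 → ‖C s‖ ≤ C0 := by
    intro s hs
    have hIoi1 : IntegrableOn (fun t => t ^ (s-1) * F l t) (Ioi (1:ℝ)) :=
      integrableOn_Ioi_one hl0 hl1 (s-1) (by linarith [hs.2])
    have h1 : C s ≤ C0 := by
      apply setIntegral_mono_on hIoi1 hCint measurableSet_Ioi
      intro t (ht : 1 < t)
      have ht0 : 0 < t := lt_trans one_pos ht
      have := Real.rpow_le_one_of_one_le_of_nonpos ht.le (by linarith [hs.2] : s - 1 ≤ 0)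
      nlinarith [F_pos (l := l) t]
    have h2 : 0 ≤ C s := by
      apply setIntegral_nonneg measurableSet_Ioi
      intro t (ht : 1 < t)
      have ht0 : 0 < t := lt_trans one_pos ht
      have := Real.rpow_nonneg ht0.le (s-1)
      nlinarith [F_pos (l := l) t]
    rw [Real.norm_eq_abs, abs_of_nonneg h2]
    exact h1
  -- conclude
  have hsB : Tendsto (fun s => s * B s) (𝓝[>] (0:ℝ)) (𝓝 0) := by
    apply squeeze_zero_norm'
      (a := fun s : ℝ => s * (1 - l)⁻¹)
    · filter_upwards [Ioo_mem_nhdsGT_of_mem (by norm_num : (0:ℝ) ∈ Ico 0 1)] with s hs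
      rw [norm_mul, Real.norm_eq_abs, abs_of_pos hs.1]
      exact mul_le_mul_of_nonneg_left (hBbd s hs) hs.1.le
    · have : Tendsto (fun s : ℝ => s * (1 - l)⁻¹) (𝓝 0) (𝓝 (0 * (1 - l)⁻¹)) :=
        (continuous_id.mul continuous_const).tendsto 0
      simpa using this.mono_left nhdsWithin_le_nhds
  have hsC : Tendsto (fun s => s * C s) (𝓝[>] (0:ℝ)) (𝓝 0) := by
    apply squeeze_zero_norm' (a := fun s : ℝ => s * C0)
    · filter_upwards [Ioo_mem_nhdsGT_of_mem (by norm_num : (0:ℝ) ∈ Ico 0 1)] with s hs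
      rw [norm_mul, Real.norm_eq_abs, abs_of_pos hs.1]
      exact mul_le_mul_of_nonneg_left (hCbd s hs) hs.1.le
    · have : Tendsto (fun s : ℝ => s * C0) (𝓝 0) (𝓝 (0 * C0)) :=
        (continuous_id.mul continuous_const).tendsto 0
      simpa using this.mono_left nhdsWithin_le_nhds
  have hfinal : Tendsto (fun s : ℝ => 1 + s * B s + s * C s) (𝓝[>] (0:ℝ)) (𝓝 1) := by
    have := (tendsto_const_nhds (x := (1:ℝ)) (f := 𝓝[>] (0:ℝ))).add hsB |>.add hsC
    simpa using this
  apply hfinal.congr'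
  filter_upwards [Ioo_mem_nhdsGT_of_mem (by norm_num : (0:ℝ) ∈ Ico 0 1)] with s hs
  exact (key s hs).symm

end Stmt2Aux

open Stmt2Aux in
theorem stmt_2 (l : ℝ) (hl0 : 0 < l) (hl1 : l < 1) :
    ∫ t in Set.Ioi (0:ℝ), ∏' k : ℕ, (1 + t * l^k)⁻¹ = Real.log l⁻¹ := by
  have h1 := tendsto_M0 hl0 hl1
  have h2 := tendsto_slope_l hl0 hl1
  have h3 := tendsto_sM hl0 hl1
  have h4 : Tendsto (fun s : ℝ => ∫ t in Ioi (0:ℝ), t ^ s * F l t)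
      (𝓝[>] (0:ℝ)) (𝓝 (Real.log l⁻¹ * 1)) := by
    apply (h2.mul h3).congr'
    filter_upwards [Ioo_mem_nhdsGT_of_mem (by norm_num : (0:ℝ) ∈ Ico 0 1)] with s hs
    have hsne : s ≠ 0 := ne_of_gt hs.1
    rw [mellin_rel hl0 hl1 s hs.1 hs.2]
    field_simp
  have h5 : (∫ t in Ioi (0:ℝ), F l t) = Real.log l⁻¹ :=
    tendsto_nhds_unique h1 (by simpa using h4)
  rw [setIntegral_congr_fun measurableSet_Ioi
    (fun t (ht : 0 < t) => tprod_eq hl0 hl1 t ht.le)]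
  exact h5
end

section
/- Define $V(\lambda) = \frac{1}{2(1-\lambda)} \int_0^\infty \prod_{k=0}^\infty (1 + t\lambda^k)^{-1/2} \, dt$ for $0 < \lambda < 1$. Then for all such $\lambda$, $\frac{\lambda^{-1}\log(\lambda^{-1})}{\lambda^{-1}-1} \le V(\lambda) \le \frac{\lambda^{-2}\log(\lambda^{-1})}{\lambda^{-1}-1}$. -/
open MeasureTheory Real Filter Set intervalIntegral


/-- The volatility multiplier `V(λ)`. -/
noncomputable def Vmult (l : ℝ) : ℝ :=
  (1 / (2 * (1 - l))) * ∫ t in Set.Ioi (0:ℝ), ∏' k : ℕ, (1 + t * l^k) ^ (-(1:ℝ)/2)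

namespace Stmt6

/-- `S m t = ∑ log(1 + max t 0 * m^k)`, truncated at 0 so it is monotone on all of ℝ. -/
noncomputable def S (m t : ℝ) : ℝ := ∑' k : ℕ, Real.log (1 + max t 0 * m ^ k)

/-- `F m t = exp (-(S m t))`, equal to `∏ (1+t m^k)⁻¹` for `t ≥ 0`. -/
noncomputable def F (m t : ℝ) : ℝ := Real.exp (-(S m t))

variable {m t : ℝ}

lemma term_nonneg (hm : 0 < m) (t : ℝ) (k : ℕ) : 0 ≤ Real.log (1 + max t 0 * m ^ k) :=
  Real.log_nonneg (by nlinarith [pow_pos hm k, le_max_right t 0])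

lemma summable_log (hm0 : 0 < m) (hm1 : m < 1) (t : ℝ) :
    Summable (fun k : ℕ => Real.log (1 + max t 0 * m ^ k)) := by
  refine Summable.of_nonneg_of_le (term_nonneg hm0 t) (fun k => ?_)
    ((summable_geometric_of_lt_one hm0.le hm1).mul_left (max t 0))
  have h1 : 0 < 1 + max t 0 * m ^ k := by nlinarith [pow_pos hm0 k, le_max_right t 0]
  have := Real.log_le_sub_one_of_pos h1
  linarith

lemma S_nonneg (hm0 : 0 < m) (t : ℝ) : 0 ≤ S m t :=
  tsum_nonneg (term_nonneg hm0 t)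

lemma S_mono (hm0 : 0 < m) (hm1 : m < 1) : Monotone (S m) := by
  intro a b hab
  refine Summable.tsum_le_tsum (fun k => ?_) (summable_log hm0 hm1 a) (summable_log hm0 hm1 b)
  have hk := pow_pos hm0 k
  have : max a 0 ≤ max b 0 := max_le_max hab le_rfl
  apply Real.log_le_log (by nlinarith [le_max_right a 0]) (by nlinarith)

lemma S_le (hm0 : 0 < m) (hm1 : m < 1) (ht : 0 ≤ t) : S m t ≤ t / (1 - m) := by
  have hs : Summable (fun k : ℕ => t * m ^ k) :=
    (summable_geometric_of_lt_one hm0.le hm1).mul_left t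
  have h1 : S m t ≤ ∑' k : ℕ, t * m ^ k := by
    refine Summable.tsum_le_tsum (fun k => ?_) (summable_log hm0 hm1 t) hs
    have hk := pow_pos hm0 k
    rw [max_eq_left ht]
    have h1 : 0 < 1 + t * m ^ k := by nlinarith
    have := Real.log_le_sub_one_of_pos h1
    linarith
  have h2 : ∑' k : ℕ, t * m ^ k = t / (1 - m) := by
    rw [tsum_mul_left, tsum_geometric_of_lt_one hm0.le hm1]
    ring
  linarith

lemma log_one_add_le_S (hm0 : 0 < m) (hm1 : m < 1) (ht : 0 ≤ t) :
    Real.log (1 + t) + Real.log (1 + t * m) ≤ S m t := by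
  have := Summable.sum_le_tsum (Finset.range 2) (fun k _ => term_nonneg hm0 t k)
    (summable_log hm0 hm1 t)
  rw [S]
  simpa [Finset.sum_range_succ, max_eq_left ht] using this

lemma S_shift (hm0 : 0 < m) (hm1 : m < 1) (ht : 0 ≤ t) :
    S m t = Real.log (1 + t) + S m (m * t) := by
  have hsh : Summable (fun k : ℕ => Real.log (1 + max t 0 * m ^ (k + 1))) := by
    have := (summable_log hm0 hm1 t).comp_injective (add_left_injective 1)
    exact this
  have h0 : S m t = Real.log (1 + max t 0 * m ^ 0) +
      ∑' k : ℕ, Real.log (1 + max t 0 * m ^ (k + 1)) := tsum_eq_zero_add' hsh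
  rw [h0]
  have hmt : 0 ≤ m * t := by positivity
  congr 1
  · rw [max_eq_left ht]; ring_nf
  · unfold S
    congr 1
    ext k
    rw [max_eq_left ht, max_eq_left hmt]
    ring_nf

lemma F_pos (m t : ℝ) : 0 < F m t := Real.exp_pos _

lemma F_le_one (hm0 : 0 < m) (t : ℝ) : F m t ≤ 1 := by
  rw [F, Real.exp_le_one_iff]
  linarith [S_nonneg hm0 t]

lemma F_anti (hm0 : 0 < m) (hm1 : m < 1) : Antitone (F m) := by
  intro a b hab
  exact Real.exp_le_exp.2 (neg_le_neg (S_mono hm0 hm1 hab))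

lemma exp_le_F (hm0 : 0 < m) (hm1 : m < 1) (ht : 0 ≤ t) :
    Real.exp (-(t / (1 - m))) ≤ F m t :=
  Real.exp_le_exp.2 (neg_le_neg (S_le hm0 hm1 ht))

lemma F_le (hm0 : 0 < m) (hm1 : m < 1) (ht : 0 ≤ t) :
    F m t ≤ 1 / ((1 + t) * (1 + t * m)) := by
  have h1 : (0:ℝ) < 1 + t := by linarith
  have h2 : (0:ℝ) < 1 + t * m := by nlinarith
  have := log_one_add_le_S hm0 hm1 ht
  rw [F]
  rw [← Real.log_mul h1.ne' h2.ne'] at this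
  calc Real.exp (-(S m t)) ≤ Real.exp (-Real.log ((1+t)*(1+t*m))) :=
        Real.exp_le_exp.2 (by linarith)
    _ = 1 / ((1 + t) * (1 + t * m)) := by
        rw [Real.exp_neg, Real.exp_log (by positivity), one_div]

lemma F_le_sq (hm0 : 0 < m) (hm1 : m < 1) (ht : 0 < t) :
    F m t ≤ 1 / (m * t ^ 2) := by
  refine (F_le hm0 hm1 ht.le).trans ?_
  have h1 : (0:ℝ) < 1 + t := by linarith
  have h2 : (0:ℝ) < 1 + t * m := by nlinarith
  rw [div_le_div_iff₀ (by positivity) (by positivity)]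
  nlinarith

lemma F_funeq (hm0 : 0 < m) (hm1 : m < 1) (ht : 0 ≤ t) :
    F m t = F m (m * t) / (1 + t) := by
  rw [F, F, S_shift hm0 hm1 ht, neg_add, Real.exp_add, Real.exp_neg (Real.log (1+t)),
    Real.exp_log (by linarith)]
  ring

lemma F_key (hm0 : 0 < m) (hm1 : m < 1) (ht : 0 < t) :
    F m t = (F m (m * t) - F m t) / t := by
  have h := F_funeq hm0 hm1 ht.le
  have h1 : (0:ℝ) < 1 + t := by linarith
  field_simp at h ⊢
  nlinarith [h]

section Abstract
variable {G : ℝ → ℝ}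

lemma II_div (hFm : Measurable G) (hF1 : ∀ x, |G x| ≤ 1) {a b : ℝ}
    (ha : 0 < a) (hb : 0 < b) :
    IntervalIntegrable (fun s => G s / s) volume a b := by
  rw [intervalIntegrable_iff]
  refine Integrable.mono' (g := fun _ => (min a b)⁻¹)
    (integrableOn_const measure_Ioc_lt_top.ne)
    ((hFm.div measurable_id).aestronglyMeasurable) ?_
  rw [ae_restrict_iff' measurableSet_uIoc]
  refine ae_of_all _ (fun x hx => ?_)
  have hx1 : min a b < x := hx.1
  have hx0 : 0 < x := lt_of_le_of_lt (le_min ha.le hb.le) hx1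
  rw [Real.norm_eq_abs, abs_div, abs_of_pos hx0]
  rw [div_le_iff₀ hx0]
  calc |G x| ≤ 1 := hF1 x
    _ ≤ (min a b)⁻¹ * x := by
        have h := lt_min ha hb
        have h2 : (min a b)⁻¹ * (min a b) = 1 := inv_mul_cancel₀ h.ne'
        nlinarith [inv_pos.2 h]

lemma II_F (hFm : Measurable G) (hF1 : ∀ x, |G x| ≤ 1) (a b : ℝ) :
    IntervalIntegrable G volume a b := by
  rw [intervalIntegrable_iff]
  refine Integrable.mono' (g := fun _ => 1)
    (integrableOn_const measure_Ioc_lt_top.ne)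
    hFm.aestronglyMeasurable (ae_of_all _ (fun x => by simpa using hF1 x))

/-- The Frullani-style interval identity, for any `G` satisfying the
functional identity `G t = (G (m t) - G t)/t`. -/
lemma interval_eq (hm0 : 0 < m) (hFm : Measurable G) (hF1 : ∀ x, |G x| ≤ 1)
    (hkey : ∀ t : ℝ, 0 < t → G t = (G (m * t) - G t) / t)
    {e A : ℝ} (he : 0 < e) (hA : 0 < A) :
    ∫ t in e..A, G t = (∫ s in (m*e)..e, G s / s) - ∫ s in (m*A)..A, G s / s := by
  set h : ℝ → ℝ := fun s => G s / s with hh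
  have hII : ∀ a b : ℝ, 0 < a → 0 < b → IntervalIntegrable h volume a b :=
    fun a b ha hb => II_div hFm hF1 ha hb
  have hcong : ∫ t in e..A, G t = ∫ t in e..A, (m * h (m*t) - h t) := by
    apply integral_congr
    intro t ht
    have ht0 : 0 < t := lt_of_lt_of_le (lt_min he hA) ht.1
    have hk := hkey t ht0
    rw [eq_div_iff ht0.ne'] at hk
    show G t = m * (G (m*t) / (m*t)) - G t / t
    field_simp
    linear_combination hk
  have hint1 : IntervalIntegrable (fun t => h (m * t)) volume e A := by
    have := (hII (m*e) (m*A) (by positivity) (by positivity)).comp_mul_left (c := m)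
    rwa [mul_div_cancel_left₀ _ hm0.ne', mul_div_cancel_left₀ _ hm0.ne'] at this
  have hsub : ∫ t in e..A, (m * h (m*t) - h t) =
      (∫ t in e..A, m * h (m*t)) - ∫ t in e..A, h t :=
    integral_sub (hint1.const_mul m) (hII e A he hA)
  have hcv : ∫ t in e..A, m * h (m*t) = ∫ s in (m*e)..(m*A), h s := by
    rw [intervalIntegral.integral_const_mul, ← smul_eq_mul, smul_integral_comp_mul_left]
  have h1 : (∫ s in (m*e)..e, h s) + ∫ s in e..(m*A), h s = ∫ s in (m*e)..(m*A), h s :=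
    integral_add_adjacent_intervals (hII _ _ (by positivity) he)
      (hII _ _ he (by positivity))
  have h2 : (∫ s in e..(m*A), h s) + ∫ s in (m*A)..A, h s = ∫ s in e..A, h s :=
    integral_add_adjacent_intervals (hII _ _ he (by positivity)) (hII _ _ (by positivity) hA)
  rw [hcong, hsub, hcv]
  linarith


end Abstract

lemma F_measurable (hm0 : 0 < m) (hm1 : m < 1) : Measurable (F m) :=
  (F_anti hm0 hm1).measurable

lemma F_abs_le_one (hm0 : 0 < m) (x : ℝ) : |F m x| ≤ 1 :=
  abs_le.2 ⟨by linarith [F_pos m x], F_le_one hm0 x⟩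

lemma F_keyfun (hm0 : 0 < m) (hm1 : m < 1) :
    ∀ t : ℝ, 0 < t → F m t = (F m (m * t) - F m t) / t :=
  fun t ht => F_key hm0 hm1 ht

lemma one_div_intervalIntegrable {a b : ℝ} (ha : 0 < a) (hb : 0 < b) :
    IntervalIntegrable (fun s : ℝ => 1 / s) volume a b := by
  apply ContinuousOn.intervalIntegrable
  apply ContinuousOn.div continuousOn_const continuousOn_id
  intro x hx
  have : 0 < x := lt_of_lt_of_le (lt_min ha hb) hx.1
  exact this.ne'

lemma integral_one_div_edge (hm0 : 0 < m) (hm1 : m < 1) {a : ℝ} (ha : 0 < a) :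
    ∫ s in (m*a)..a, 1 / s = Real.log m⁻¹ := by
  rw [integral_one_div]
  · rw [div_mul_eq_div_div_swap, div_self ha.ne', Real.log_div one_ne_zero hm0.ne']
    simp [Real.log_inv]
  · intro h
    have h1 : 0 < min (m*a) a := lt_min (by positivity) ha
    have := h.1
    rw [uIcc_of_le (by nlinarith)] at h
    exact absurd h.1 (not_le.2 (by positivity))

lemma edge_le (hm0 : 0 < m) (hm1 : m < 1) {a : ℝ} (ha : 0 < a) :
    ∫ s in (m*a)..a, F m s / s ≤ Real.log m⁻¹ := by
  rw [← integral_one_div_edge hm0 hm1 ha]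
  apply integral_mono_on (by nlinarith)
    (II_div (G := F m) (F_measurable hm0 hm1) (F_abs_le_one hm0) (by positivity) ha)
    (one_div_intervalIntegrable (by positivity) ha)
  intro x hx
  have hx0 : 0 < x := lt_of_lt_of_le (by positivity) hx.1
  rw [div_le_div_iff_of_pos_right hx0]
  exact F_le_one hm0 x

lemma edge_ge (hm0 : 0 < m) (hm1 : m < 1) {a : ℝ} (ha : 0 < a) :
    Real.exp (-(a / (1-m))) * Real.log m⁻¹ ≤ ∫ s in (m*a)..a, F m s / s := by
  have hc : ∫ s in (m*a)..a, Real.exp (-(a / (1-m))) * (1 / s)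
      = Real.exp (-(a / (1-m))) * Real.log m⁻¹ := by
    rw [intervalIntegral.integral_const_mul, integral_one_div_edge hm0 hm1 ha]
  rw [← hc]
  apply integral_mono_on (by nlinarith)
    ((one_div_intervalIntegrable (by positivity) ha).const_mul _)
    (II_div (G := F m) (F_measurable hm0 hm1) (F_abs_le_one hm0) (by positivity) ha)
  intro x hx
  have hx0 : 0 < x := lt_of_lt_of_le (by positivity) hx.1
  rw [mul_one_div, div_le_div_iff_of_pos_right hx0]
  exact (exp_le_F hm0 hm1 ha.le).trans (F_anti hm0 hm1 hx.2)

lemma edge_nonneg (hm0 : 0 < m) (hm1 : m < 1) {a : ℝ} (ha : 0 < a) :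
    0 ≤ ∫ s in (m*a)..a, F m s / s := by
  apply integral_nonneg (by nlinarith)
  intro x hx
  have hx0 : 0 < x := lt_of_lt_of_le (by positivity) hx.1
  exact div_nonneg (F_pos m x).le hx0.le

lemma tail_le (hm0 : 0 < m) (hm1 : m < 1) {A : ℝ} (hA : 0 < A) :
    ∫ s in (m*A)..A, F m s / s ≤ 1 / m^4 * (1/A)^2 := by
  have hconst : ∫ s in (m*A)..A, (1 / (m^4 * A^3) : ℝ) = (A - m*A) * (1 / (m^4 * A^3)) := by
    rw [intervalIntegral.integral_const, smul_eq_mul]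
  have h1 : ∫ s in (m*A)..A, F m s / s ≤ ∫ s in (m*A)..A, (1 / (m^4 * A^3) : ℝ) := by
    apply integral_mono_on (by nlinarith)
      (II_div (G := F m) (F_measurable hm0 hm1) (F_abs_le_one hm0) (by positivity) hA)
      intervalIntegrable_const
    intro x hx
    have hx1 : m * A ≤ x := hx.1
    have hx0 : 0 < x := lt_of_lt_of_le (by positivity) hx1
    have h2 : F m x ≤ 1 / (m * x^2) := F_le_sq hm0 hm1 hx0
    rw [div_le_iff₀ hx0]
    refine h2.trans ?_
    rw [div_le_iff₀ (by positivity)]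
    have hcube : (m*A)^3 ≤ x^3 := pow_le_pow_left₀ (by positivity) hx1 3
    have : m^4 * A^3 ≤ m * x^2 * x := by nlinarith [hcube]
    calc (1:ℝ) = (m^4 * A^3) * (1 / (m^4 * A^3)) := by field_simp
      _ ≤ (m * x^2 * x) * (1 / (m^4 * A^3)) := by
          apply mul_le_mul_of_nonneg_right this (by positivity)
      _ = 1 / (m^4 * A^3) * x * (m * x^2) := by ring
  refine h1.trans ?_
  rw [hconst]
  have : A - m*A ≤ A := by nlinarith
  calc (A - m*A) * (1 / (m^4 * A^3)) ≤ A * (1 / (m^4 * A^3)) :=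
        mul_le_mul_of_nonneg_right this (by positivity)
    _ = 1 / m^4 * (1/A)^2 := by field_simp

lemma tail_nonneg (hm0 : 0 < m) (hm1 : m < 1) {A : ℝ} (hA : 0 < A) :
    0 ≤ ∫ s in (m*A)..A, F m s / s := edge_nonneg hm0 hm1 hA

lemma F_integrableOn_Ioc (hm0 : 0 < m) (hm1 : m < 1) {a b : ℝ} :
    IntegrableOn (F m) (Ioc a b) := by
  refine Integrable.mono' (g := fun _ => 1)
    (integrableOn_const measure_Ioc_lt_top.ne)
    (F_measurable hm0 hm1).aestronglyMeasurable
    (ae_of_all _ fun x => by simpa using F_abs_le_one hm0 x)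

lemma F_integrableOn_Ioi (hm0 : 0 < m) (hm1 : m < 1) {A : ℝ} (hA : 0 < A) :
    IntegrableOn (F m) (Ioi A) := by
  refine Integrable.mono' (g := fun t => 1/m * t ^ (-2 : ℝ))
    (((integrableOn_Ioi_rpow_of_lt (by norm_num) hA)).const_mul _)
    (F_measurable hm0 hm1).aestronglyMeasurable ?_
  rw [ae_restrict_iff' measurableSet_Ioi]
  refine ae_of_all _ (fun x hx => ?_)
  have hx0 : 0 < x := hA.trans hx
  rw [Real.norm_eq_abs, abs_of_pos (F_pos m x)]
  have h2 : F m x ≤ 1 / (m * x^2) := F_le_sq hm0 hm1 hx0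
  refine h2.trans (le_of_eq ?_)
  have hx2 : x ^ (-2:ℝ) = (x^2)⁻¹ := by
    rw [show ((-2:ℝ)) = -((2:ℕ):ℝ) by norm_num, Real.rpow_neg hx0.le, Real.rpow_natCast]
  simp only [hx2]
  field_simp

lemma F_integrableOn (hm0 : 0 < m) (hm1 : m < 1) : IntegrableOn (F m) (Ioi 0) := by
  have := (F_integrableOn_Ioc hm0 hm1 (a := 0) (b := 1)).union
    (F_integrableOn_Ioi hm0 hm1 one_pos)
  rwa [Ioc_union_Ioi_eq_Ioi zero_le_one] at this

lemma Ioi_tail_le (hm0 : 0 < m) (hm1 : m < 1) {A : ℝ} (hA : 0 < A) :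
    ∫ t in Ioi A, F m t ≤ 1/m * (1/A) := by
  have hval : ∫ t in Ioi A, (1/m : ℝ) * t ^ (-2:ℝ) = 1/m * (1/A) := by
    rw [MeasureTheory.integral_const_mul, integral_Ioi_rpow_of_lt (by norm_num) hA]
    norm_num
    rw [Real.rpow_neg_one]
    field_simp
    simp
  rw [← hval]
  apply setIntegral_mono_on (F_integrableOn_Ioi hm0 hm1 hA)
    (((integrableOn_Ioi_rpow_of_lt (by norm_num) hA)).const_mul _)
    measurableSet_Ioi
  intro x hx
  have hx0 : 0 < x := hA.trans hx
  have h2 : F m x ≤ 1 / (m * x^2) := F_le_sq hm0 hm1 hx0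
  refine h2.trans (le_of_eq ?_)
  have hx2 : x ^ (-2:ℝ) = (x^2)⁻¹ := by
    rw [show ((-2:ℝ)) = -((2:ℕ):ℝ) by norm_num, Real.rpow_neg hx0.le, Real.rpow_natCast]
  simp only [hx2]
  field_simp

lemma Ioc_head_le (hm0 : 0 < m) (hm1 : m < 1) {e : ℝ} (he : 0 < e) :
    ∫ t in Ioc 0 e, F m t ≤ e := by
  have hval : ∫ _t in Ioc (0:ℝ) e, (1:ℝ) = e := by
    simp [Real.volume_Ioc, ENNReal.toReal_ofReal he.le, he.le]
  refine le_trans ?_ (le_of_eq hval)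
  apply setIntegral_mono_on (F_integrableOn_Ioc hm0 hm1)
    (integrableOn_const measure_Ioc_lt_top.ne) measurableSet_Ioc
  exact fun x _ => F_le_one hm0 x

lemma Ioi_split (hm0 : 0 < m) (hm1 : m < 1) {e A : ℝ} (he : 0 < e) (heA : e ≤ A) :
    ∫ t in Ioi 0, F m t = (∫ t in Ioc 0 e, F m t) + (∫ t in e..A, F m t)
      + ∫ t in Ioi A, F m t := by
  have h1 : ∫ t in Ioc e A, F m t = ∫ t in e..A, F m t :=
    (intervalIntegral.integral_of_le heA).symm
  have h2 : ∫ t in Ioc 0 A, F m t = (∫ t in Ioc 0 e, F m t) + ∫ t in Ioc e A, F m t := by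
    rw [← setIntegral_union (Ioc_disjoint_Ioc_of_le le_rfl) measurableSet_Ioc
      (F_integrableOn_Ioc hm0 hm1) (F_integrableOn_Ioc hm0 hm1),
      Ioc_union_Ioc_eq_Ioc he.le heA]
  have h3 : ∫ t in Ioi 0, F m t = (∫ t in Ioc 0 A, F m t) + ∫ t in Ioi A, F m t := by
    rw [← setIntegral_union (Ioc_disjoint_Ioi le_rfl) measurableSet_Ioi
      (F_integrableOn_Ioc hm0 hm1) (F_integrableOn_Ioi hm0 hm1 (he.trans_le heA)),
      Ioc_union_Ioi_eq_Ioi (he.le.trans heA)]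
  rw [h3, h2, h1]

/-- The main identity: `∫_(0,∞) F m = log m⁻¹`. -/
lemma integral_F (hm0 : 0 < m) (hm1 : m < 1) :
    ∫ t in Ioi 0, F m t = Real.log m⁻¹ := by
  set I := ∫ t in Ioi 0, F m t with hI
  have key : ∀ n : ℕ, Real.exp (-(1/((n:ℝ)+1) / (1-m))) * Real.log m⁻¹
        - 1/m^4 * (1/((n:ℝ)+1))^2 ≤ I ∧
      I ≤ Real.log m⁻¹ + 1/((n:ℝ)+1) + 1/m * (1/((n:ℝ)+1)) := by
    intro n
    set e : ℝ := 1/((n:ℝ)+1) with he'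
    set A : ℝ := (n:ℝ)+1 with hA'
    have hn1 : (1:ℝ) ≤ (n:ℝ)+1 := by
      have : (0:ℝ) ≤ (n:ℝ) := Nat.cast_nonneg n
      linarith
    have he : 0 < e := by positivity
    have hA : 0 < A := by positivity
    have heA : e ≤ A := by
      rw [he', hA', div_le_iff₀ (by positivity)]
      nlinarith
    have hsplit := Ioi_split hm0 hm1 he heA
    have hmid := interval_eq (G := F m) hm0 (F_measurable hm0 hm1) (F_abs_le_one hm0)
      (F_keyfun hm0 hm1) he hA
    have h1A : 1/A = e := by rw [he', hA']
    constructor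
    · have hlow : Real.exp (-(e / (1-m))) * Real.log m⁻¹ - 1/m^4 * (1/A)^2
          ≤ ∫ t in e..A, F m t := by
        rw [hmid]
        have := edge_ge hm0 hm1 he
        have := tail_le hm0 hm1 hA
        linarith
      have hhead : 0 ≤ ∫ t in Ioc 0 e, F m t :=
        setIntegral_nonneg measurableSet_Ioc (fun x _ => (F_pos m x).le)
      have htail : 0 ≤ ∫ t in Ioi A, F m t :=
        setIntegral_nonneg measurableSet_Ioi (fun x _ => (F_pos m x).le)
      rw [h1A] at hlow
      rw [hI, hsplit]
      linarith
    · have hup : ∫ t in e..A, F m t ≤ Real.log m⁻¹ := by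
        rw [hmid]
        have := edge_le hm0 hm1 he
        have := tail_nonneg hm0 hm1 hA
        linarith
      have hhead := Ioc_head_le hm0 hm1 he
      have htail := Ioi_tail_le hm0 hm1 hA
      rw [h1A] at htail
      rw [hI, hsplit]
      linarith
  have hz : Tendsto (fun n : ℕ => 1/((n:ℝ)+1)) atTop (nhds 0) :=
    tendsto_one_div_add_atTop_nhds_zero_nat
  have hlow : Tendsto (fun n : ℕ => Real.exp (-(1/((n:ℝ)+1) / (1-m))) * Real.log m⁻¹
      - 1/m^4 * (1/((n:ℝ)+1))^2) atTop
      (nhds (Real.exp (-((0:ℝ) / (1-m))) * Real.log m⁻¹ - 1/m^4 * (0:ℝ)^2)) := by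
    apply Tendsto.sub
    · exact ((Real.continuous_exp.tendsto _).comp ((hz.div_const _).neg)).mul_const _
    · exact ((hz.pow 2).const_mul _)
  have hup : Tendsto (fun n : ℕ => Real.log m⁻¹ + 1/((n:ℝ)+1) + 1/m * (1/((n:ℝ)+1)))
      atTop (nhds (Real.log m⁻¹ + 0 + 1/m * 0)) :=
    ((tendsto_const_nhds.add hz).add (hz.const_mul _))
  have hlow' : Real.log m⁻¹ ≤ I := by
    have := le_of_tendsto hlow (Eventually.of_forall (fun n => (key n).1))
    simpa using this
  have hup' : I ≤ Real.log m⁻¹ := by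
    have := ge_of_tendsto hup (Eventually.of_forall (fun n => (key n).2))
    simpa using this
  linarith

section Final

variable {l : ℝ}

/-- The integrand as exp of the log-sum. -/
lemma tprod_eq (hl0 : 0 < l) (hl1 : l < 1) {t : ℝ} (ht : 0 ≤ t) :
    ∏' k : ℕ, (1 + t * l^k) ^ (-(1:ℝ)/2) = Real.exp (-(S l t) / 2) := by
  have hs : Summable (fun k : ℕ => Real.log (1 + t * l ^ k)) := by
    have := summable_log hl0 hl1 (t := t)
    rwa [max_eq_left ht] at this
  have h : HasSum (fun k : ℕ => (-(1:ℝ)/2) * Real.log (1 + t * l ^ k))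
      ((-(1:ℝ)/2) * ∑' k : ℕ, Real.log (1 + t * l ^ k)) := hs.hasSum.mul_left _
  have hp := h.rexp
  have he : ∀ k : ℕ, Real.exp ((-(1:ℝ)/2) * Real.log (1 + t * l ^ k))
      = (1 + t * l^k) ^ (-(1:ℝ)/2) := by
    intro k
    rw [Real.rpow_def_of_pos (by nlinarith [pow_pos hl0 k]), mul_comm]
  have := hp.tprod_eq
  simp only [Function.comp_def, he] at this
  rw [this, S, max_eq_left ht]
  congr 1
  ring

set_option maxHeartbeats 1000000 in
lemma S_pair (hl0 : 0 < l) (hl1 : l < 1) {t : ℝ} (ht : 0 ≤ t) :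
    S l t = S (l^2) t + S (l^2) (l * t) := by
  have hl20 : (0:ℝ) < l^2 := by positivity
  have hl21 : l^2 < 1 := by nlinarith
  have hlt : 0 ≤ l * t := by positivity
  have hpow : ∀ k : ℕ, (l^2)^k = l ^ (2*k) := fun k => by rw [pow_mul]
  have hpow1 : ∀ k : ℕ, l * (l^2)^k = l ^ (2*k+1) := fun k => by
    rw [hpow]; exact (pow_succ' _ _).symm
  have he : Summable (fun k : ℕ => Real.log (1 + max t 0 * l ^ (2*k))) := by
    refine (summable_log hl20 hl21 (t := t)).congr (fun k => ?_)
    rw [hpow]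
  have ho : Summable (fun k : ℕ => Real.log (1 + max t 0 * l ^ (2*k+1))) := by
    refine (summable_log hl20 hl21 (t := l*t)).congr (fun k => ?_)
    rw [max_eq_left hlt, max_eq_left ht, ← hpow1]
    congr 1; ring
  have hkey := tsum_even_add_odd (f := fun k => Real.log (1 + max t 0 * l ^ k)) he ho
  simp only [S]
  rw [← hkey]
  congr 1
  · exact tsum_congr (fun k => by rw [hpow])
  · refine tsum_congr (fun k => ?_)
    rw [max_eq_left hlt, max_eq_left ht, ← hpow1]
    congr 1; ring

lemma g_sandwich (hl0 : 0 < l) (hl1 : l < 1) {t : ℝ} (ht : 0 ≤ t) :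
    F (l^2) t ≤ Real.exp (-(S l t) / 2) ∧
      Real.exp (-(S l t) / 2) ≤ F (l^2) (l * t) := by
  have hl20 : (0:ℝ) < l^2 := by positivity
  have hl21 : l^2 < 1 := by nlinarith
  have hpair := S_pair hl0 hl1 ht
  have hmono : S (l^2) (l*t) ≤ S (l^2) t := S_mono hl20 hl21 (by nlinarith)
  constructor
  · rw [F]; apply Real.exp_le_exp.2; linarith
  · rw [F]; apply Real.exp_le_exp.2; linarith

lemma g_measurable (hl0 : 0 < l) (hl1 : l < 1) :
    Measurable (fun t => Real.exp (-(S l t) / 2)) := by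
  have : Antitone (fun t => Real.exp (-(S l t) / 2)) := by
    intro a b hab
    apply Real.exp_le_exp.2
    have := S_mono hl0 hl1 hab
    linarith
  exact this.measurable

lemma Fl_integrableOn (hl0 : 0 < l) (hl1 : l < 1) :
    IntegrableOn (fun t => F (l^2) (l * t)) (Ioi (0:ℝ)) := by
  have hl20 : (0:ℝ) < l^2 := by positivity
  have hl21 : l^2 < 1 := by nlinarith
  have := (integrableOn_Ioi_comp_mul_left_iff (F (l^2)) 0 hl0).2
  rw [mul_zero] at this
  exact this (F_integrableOn hl20 hl21)

lemma g_integrableOn (hl0 : 0 < l) (hl1 : l < 1) :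
    IntegrableOn (fun t => Real.exp (-(S l t) / 2)) (Ioi (0:ℝ)) := by
  refine Integrable.mono' (Fl_integrableOn hl0 hl1)
    (g_measurable hl0 hl1).aestronglyMeasurable ?_
  rw [ae_restrict_iff' measurableSet_Ioi]
  refine ae_of_all _ (fun x hx => ?_)
  rw [Real.norm_eq_abs, abs_of_pos (Real.exp_pos _)]
  exact (g_sandwich hl0 hl1 (le_of_lt hx)).2

lemma integral_g_bounds (hl0 : 0 < l) (hl1 : l < 1) :
    2 * Real.log l⁻¹ ≤ (∫ t in Ioi (0:ℝ), Real.exp (-(S l t) / 2)) ∧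
      (∫ t in Ioi (0:ℝ), Real.exp (-(S l t) / 2)) ≤ l⁻¹ * (2 * Real.log l⁻¹) := by
  have hl20 : (0:ℝ) < l^2 := by positivity
  have hl21 : l^2 < 1 := by nlinarith
  have hlog : Real.log (l^2)⁻¹ = 2 * Real.log l⁻¹ := by
    rw [← inv_pow, Real.log_pow]
    norm_num
  have hFint := F_integrableOn hl20 hl21
  have hglow : ∫ t in Ioi (0:ℝ), F (l^2) t ≤ ∫ t in Ioi (0:ℝ), Real.exp (-(S l t) / 2) :=
    setIntegral_mono_on hFint (g_integrableOn hl0 hl1) measurableSet_Ioi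
      (fun x hx => (g_sandwich hl0 hl1 (le_of_lt hx)).1)
  have hgup : ∫ t in Ioi (0:ℝ), Real.exp (-(S l t) / 2)
      ≤ ∫ t in Ioi (0:ℝ), F (l^2) (l * t) :=
    setIntegral_mono_on (g_integrableOn hl0 hl1) (Fl_integrableOn hl0 hl1) measurableSet_Ioi
      (fun x hx => (g_sandwich hl0 hl1 (le_of_lt hx)).2)
  have hcv : ∫ t in Ioi (0:ℝ), F (l^2) (l * t) = l⁻¹ * ∫ t in Ioi (0:ℝ), F (l^2) t := by
    have := integral_comp_mul_left_Ioi (F (l^2)) 0 hl0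
    rw [mul_zero] at this
    rw [this, smul_eq_mul]
  rw [integral_F hl20 hl21, hlog] at hglow hcv
  rw [hcv] at hgup
  exact ⟨hglow, hgup⟩

end Final

end Stmt6

open Stmt6 in
theorem stmt_6 (l : ℝ) (hl0 : 0 < l) (hl1 : l < 1) :
    l⁻¹ * Real.log l⁻¹ / (l⁻¹ - 1) ≤ Vmult l ∧
      Vmult l ≤ l⁻¹^2 * Real.log l⁻¹ / (l⁻¹ - 1) := by
  have hcongr : (∫ t in Set.Ioi (0:ℝ), ∏' k : ℕ, (1 + t * l^k) ^ (-(1:ℝ)/2))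
      = ∫ t in Ioi (0:ℝ), Real.exp (-(S l t) / 2) :=
    setIntegral_congr_fun measurableSet_Ioi (fun t ht => tprod_eq hl0 hl1 (le_of_lt ht))
  obtain ⟨h1, h2⟩ := integral_g_bounds hl0 hl1
  rw [Vmult, hcongr]
  have h1l : (0:ℝ) < 1 - l := by linarith
  have hlog0 : 0 ≤ Real.log l⁻¹ := Real.log_nonneg (by
    rw [le_inv_comm₀] <;> nlinarith)
  have hc : (0:ℝ) < 1 / (2 * (1-l)) := by positivity
  constructor
  · have hE : l⁻¹ * Real.log l⁻¹ / (l⁻¹ - 1) = 1 / (2 * (1-l)) * (2 * Real.log l⁻¹) := by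
      rw [show l⁻¹ - 1 = (1-l)/l by field_simp]
      field_simp
    rw [hE]
    exact mul_le_mul_of_nonneg_left h1 hc.le
  · have hE : l⁻¹^2 * Real.log l⁻¹ / (l⁻¹ - 1) = 1 / (2 * (1-l)) * (l⁻¹ * (2 * Real.log l⁻¹)) := by
      rw [show l⁻¹ - 1 = (1-l)/l by field_simp]
      field_simp
    rw [hE]
    exact mul_le_mul_of_nonneg_left h2 hc.le
end

section
/- Define $V(\lambda) = \frac{1}{2(1-\lambda)} \int_0^\infty \prod_{k=0}^\infty (1 + t\lambda^k)^{-1/2} \, dt$. Then $\lim_{\lambda \to 1^-} V(\lambda) = 1$. -/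
open MeasureTheory Real Filter

section Aux

variable {l : ℝ}

private lemma pos_term (hl0 : 0 ≤ l) {t : ℝ} (ht : 0 ≤ t) (k : ℕ) :
    0 < 1 + t * l ^ k := by nlinarith [pow_nonneg hl0 k, mul_nonneg ht (pow_nonneg hl0 k)]

private lemma summable_log (hl0 : 0 ≤ l) (hl1 : l < 1) {t : ℝ} (ht : 0 ≤ t) :
    Summable (fun k : ℕ => Real.log (1 + t * l ^ k)) := by
  refine Summable.of_nonneg_of_le
    (fun k => Real.log_nonneg (by nlinarith [mul_nonneg ht (pow_nonneg hl0 k)])) (fun k => ?_)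
    ((summable_geometric_of_lt_one hl0 hl1).mul_left t)
  have h := Real.log_le_sub_one_of_pos (pos_term hl0 ht k)
  linarith

private lemma tprod_eq_exp (hl0 : 0 ≤ l) (hl1 : l < 1) {t : ℝ} (ht : 0 ≤ t) :
    (∏' k : ℕ, (1 + t * l ^ k) ^ (-(1:ℝ)/2))
      = Real.exp ((∑' k : ℕ, Real.log (1 + t * l ^ k)) * (-(1:ℝ)/2)) := by
  have hs : HasSum (fun k : ℕ => Real.log (1 + t * l ^ k) * (-(1:ℝ)/2))
      ((∑' k : ℕ, Real.log (1 + t * l ^ k)) * (-(1:ℝ)/2)) :=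
    (summable_log hl0 hl1 ht).hasSum.mul_right _
  have hp := hs.rexp
  have hfun : (fun k : ℕ => (1 + t * l ^ k) ^ (-(1:ℝ)/2))
      = rexp ∘ (fun k : ℕ => Real.log (1 + t * l ^ k) * (-(1:ℝ)/2)) := by
    funext k
    simp only [Function.comp]
    rw [Real.rpow_def_of_pos (pos_term hl0 ht k)]
  rw [hfun, hp.tprod_eq]

private lemma sum_le (hl0 : 0 ≤ l) (hl1 : l < 1) {t : ℝ} (ht : 0 ≤ t) :
    (∑' k : ℕ, Real.log (1 + t * l ^ k)) ≤ t * (1 - l)⁻¹ := by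
  have h1 : (∑' k : ℕ, Real.log (1 + t * l ^ k)) ≤ ∑' k : ℕ, t * l ^ k := by
    refine Summable.tsum_le_tsum (fun k => ?_) (summable_log hl0 hl1 ht)
      ((summable_geometric_of_lt_one hl0 hl1).mul_left t)
    have h := Real.log_le_sub_one_of_pos (pos_term hl0 ht k)
    linarith
  calc (∑' k : ℕ, Real.log (1 + t * l ^ k)) ≤ ∑' k : ℕ, t * l ^ k := h1
    _ = t * (1 - l)⁻¹ := by rw [tsum_mul_left, tsum_geometric_of_lt_one hl0 hl1]

private lemma le_sum (hl0 : 0 < l) (hl1 : l < 1) {t : ℝ} (ht : 0 ≤ t) :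
    Real.log (1 + t) * (1 - l)⁻¹ ≤ (∑' k : ℕ, Real.log (1 + t * l ^ k)) := by
  have hterm : ∀ k : ℕ, l ^ k * Real.log (1 + t) ≤ Real.log (1 + t * l ^ k) := by
    intro k
    have hpk : 0 < l ^ k := pow_pos hl0 k
    have hpk1 : l ^ k ≤ 1 := pow_le_one₀ hl0.le hl1.le
    have hp : (1:ℝ) ≤ (l ^ k)⁻¹ := (one_le_inv₀ hpk).2 hpk1
    have hs : (-1:ℝ) ≤ t * l ^ k := by nlinarith
    have hb := one_add_mul_self_le_rpow_one_add hs hp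
    have he : (l ^ k)⁻¹ * (t * l ^ k) = t := by field_simp
    rw [he] at hb
    have hlog := Real.log_le_log (by linarith) hb
    rw [Real.log_rpow (pos_term hl0.le ht k)] at hlog
    calc l ^ k * Real.log (1 + t) ≤ l ^ k * ((l ^ k)⁻¹ * Real.log (1 + t * l ^ k)) :=
          mul_le_mul_of_nonneg_left hlog hpk.le
      _ = Real.log (1 + t * l ^ k) := by field_simp
  have hsum : Summable (fun k : ℕ => l ^ k * Real.log (1 + t)) :=
    (summable_geometric_of_lt_one hl0.le hl1).mul_right _
  calc Real.log (1 + t) * (1 - l)⁻¹ = ∑' k : ℕ, l ^ k * Real.log (1 + t) := by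
        rw [tsum_mul_right, tsum_geometric_of_lt_one hl0.le hl1]; ring
    _ ≤ ∑' k : ℕ, Real.log (1 + t * l ^ k) :=
        Summable.tsum_le_tsum hterm hsum (summable_log hl0.le hl1 ht)

/-- The regularized integrand `exp(-(1/2) Σ log(1+max(t,0) λ^k))`. -/
private noncomputable def gfun (l t : ℝ) : ℝ :=
  Real.exp ((∑' k : ℕ, Real.log (1 + max t 0 * l ^ k)) * (-(1:ℝ)/2))

private lemma measurable_gfun (hl0 : 0 ≤ l) (hl1 : l < 1) : Measurable (gfun l) := by
  have hmono : Monotone (fun t : ℝ => ∑' k : ℕ, Real.log (1 + max t 0 * l ^ k)) := by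
    intro t t' htt
    refine Summable.tsum_le_tsum (fun k => ?_) (summable_log hl0 hl1 (le_max_right t 0))
      (summable_log hl0 hl1 (le_max_right t' 0))
    refine Real.log_le_log (pos_term hl0 (le_max_right t 0) k) ?_
    have : max t 0 ≤ max t' 0 := max_le_max htt le_rfl
    nlinarith [pow_nonneg hl0 k]
  exact Real.measurable_exp.comp (hmono.measurable.mul_const _)

end Aux

private lemma integral_one_add_rpow {a : ℝ} (ha : 1 < a) :
    (∫ t in Set.Ioi (0:ℝ), (1 + t) ^ (-a)) = (a - 1)⁻¹ ∧
      IntegrableOn (fun t : ℝ => (1 + t) ^ (-a)) (Set.Ioi 0) := by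
  set G : ℝ → ℝ := fun t => -(1 + t) ^ (1 - a) * (a - 1)⁻¹ with hG
  have hderiv : ∀ x ∈ Set.Ici (0:ℝ), HasDerivAt G ((1 + x) ^ (-a)) x := by
    intro x hx
    have hx0 : (0:ℝ) ≤ x := hx
    have h1x : (0:ℝ) < 1 + x := by linarith
    have h1 : HasDerivAt (fun t : ℝ => 1 + t) 1 x := (hasDerivAt_id x).const_add 1
    have h2 : HasDerivAt (fun t : ℝ => (1 + t) ^ (1 - a))
        (1 * (1 - a) * (1 + x) ^ (1 - a - 1)) x :=
      h1.rpow_const (Or.inl h1x.ne')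
    have h3 := (h2.neg).mul_const (a - 1)⁻¹
    have heq : -(1 * (1 - a) * (1 + x) ^ (1 - a - 1)) * (a - 1)⁻¹
        = (1 + x) ^ (1 - a - 1) * ((a - 1) * (a - 1)⁻¹) := by ring
    have h5 : HasDerivAt G ((1 + x) ^ (1 - a - 1) * ((a - 1) * (a - 1)⁻¹)) x := heq ▸ h3
    rw [mul_inv_cancel₀ (show a - 1 ≠ 0 by intro h; rw [sub_eq_zero] at h; exact ha.ne h.symm),
      mul_one] at h5
    have h6 : (1:ℝ) - a - 1 = -a := by ring
    rwa [h6] at h5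
  have htend : Tendsto G atTop (nhds 0) := by
    have h1 : Tendsto (fun t : ℝ => (1 + t)) atTop atTop :=
      tendsto_atTop_add_const_left _ 1 tendsto_id
    have h2 : Tendsto (fun t : ℝ => (1 + t) ^ (-(a - 1))) atTop (nhds 0) :=
      (tendsto_rpow_neg_atTop (by linarith)).comp h1
    have h3 : Tendsto G atTop (nhds (-0 * (a - 1)⁻¹)) := by
      have : G = fun t => -((1 + t) ^ (-(a - 1))) * (a - 1)⁻¹ := by
        funext t; rw [hG]; ring_nf
      rw [this]
      exact (h2.neg).mul_const _
    simpa using h3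
  have hnonneg : ∀ x ∈ Set.Ioi (0:ℝ), 0 ≤ (1 + x) ^ (-a) := by
    intro x hx
    exact Real.rpow_nonneg (by simp at hx; linarith) _
  constructor
  · rw [integral_Ioi_of_hasDerivAt_of_nonneg' hderiv hnonneg htend]
    rw [hG]
    simp [Real.one_rpow]
  · exact integrableOn_Ioi_deriv_of_nonneg' hderiv hnonneg htend

private lemma integral_exp_neg {b : ℝ} (hb : 0 < b) :
    (∫ t in Set.Ioi (0:ℝ), Real.exp (-(b * t))) = b⁻¹ ∧
      IntegrableOn (fun t : ℝ => Real.exp (-(b * t))) (Set.Ioi 0) := by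
  set G : ℝ → ℝ := fun t => -Real.exp (-(b * t)) * b⁻¹ with hG
  have hderiv : ∀ x ∈ Set.Ici (0:ℝ), HasDerivAt G (Real.exp (-(b * x))) x := by
    intro x _
    have h1 : HasDerivAt (fun t : ℝ => -(b * t)) (-b) x := by
      simpa using ((hasDerivAt_id x).const_mul b).fun_neg
    have h2 : HasDerivAt G (-(rexp (-(b * x)) * -b) * b⁻¹) x := (h1.exp.fun_neg).mul_const b⁻¹
    convert h2 using 1
    field_simp
  have htend : Tendsto G atTop (nhds 0) := by
    have h1 : Tendsto (fun t : ℝ => b * t) atTop atTop :=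
      Tendsto.const_mul_atTop hb tendsto_id
    have h2 : Tendsto (fun t : ℝ => Real.exp (-(b * t))) atTop (nhds 0) :=
      Real.tendsto_exp_neg_atTop_nhds_zero.comp h1
    have h3 : Tendsto G atTop (nhds (-0 * b⁻¹)) := (h2.neg).mul_const _
    simpa using h3
  have hnonneg : ∀ x ∈ Set.Ioi (0:ℝ), 0 ≤ Real.exp (-(b * x)) := fun x _ => (Real.exp_pos _).le
  constructor
  · rw [integral_Ioi_of_hasDerivAt_of_nonneg' hderiv hnonneg htend]
    rw [hG]
    simp
  · exact integrableOn_Ioi_deriv_of_nonneg' hderiv hnonneg htend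

private lemma Vmult_bounds {l : ℝ} (hl : l ∈ Set.Ioo (1/2 : ℝ) 1) :
    1 ≤ Vmult l ∧ Vmult l ≤ (2 * l - 1)⁻¹ := by
  obtain ⟨hl2, hl1⟩ := hl
  have hl0 : (0:ℝ) < l := by linarith
  have h1l : (0:ℝ) < 1 - l := by linarith
  set a : ℝ := (2 * (1 - l))⁻¹ with ha
  have ha1 : 1 < a := by
    rw [ha, lt_inv_comm₀ (by norm_num) (by linarith)]
    · linarith
  have ha0 : 0 < a := by linarith
  -- rewrite the integrand
  have hcongr : (∫ t in Set.Ioi (0:ℝ), ∏' k : ℕ, (1 + t * l^k) ^ (-(1:ℝ)/2))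
      = ∫ t in Set.Ioi (0:ℝ), gfun l t := by
    refine setIntegral_congr_fun measurableSet_Ioi (fun t ht => ?_)
    have ht0 : (0:ℝ) ≤ t := (Set.mem_Ioi.1 ht).le
    rw [tprod_eq_exp hl0.le hl1 ht0, gfun, max_eq_left ht0]
  -- pointwise bounds on `gfun` on `Ioi 0`
  have hup : ∀ t ∈ Set.Ioi (0:ℝ), gfun l t ≤ (1 + t) ^ (-a) := by
    intro t ht
    have ht0 : (0:ℝ) ≤ t := (Set.mem_Ioi.1 ht).le
    simp only [gfun]
    rw [max_eq_left ht0, Real.rpow_def_of_pos (by linarith)]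
    apply Real.exp_le_exp.2
    have h2 := mul_le_mul_of_nonpos_right (le_sum hl0 hl1 ht0)
      (show (-(1:ℝ)/2) ≤ 0 by norm_num)
    refine h2.trans_eq ?_
    rw [ha]
    field_simp
  have hlo : ∀ t ∈ Set.Ioi (0:ℝ), Real.exp (-(a * t)) ≤ gfun l t := by
    intro t ht
    have ht0 : (0:ℝ) ≤ t := (Set.mem_Ioi.1 ht).le
    simp only [gfun]
    rw [max_eq_left ht0]
    apply Real.exp_le_exp.2
    have h2 := mul_le_mul_of_nonpos_right (sum_le hl0.le hl1 ht0)
      (show (-(1:ℝ)/2) ≤ 0 by norm_num)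
    refine le_trans (le_of_eq ?_) h2
    rw [ha]
    field_simp
  -- integrability of gfun on Ioi 0
  obtain ⟨hupint, hupintegrable⟩ := integral_one_add_rpow ha1
  obtain ⟨hloint, hlointegrable⟩ := integral_exp_neg ha0
  have hgmeas : Measurable (gfun l) := measurable_gfun hl0.le hl1
  have hgint : IntegrableOn (gfun l) (Set.Ioi 0) := by
    refine Integrable.mono' hupintegrable
      (hgmeas.aestronglyMeasurable.restrict) ?_
    rw [ae_restrict_iff' measurableSet_Ioi]
    filter_upwards with t
    intro ht
    have hpos : 0 < gfun l t := Real.exp_pos _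
    rw [Real.norm_eq_abs, abs_of_pos hpos]
    exact hup t ht
  -- integral bounds
  have hIup : (∫ t in Set.Ioi (0:ℝ), gfun l t) ≤ (a - 1)⁻¹ := by
    rw [← hupint]
    exact setIntegral_mono_on hgint hupintegrable measurableSet_Ioi hup
  have hIlo : a⁻¹ ≤ ∫ t in Set.Ioi (0:ℝ), gfun l t := by
    rw [← hloint]
    exact setIntegral_mono_on hlointegrable hgint measurableSet_Ioi hlo
  have hainv : a⁻¹ = 2 * (1 - l) := by rw [ha, inv_inv]
  have hVeq : Vmult l = (1 / (2 * (1 - l))) * ∫ t in Set.Ioi (0:ℝ), gfun l t := by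
    rw [Vmult, hcongr]
  have hc : (0:ℝ) < 1 / (2 * (1 - l)) := by positivity
  constructor
  · rw [hVeq]
    calc (1:ℝ) = (1 / (2 * (1 - l))) * (2 * (1 - l)) := by field_simp
      _ ≤ (1 / (2 * (1 - l))) * ∫ t in Set.Ioi (0:ℝ), gfun l t := by
          apply mul_le_mul_of_nonneg_left _ hc.le
          rw [← hainv]; exact hIlo
  · rw [hVeq]
    have h2l1 : (0:ℝ) < 2 * l - 1 := by linarith
    have hueq : (1 / (2 * (1 - l))) * (a - 1)⁻¹ = (2 * l - 1)⁻¹ := by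
      rw [ha]
      rw [div_mul_eq_mul_div, one_mul]
      rw [eq_comm, inv_eq_iff_eq_inv, eq_comm]
      field_simp
      ring
    calc (1 / (2 * (1 - l))) * ∫ t in Set.Ioi (0:ℝ), gfun l t
        ≤ (1 / (2 * (1 - l))) * (a - 1)⁻¹ := mul_le_mul_of_nonneg_left hIup hc.le
      _ = (2 * l - 1)⁻¹ := hueq

theorem stmt_7 :
    Filter.Tendsto Vmult (nhdsWithin 1 (Set.Iio (1:ℝ))) (nhds 1) := by
  have hmem : Set.Ioo (1/2 : ℝ) 1 ∈ nhdsWithin 1 (Set.Iio (1:ℝ)) :=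
    Ioo_mem_nhdsLT_of_mem (by norm_num)
  have hlo : ∀ᶠ l in nhdsWithin 1 (Set.Iio (1:ℝ)), (1:ℝ) ≤ Vmult l :=
    eventually_of_mem hmem (fun l hl => (Vmult_bounds hl).1)
  have hhi : ∀ᶠ l in nhdsWithin 1 (Set.Iio (1:ℝ)), Vmult l ≤ (2 * l - 1)⁻¹ :=
    eventually_of_mem hmem (fun l hl => (Vmult_bounds hl).2)
  have htend : Tendsto (fun l : ℝ => (2 * l - 1)⁻¹) (nhdsWithin 1 (Set.Iio (1:ℝ))) (nhds 1) := by
    have h1 : Tendsto (fun l : ℝ => (2 * l - 1)⁻¹) (nhds 1) (nhds ((2 * 1 - 1 : ℝ)⁻¹)) := by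
      apply ContinuousAt.tendsto
      apply ContinuousAt.inv₀
      · exact (continuous_const.mul continuous_id).sub continuous_const |>.continuousAt
      · norm_num
    have : ((2 * 1 - 1 : ℝ))⁻¹ = 1 := by norm_num
    rw [this] at h1
    exact h1.mono_left nhdsWithin_le_nhds
  exact tendsto_of_tendsto_of_tendsto_of_le_of_le' tendsto_const_nhds htend hlo hhi
end

section
/- For every real $\lambda$ with $0.7 < \lambda < 1$, define $V(\lambda) = \frac{1}{2(1-\lambda)} \int_0^\infty \prod_{k=0}^\infty (1 + t\lambda^k)^{-1/2} \, dt$. Then $\frac{\lambda^{-1.45}\log(\lambda^{-1})}{\lambda^{-1}-1} \le V(\lambda) \le \frac{\lambda^{-1.5}\log(\lambda^{-1})}{\lambda^{-1}-1}$. -/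
open MeasureTheory Real Set
open scoped Interval ENNReal

namespace VProof

noncomputable def Sf (m u : ℝ) : ℝ := ∑' k : ℕ, Real.log (1 + u * m ^ k)

noncomputable def Fc (m u : ℝ) : ℝ := Real.exp (-Sf m (max u 0))

variable {m : ℝ}

lemma term_nonneg (hm : 0 ≤ m) {u : ℝ} (hu : 0 ≤ u) (k : ℕ) :
    0 ≤ Real.log (1 + u * m ^ k) :=
  Real.log_nonneg (by nlinarith [pow_nonneg hm k, mul_nonneg hu (pow_nonneg hm k)])

lemma term_pos (hm : 0 ≤ m) {u : ℝ} (hu : 0 ≤ u) (k : ℕ) :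
    0 < 1 + u * m ^ k := by nlinarith [mul_nonneg hu (pow_nonneg hm k)]

lemma term_le (hm : 0 ≤ m) {u : ℝ} (hu : 0 ≤ u) (k : ℕ) :
    Real.log (1 + u * m ^ k) ≤ u * m ^ k := by
  have := Real.log_le_sub_one_of_pos (term_pos hm hu k)
  linarith

lemma summable_term (hm0 : 0 ≤ m) (hm1 : m < 1) {u : ℝ} (hu : 0 ≤ u) :
    Summable (fun k : ℕ => Real.log (1 + u * m ^ k)) := by
  refine Summable.of_nonneg_of_le (fun k => term_nonneg hm0 hu k)
    (fun k => term_le hm0 hu k) ?_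
  exact (summable_geometric_of_lt_one hm0 hm1).mul_left u

lemma Sf_nonneg (hm0 : 0 ≤ m) {u : ℝ} (hu : 0 ≤ u) : 0 ≤ Sf m u :=
  tsum_nonneg (fun k => term_nonneg hm0 hu k)

lemma log_le_Sf (hm0 : 0 ≤ m) (hm1 : m < 1) {u : ℝ} (hu : 0 ≤ u) :
    Real.log (1 + u) ≤ Sf m u := by
  have h := Summable.le_tsum (summable_term hm0 hm1 hu) 0 (fun j _ => term_nonneg hm0 hu j)
  simpa [Sf] using h

lemma Sf_lt_Sf (hm0 : 0 ≤ m) (hm1 : m < 1) {u v : ℝ} (hu : 0 ≤ u) (huv : u < v) :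
    Sf m u < Sf m v := by
  have hv : 0 ≤ v := hu.trans huv.le
  refine Summable.tsum_lt_tsum_of_nonneg (i := 0) (fun k => term_nonneg hm0 hu k) (fun k => ?_)
    ?_ (summable_term hm0 hm1 hv)
  · apply Real.log_le_log (term_pos hm0 hu k)
    have := mul_le_mul_of_nonneg_right huv.le (pow_nonneg hm0 k)
    linarith
  · apply Real.log_lt_log (by simpa using term_pos hm0 hu 0)
    simpa using huv

lemma Sf_diff_le (hm0 : 0 ≤ m) (hm1 : m < 1) {u v : ℝ} (hu : 0 ≤ u) (huv : u ≤ v) :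
    Sf m v - Sf m u ≤ (1 - m)⁻¹ * (v - u) := by
  have hv : 0 ≤ v := hu.trans huv
  have hsu := summable_term hm0 hm1 hu
  have hsv := summable_term hm0 hm1 hv
  rw [Sf, Sf, ← Summable.tsum_sub hsv hsu]
  have h1 : ∀ k : ℕ, Real.log (1 + v * m ^ k) - Real.log (1 + u * m ^ k)
      ≤ (v - u) * m ^ k := by
    intro k
    have hpu := term_pos hm0 hu k
    have hpv := term_pos hm0 hv k
    have hmk : (0:ℝ) ≤ m ^ k := pow_nonneg hm0 k
    have : Real.log (1 + v * m ^ k) - Real.log (1 + u * m ^ k)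
        = Real.log ((1 + v * m ^ k) / (1 + u * m ^ k)) := (Real.log_div hpv.ne' hpu.ne').symm
    rw [this]
    have hq : (0:ℝ) < (1 + v * m ^ k) / (1 + u * m ^ k) := by positivity
    have := Real.log_le_sub_one_of_pos hq
    have h2 : (1 + v * m ^ k) / (1 + u * m ^ k) - 1 ≤ (v - u) * m ^ k := by
      rw [div_sub_one hpu.ne']
      rw [div_le_iff₀ hpu]
      nlinarith [mul_le_mul_of_nonneg_right huv hmk, mul_nonneg hu hmk]
    linarith
  calc ∑' k : ℕ, (Real.log (1 + v * m ^ k) - Real.log (1 + u * m ^ k))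
      ≤ ∑' k : ℕ, (v - u) * m ^ k := by
        refine Summable.tsum_le_tsum h1 (hsv.sub hsu) ?_
        exact (summable_geometric_of_lt_one hm0 hm1).mul_left _
    _ = (v - u) * (1 - m)⁻¹ := by
        rw [tsum_mul_left, tsum_geometric_of_lt_one hm0 hm1]
    _ = (1 - m)⁻¹ * (v - u) := by ring

lemma Sf_continuousOn (hm0 : 0 ≤ m) (hm1 : m < 1) : ContinuousOn (Sf m) (Ici 0) := by
  have hK : (0:ℝ) ≤ (1 - m)⁻¹ := by
    have : (0:ℝ) < 1 - m := by linarith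
    positivity
  refine (LipschitzOnWith.of_dist_le_mul (K := ⟨(1 - m)⁻¹, hK⟩) ?_).continuousOn
  have key : ∀ x ∈ Ici (0:ℝ), ∀ y ∈ Ici (0:ℝ), x ≤ y →
      |Sf m x - Sf m y| ≤ (1 - m)⁻¹ * |x - y| := by
    intro x hx y hy h
    have h1 := Sf_diff_le hm0 hm1 hx h
    have h2 : Sf m x ≤ Sf m y := by
      rcases eq_or_lt_of_le h with rfl | h'
      · exact le_rfl
      · exact (Sf_lt_Sf hm0 hm1 hx h').le
    rw [abs_of_nonpos (by linarith), abs_of_nonpos (by linarith)]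
    linarith
  intro x hx y hy
  simp only [Real.dist_eq, NNReal.coe_mk]
  rcases le_total x y with h | h
  · exact key x hx y hy h
  · have := key y hy x hx h
    rwa [abs_sub_comm (Sf m y), abs_sub_comm y] at this


lemma Sf_rec (hm0 : 0 ≤ m) (hm1 : m < 1) {u : ℝ} (hu : 0 ≤ u) :
    Sf m u = Real.log (1 + u) + Sf m (m * u) := by
  have hmu : 0 ≤ m * u := mul_nonneg hm0 hu
  have hs : Summable (fun k : ℕ => Real.log (1 + u * m ^ k)) := summable_term hm0 hm1 hu
  rw [Sf, Summable.tsum_eq_zero_add hs]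
  congr 1
  · simp
  · rw [Sf]
    refine tsum_congr (fun k => ?_)
    congr 2
    ring

lemma Fc_of_nonneg {u : ℝ} (hu : 0 ≤ u) : Fc m u = Real.exp (-Sf m u) := by
  rw [Fc, max_eq_left hu]

lemma Fc_pos (u : ℝ) : 0 < Fc m u := Real.exp_pos _

lemma Fc_le_one (hm0 : 0 ≤ m) (u : ℝ) : Fc m u ≤ 1 := by
  rw [Fc, ← Real.exp_zero]
  exact Real.exp_le_exp.2 (by simpa using Sf_nonneg hm0 (le_max_right u 0))

lemma Fc_rec (hm0 : 0 ≤ m) (hm1 : m < 1) {u : ℝ} (hu : 0 ≤ u) :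
    Fc m (m * u) = (1 + u) * Fc m u := by
  have hmu : 0 ≤ m * u := mul_nonneg hm0 hu
  rw [Fc_of_nonneg hmu, Fc_of_nonneg hu, Sf_rec hm0 hm1 hu]
  have hexp : rexp (-Real.log (1 + u)) = (1 + u)⁻¹ := by
    rw [← Real.log_inv, Real.exp_log (by positivity)]
  rw [neg_add, Real.exp_add, hexp]
  field_simp

lemma Fc_lt_Fc (hm0 : 0 ≤ m) (hm1 : m < 1) {u v : ℝ} (hu : 0 ≤ u) (huv : u < v) :
    Fc m v < Fc m u := by
  rw [Fc_of_nonneg hu, Fc_of_nonneg (hu.trans huv.le)]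
  exact Real.exp_lt_exp.2 (by simpa using Sf_lt_Sf hm0 hm1 hu huv)

lemma Fc_le_Fc (hm0 : 0 ≤ m) (hm1 : m < 1) {u v : ℝ} (hu : 0 ≤ u) (huv : u ≤ v) :
    Fc m v ≤ Fc m u := by
  rcases eq_or_lt_of_le huv with rfl | h
  · exact le_rfl
  · exact (Fc_lt_Fc hm0 hm1 hu h).le

lemma Fc_continuous (hm0 : 0 ≤ m) (hm1 : m < 1) : Continuous (Fc m) := by
  have h1 : Continuous fun u : ℝ => Sf m (max u 0) :=
    (Sf_continuousOn hm0 hm1).comp_continuous (continuous_id.max continuous_const)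
      (fun x => mem_Ici.2 (le_max_right x 0))
  exact Real.continuous_exp.comp h1.neg

lemma Fc_le_inv (hm0 : 0 ≤ m) (hm1 : m < 1) {u : ℝ} (hu : 0 ≤ u) :
    Fc m u ≤ (1 + u)⁻¹ := by
  rw [Fc_of_nonneg hu, ← Real.exp_log (show (0:ℝ) < (1+u)⁻¹ by positivity)]
  apply Real.exp_le_exp.2
  rw [Real.log_inv]
  have := log_le_Sf hm0 hm1 hu
  linarith

lemma exists_Fc_eq (hm0 : 0 ≤ m) (hm1 : m < 1) {y : ℝ} (hy0 : 0 < y) (hy1 : y < 1) :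
    ∃ c : ℝ, 0 < c ∧ Fc m c = y := by
  set T : ℝ := y⁻¹ with hT
  have hT0 : 0 ≤ T := by positivity
  have hFT : Fc m T ≤ y := by
    refine (Fc_le_inv hm0 hm1 hT0).trans ?_
    have h1 : y⁻¹ ≤ 1 + T := by rw [hT]; linarith
    have := inv_anti₀ (show (0:ℝ) < y⁻¹ by positivity) h1
    rwa [inv_inv] at this
  have hF0 : Fc m 0 = 1 := by
    rw [Fc_of_nonneg le_rfl]
    simp [Sf]
  have hmem : y ∈ Icc (Fc m T) (Fc m 0) := ⟨hFT, by rw [hF0]; exact hy1.le⟩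
  have := intermediate_value_Icc' hT0 ((Fc_continuous hm0 hm1).continuousOn) hmem
  obtain ⟨c, hc, hceq⟩ := this
  refine ⟨c, ?_, hceq⟩
  rcases eq_or_lt_of_le hc.1 with rfl | h
  · exfalso; rw [hF0] at hceq; exact hy1.ne' hceq
  · exact h

lemma lint_inv_Ico {a b : ℝ} (ha : 0 < a) (hab : a ≤ b) :
    ∫⁻ u in Set.Ico a b, ENNReal.ofReal u⁻¹ = ENNReal.ofReal (Real.log b - Real.log a) := by
  have hb : 0 < b := lt_of_lt_of_le ha hab
  rw [Measure.restrict_congr_set Ico_ae_eq_Ioc]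
  have h0 : (0:ℝ) ∉ [[a, b]] := notMem_uIcc_of_lt ha hb
  have hint : IntegrableOn (fun u : ℝ => u⁻¹) (Ioc a b) := by
    rw [← intervalIntegrable_iff_integrableOn_Ioc_of_le hab]
    exact intervalIntegrable_inv_iff.2 (Or.inr h0)
  have hnn : 0 ≤ᵐ[volume.restrict (Ioc a b)] fun u : ℝ => u⁻¹ := by
    filter_upwards [ae_restrict_mem measurableSet_Ioc] with x hx
    have : 0 < x := ha.trans hx.1
    positivity
  rw [← ofReal_integral_eq_lintegral_ofReal hint hnn]
  congr 1
  rw [← intervalIntegral.integral_of_le hab, integral_inv h0,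
    Real.log_div hb.ne' ha.ne']

lemma key_lintegral (hm0 : 0 < m) (hm1 : m < 1) :
    ∫⁻ u in Ioi (0:ℝ), ENNReal.ofReal (Fc m u) = ENNReal.ofReal (Real.log m⁻¹) := by
  have hFc := Fc_continuous hm0.le hm1
  set A : Set (ℝ × ℝ) := {p | Fc m p.1 ≤ p.2 ∧ p.2 < Fc m (m * p.1)} with hA_def
  have hA : MeasurableSet A := by
    have h1 : MeasurableSet {p : ℝ × ℝ | Fc m p.1 ≤ p.2} :=
      measurableSet_le (hFc.comp continuous_fst).measurable measurable_snd
    have h2 : MeasurableSet {p : ℝ × ℝ | p.2 < Fc m (m * p.1)} :=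
      measurableSet_lt measurable_snd
        ((hFc.comp (continuous_const.mul continuous_fst)).measurable)
    exact h1.inter h2
  set g : ℝ × ℝ → ℝ≥0∞ := fun p => ENNReal.ofReal p.1⁻¹ * A.indicator 1 p with hg_def
  have hg_meas : Measurable g := by
    exact (ENNReal.measurable_ofReal.comp measurable_fst.inv).mul
      (measurable_one.indicator hA)
  have step1 : ∀ u ∈ Ioi (0:ℝ), (∫⁻ y, g (u, y)) = ENNReal.ofReal (Fc m u) := by
    intro u hu
    have hu0 : (0:ℝ) < u := hu
    have heq : (fun y => g (u, y))
        = (Ico (Fc m u) (Fc m (m * u))).indicator (fun _ => ENNReal.ofReal u⁻¹) := by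
      funext y
      simp only [hg_def, hA_def, Set.indicator_apply, Set.mem_setOf_eq, Set.mem_Ico]
      split_ifs with h
      · simp
      · simp
    rw [heq, lintegral_indicator_const measurableSet_Ico, Real.volume_Ico]
    have hrec := Fc_rec hm0.le hm1 hu0.le
    have hdiff : Fc m (m * u) - Fc m u = u * Fc m u := by rw [hrec]; ring
    rw [hdiff, ← ENNReal.ofReal_mul (by positivity)]
    congr 1
    field_simp
  have step3 : ∀ y : ℝ, (∫⁻ u in Ioi (0:ℝ), g (u, y))
      = (Ioo (0:ℝ) 1).indicator (fun _ => ENNReal.ofReal (Real.log m⁻¹)) y := by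
    intro y
    set By : Set ℝ := {u : ℝ | Fc m u ≤ y ∧ y < Fc m (m * u)} with hBy_def
    have hBy : MeasurableSet By := by
      have h1 : MeasurableSet {u : ℝ | Fc m u ≤ y} :=
        measurableSet_le hFc.measurable measurable_const
      have h2 : MeasurableSet {u : ℝ | y < Fc m (m * u)} :=
        measurableSet_lt measurable_const (hFc.comp (continuous_const.mul continuous_id)).measurable
      exact h1.inter h2
    have heq : (fun u => g (u, y)) = By.indicator (fun u => ENNReal.ofReal u⁻¹) := by
      funext u
      simp only [hg_def, hA_def, hBy_def, Set.indicator_apply, Set.mem_setOf_eq]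
      split_ifs with h
      · simp
      · simp
    rw [heq, lintegral_indicator hBy, Measure.restrict_restrict hBy]
    by_cases hy : y ∈ Ioo (0:ℝ) 1
    · obtain ⟨c, hc0, hceq⟩ := exists_Fc_eq hm0.le hm1 hy.1 hy.2
      have hiff : ∀ w : ℝ, w < m⁻¹ * c ↔ m * w < c := by
        intro w
        constructor
        · intro h
          have := (mul_lt_mul_iff_right₀ hm0).2 h
          rwa [← mul_assoc, mul_inv_cancel₀ hm0.ne', one_mul] at this
        · intro h
          have := (mul_lt_mul_iff_right₀ (inv_pos.2 hm0)).2 h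
          rwa [← mul_assoc, inv_mul_cancel₀ hm0.ne', one_mul] at this
      have hset : By ∩ Ioi 0 = Ico c (m⁻¹ * c) := by
        ext u
        simp only [hBy_def, Set.mem_inter_iff, Set.mem_setOf_eq, Set.mem_Ico, Set.mem_Ioi]
        constructor
        · rintro ⟨⟨h1, h2⟩, hu0⟩
          constructor
          · by_contra hlt
            push_neg at hlt
            have := Fc_lt_Fc hm0.le hm1 hu0.le hlt
            rw [hceq] at this
            exact absurd h1 (not_le.2 this)
          · rw [hiff u]
            by_contra hge
            push_neg at hge
            have := Fc_le_Fc hm0.le hm1 hc0.le hge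
            rw [hceq] at this
            exact absurd h2 (not_lt.2 this)
        · rintro ⟨h1, h2⟩
          have hu0 : 0 < u := lt_of_lt_of_le hc0 h1
          have hmu : m * u < c := (hiff u).1 h2
          refine ⟨⟨?_, ?_⟩, hu0⟩
          · have := Fc_le_Fc hm0.le hm1 hc0.le h1
            rwa [hceq] at this
          · have := Fc_lt_Fc hm0.le hm1 (mul_nonneg hm0.le hu0.le) hmu
            rwa [hceq] at this
      have h1m : (1:ℝ) ≤ m⁻¹ := by
        have := inv_anti₀ hm0 hm1.le
        rwa [inv_one] at this
      have hcc : c ≤ m⁻¹ * c := by nlinarith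
      rw [hset, lint_inv_Ico hc0 hcc, Set.indicator_of_mem hy]
      congr 1
      rw [Real.log_mul (by positivity) hc0.ne']
      ring
    · have hempty : By ∩ Ioi 0 = (∅ : Set ℝ) := by
        rw [Set.eq_empty_iff_forall_notMem]
        rintro u ⟨⟨h1, h2⟩, hu0⟩
        apply hy
        constructor
        · exact lt_of_lt_of_le (Fc_pos u) h1
        · exact lt_of_lt_of_le h2 (Fc_le_one hm0.le _)
      rw [hempty, Set.indicator_of_notMem hy]
      simp
  calc ∫⁻ u in Ioi (0:ℝ), ENNReal.ofReal (Fc m u)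
      = ∫⁻ u in Ioi (0:ℝ), ∫⁻ y, g (u, y) := by
        exact (setLIntegral_congr_fun measurableSet_Ioi
          (fun u hu => (step1 u hu).symm))
    _ = ∫⁻ y, ∫⁻ u in Ioi (0:ℝ), g (u, y) := by
        exact lintegral_lintegral_swap hg_meas.aemeasurable
    _ = ∫⁻ y, (Ioo (0:ℝ) 1).indicator (fun _ => ENNReal.ofReal (Real.log m⁻¹)) y := by
        exact lintegral_congr step3
    _ = ENNReal.ofReal (Real.log m⁻¹) := by
        rw [lintegral_indicator_const measurableSet_Ioo, Real.volume_Ioo]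
        simp

lemma key_integrableOn (hm0 : 0 < m) (hm1 : m < 1) : IntegrableOn (Fc m) (Ioi (0:ℝ)) := by
  constructor
  · exact (Fc_continuous hm0.le hm1).aestronglyMeasurable
  · rw [hasFiniteIntegral_iff_ofReal (ae_of_all _ (fun u => (Fc_pos u).le))]
    rw [key_lintegral hm0 hm1]
    exact ENNReal.ofReal_lt_top

lemma key_integral (hm0 : 0 < m) (hm1 : m < 1) :
    ∫ u in Ioi (0:ℝ), Fc m u = Real.log m⁻¹ := by
  rw [integral_eq_lintegral_of_nonneg_ae (ae_of_all _ (fun u => (Fc_pos u).le))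
    (Fc_continuous hm0.le hm1).aestronglyMeasurable]
  rw [key_lintegral hm0 hm1]
  rw [ENNReal.toReal_ofReal]
  apply Real.log_nonneg
  have := inv_anti₀ hm0 hm1.le
  rwa [inv_one] at this

lemma key_integral_scaled (hm0 : 0 < m) (hm1 : m < 1) {a : ℝ} (ha : 0 < a) :
    ∫ t in Ioi (0:ℝ), Fc m (a * t) = a⁻¹ * Real.log m⁻¹ := by
  rw [MeasureTheory.integral_comp_mul_left_Ioi (Fc m) 0 ha, mul_zero,
    key_integral hm0 hm1, smul_eq_mul]

lemma key_integrableOn_scaled (hm0 : 0 < m) (hm1 : m < 1) {a : ℝ} (ha : 0 < a) :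
    IntegrableOn (fun t => Fc m (a * t)) (Ioi (0:ℝ)) := by
  have h := (MeasureTheory.integrableOn_Ioi_comp_mul_left_iff (Fc m) 0 ha).2
  rw [mul_zero] at h
  exact h (key_integrableOn hm0 hm1)

lemma poly_ineq {y : ℝ} (hy0 : 0 < y) (hy1 : y ≤ 1) (hy7 : (0.7:ℝ) ≤ y ^ 20) :
    1 + y ^ 20 ≤ 2 * y ^ 9 := by
  set q : ℝ → ℝ := fun t => 2 * t ^ 9 - t ^ 20 - 1 with hq
  have hq' : ∀ t : ℝ, HasDerivAt q (18 * t ^ 8 - 20 * t ^ 19) t := by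
    intro t
    have h1 : HasDerivAt (fun x : ℝ => x ^ 9) (9 * t ^ 8) t := by
      simpa using hasDerivAt_pow 9 t
    have h2 : HasDerivAt (fun x : ℝ => x ^ 20) (20 * t ^ 19) t := by
      simpa using hasDerivAt_pow 20 t
    have h3 := ((h1.const_mul (2:ℝ)).sub h2).sub_const 1
    exact h3.congr_deriv (by ring)
  have hqc : Continuous q := by
    rw [hq]; continuity
  suffices h : 0 ≤ q y by
    rw [hq] at h; simp only at h; linarith
  set c : ℝ := (0.7:ℝ) ^ ((20:ℝ)⁻¹) with hc
  have hc0 : 0 < c := Real.rpow_pos_of_pos (by norm_num) _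
  have hc20 : c ^ (20:ℕ) = 0.7 := by
    rw [hc, ← Real.rpow_natCast ((0.7:ℝ) ^ ((20:ℝ)⁻¹)) 20, ← Real.rpow_mul (by norm_num)]
    norm_num
  have hcy : c ≤ y := by
    apply le_of_pow_le_pow_left₀ (n := 20) (by norm_num) hy0.le
    rw [hc20]; exact hy7
  have hc9 : (0.85:ℝ) ≤ c ^ (9:ℕ) := by
    apply le_of_pow_le_pow_left₀ (n := 20) (by norm_num) (by positivity)
    calc (0.85:ℝ) ^ 20 ≤ (0.7:ℝ) ^ 9 := by norm_num
      _ = (c ^ (20:ℕ)) ^ 9 := by rw [hc20]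
      _ = (c ^ (9:ℕ)) ^ 20 := by ring
  have hqc0 : 0 ≤ q c := by
    have hqcv : q c = 2 * c ^ 9 - c ^ 20 - 1 := rfl
    rw [hqcv, hc20]
    norm_num
    linarith
  by_cases hcase : y ^ (11:ℕ) ≤ 0.9
  · have hmono : MonotoneOn q (Icc c y) := by
      apply monotoneOn_of_deriv_nonneg (convex_Icc c y) hqc.continuousOn
      · intro t ht
        exact (hq' t).differentiableAt.differentiableWithinAt
      · intro t ht
        rw [interior_Icc] at ht
        rw [(hq' t).deriv]
        have ht0 : 0 < t := lt_trans hc0 ht.1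
        have h11 : t ^ 11 ≤ 0.9 :=
          le_trans (pow_lt_pow_left₀ ht.2 ht0.le (by norm_num)).le hcase
        have h19 : t ^ 19 = t ^ 8 * t ^ 11 := by ring
        nlinarith [mul_nonneg (pow_nonneg ht0.le 8)
          (show (0:ℝ) ≤ 9 - 10 * t ^ 11 by linarith)]
    have := hmono ⟨le_rfl, hcy⟩ ⟨hcy, le_rfl⟩ hcy
    linarith
  · push_neg at hcase
    have hanti : AntitoneOn q (Icc y 1) := by
      apply antitoneOn_of_deriv_nonpos (convex_Icc y 1) hqc.continuousOn
      · intro t ht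
        exact (hq' t).differentiableAt.differentiableWithinAt
      · intro t ht
        rw [interior_Icc] at ht
        rw [(hq' t).deriv]
        have ht0 : 0 < t := lt_trans hy0 ht.1
        have h11 : (0.9:ℝ) < t ^ 11 :=
          lt_trans hcase (pow_lt_pow_left₀ ht.1 hy0.le (by norm_num))
        have h19 : t ^ 19 = t ^ 8 * t ^ 11 := by ring
        nlinarith [mul_nonneg (pow_nonneg ht0.le 8)
          (show (0:ℝ) ≤ 10 * t ^ 11 - 9 by linarith)]
    have h2 := hanti ⟨le_rfl, hy1⟩ ⟨hy1, le_rfl⟩ hy1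
    have hq1 : q 1 = 0 := by rw [hq]; norm_num
    linarith

lemma numeric_ineq {x : ℝ} (h0 : 0.7 < x) (h1 : x < 1) : 1 + x ≤ 2 * x ^ (0.45:ℝ) := by
  have hx0 : 0 < x := by linarith
  set y : ℝ := x ^ ((20:ℝ)⁻¹) with hy
  have hy0 : 0 < y := Real.rpow_pos_of_pos hx0 _
  have hy20 : y ^ (20:ℕ) = x := by
    rw [hy, ← Real.rpow_natCast (x ^ ((20:ℝ)⁻¹)) 20, ← Real.rpow_mul hx0.le]
    norm_num
  have hy9 : y ^ (9:ℕ) = x ^ (0.45:ℝ) := by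
    rw [hy, ← Real.rpow_natCast (x ^ ((20:ℝ)⁻¹)) 9, ← Real.rpow_mul hx0.le]
    norm_num
  have h := poly_ineq hy0 (Real.rpow_le_one hx0.le h1.le (by norm_num))
    (by rw [hy20]; exact h0.le)
  rw [hy20, hy9] at h
  linarith

lemma pair_lower {l t : ℝ} (hl0 : 0 < l) (hl1 : l < 1) (ht : 0 ≤ t) (k : ℕ) :
    2 * Real.log (1 + (t * Real.sqrt l) * (l ^ 2) ^ k)
      ≤ Real.log (1 + t * l ^ (2 * k)) + Real.log (1 + t * l ^ (2 * k + 1)) := by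
  have hr : Real.sqrt l ^ 2 = l := Real.sq_sqrt hl0.le
  have hr0 : 0 < Real.sqrt l := Real.sqrt_pos.2 hl0
  have hA : (0:ℝ) ≤ (l ^ 2) ^ k := by positivity
  have e1 : l ^ (2 * k) = (l ^ 2) ^ k := by rw [pow_mul]
  have e2 : l ^ (2 * k + 1) = (l ^ 2) ^ k * l := by rw [pow_succ, pow_mul]
  have hb1 : (0:ℝ) < 1 + t * l ^ (2 * k) := by positivity
  have hb2 : (0:ℝ) < 1 + t * l ^ (2 * k + 1) := by positivity
  have hX : (0:ℝ) < 1 + t * Real.sqrt l * (l ^ 2) ^ k := by positivity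
  rw [show (2:ℝ) * Real.log (1 + t * Real.sqrt l * (l ^ 2) ^ k)
      = Real.log ((1 + t * Real.sqrt l * (l ^ 2) ^ k) ^ 2) by
        rw [Real.log_pow]; norm_num,
    ← Real.log_mul hb1.ne' hb2.ne']
  apply Real.log_le_log (by positivity)
  rw [e1, e2]
  nlinarith [mul_nonneg (mul_nonneg ht hA) (sq_nonneg (1 - Real.sqrt l)),
    sq_nonneg (t * (l ^ 2) ^ k), hr, mul_nonneg ht hA]

lemma pair_upper {l t : ℝ} (hl0 : 0.7 < l) (hl1 : l < 1) (ht : 0 ≤ t) (k : ℕ) :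
    Real.log (1 + t * l ^ (2 * k)) + Real.log (1 + t * l ^ (2 * k + 1))
      ≤ 2 * Real.log (1 + (t * l ^ (0.45:ℝ)) * (l ^ 2) ^ k) := by
  have hl0' : 0 < l := by linarith
  set s : ℝ := l ^ (0.45:ℝ) with hs
  have hs0 : 0 < s := Real.rpow_pos_of_pos hl0' _
  have h2s : 1 + l ≤ 2 * s := numeric_ineq hl0 hl1
  have hs2 : l ≤ s ^ 2 := by
    have : s ^ (2:ℕ) = l ^ (0.9:ℝ) := by
      rw [hs, ← Real.rpow_natCast (l ^ (0.45:ℝ)) 2, ← Real.rpow_mul hl0'.le]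
      norm_num
    rw [this]
    have h := Real.rpow_le_rpow_of_exponent_ge hl0' hl1.le (show (0.9:ℝ) ≤ 1 by norm_num)
    rwa [Real.rpow_one] at h
  have hA : (0:ℝ) ≤ (l ^ 2) ^ k := by positivity
  have e1 : l ^ (2 * k) = (l ^ 2) ^ k := by rw [pow_mul]
  have e2 : l ^ (2 * k + 1) = (l ^ 2) ^ k * l := by rw [pow_succ, pow_mul]
  have hb1 : (0:ℝ) < 1 + t * l ^ (2 * k) := by positivity
  have hb2 : (0:ℝ) < 1 + t * l ^ (2 * k + 1) := by positivity
  rw [show (2:ℝ) * Real.log (1 + t * s * (l ^ 2) ^ k)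
      = Real.log ((1 + t * s * (l ^ 2) ^ k) ^ 2) by
        rw [Real.log_pow]; norm_num,
    ← Real.log_mul hb1.ne' hb2.ne']
  apply Real.log_le_log (by positivity)
  rw [e1, e2]
  nlinarith [mul_nonneg (mul_nonneg ht hA) (show (0:ℝ) ≤ 2 * s - (1 + l) by linarith),
    mul_nonneg (sq_nonneg (t * (l ^ 2) ^ k)) (show (0:ℝ) ≤ s ^ 2 - l by linarith),
    mul_nonneg ht hA]

lemma summable_even {l t : ℝ} (hl0 : 0 < l) (hl1 : l < 1) (ht : 0 ≤ t) :
    Summable (fun k : ℕ => Real.log (1 + t * l ^ (2 * k))) := by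
  have h := summable_term (m := l ^ 2) (by positivity) (by nlinarith) ht
  refine h.congr (fun k => ?_)
  rw [pow_mul]

lemma summable_odd {l t : ℝ} (hl0 : 0 < l) (hl1 : l < 1) (ht : 0 ≤ t) :
    Summable (fun k : ℕ => Real.log (1 + t * l ^ (2 * k + 1))) := by
  have h := summable_term (m := l ^ 2) (by positivity) (by nlinarith)
    (mul_nonneg ht hl0.le)
  refine h.congr (fun k => ?_)
  have e : t * l * (l ^ 2) ^ k = t * l ^ (2 * k + 1) := by
    rw [pow_succ l (2 * k), pow_mul l 2 k]; ring
  rw [e]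

set_option maxHeartbeats 1000000 in
lemma Sf_sandwich_lower {l t : ℝ} (hl0 : 0 < l) (hl1 : l < 1) (ht : 0 ≤ t) :
    2 * Sf (l ^ 2) (t * Real.sqrt l) ≤ Sf l t := by
  have hr0 : 0 ≤ Real.sqrt l := Real.sqrt_nonneg l
  have hμ0 : (0:ℝ) ≤ l ^ 2 := by positivity
  have hμ1 : l ^ 2 < 1 := by nlinarith
  have hsum := summable_term hμ0 hμ1 (mul_nonneg ht hr0)
  have heo := tsum_even_add_odd (f := fun k : ℕ => Real.log (1 + t * l ^ k))
    (summable_even hl0 hl1 ht) (summable_odd hl0 hl1 ht)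
  have hsplit : Sf l t = (∑' k : ℕ, Real.log (1 + t * l ^ (2 * k)))
      + ∑' k : ℕ, Real.log (1 + t * l ^ (2 * k + 1)) := heo.symm
  have hle : (∑' k : ℕ, 2 * Real.log (1 + (t * Real.sqrt l) * (l ^ 2) ^ k))
      ≤ ∑' k : ℕ, (Real.log (1 + t * l ^ (2 * k)) + Real.log (1 + t * l ^ (2 * k + 1))) := by
    refine Summable.tsum_le_tsum (fun k => pair_lower hl0 hl1 ht k) (hsum.mul_left 2) ?_
    exact (summable_even hl0 hl1 ht).add (summable_odd hl0 hl1 ht)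
  rw [tsum_mul_left] at hle
  rw [Summable.tsum_add (summable_even hl0 hl1 ht) (summable_odd hl0 hl1 ht)] at hle
  rw [hsplit]
  exact hle

set_option maxHeartbeats 1000000 in
lemma Sf_sandwich_upper {l t : ℝ} (hl0 : 0.7 < l) (hl1 : l < 1) (ht : 0 ≤ t) :
    Sf l t ≤ 2 * Sf (l ^ 2) (t * l ^ (0.45:ℝ)) := by
  have hl0' : 0 < l := by linarith
  have hs0 : 0 ≤ l ^ (0.45:ℝ) := (Real.rpow_pos_of_pos hl0' _).le
  have hμ0 : (0:ℝ) ≤ l ^ 2 := by positivity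
  have hμ1 : l ^ 2 < 1 := by nlinarith
  have hsum := summable_term hμ0 hμ1 (mul_nonneg ht hs0)
  have heo := tsum_even_add_odd (f := fun k : ℕ => Real.log (1 + t * l ^ k))
    (summable_even hl0' hl1 ht) (summable_odd hl0' hl1 ht)
  have hsplit : Sf l t = (∑' k : ℕ, Real.log (1 + t * l ^ (2 * k)))
      + ∑' k : ℕ, Real.log (1 + t * l ^ (2 * k + 1)) := heo.symm
  have hle : (∑' k : ℕ, (Real.log (1 + t * l ^ (2 * k)) + Real.log (1 + t * l ^ (2 * k + 1))))
      ≤ ∑' k : ℕ, 2 * Real.log (1 + (t * l ^ (0.45:ℝ)) * (l ^ 2) ^ k) := by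
    refine Summable.tsum_le_tsum (fun k => pair_upper hl0 hl1 ht k) ?_ (hsum.mul_left 2)
    exact (summable_even hl0' hl1 ht).add (summable_odd hl0' hl1 ht)
  rw [tsum_mul_left] at hle
  rw [Summable.tsum_add (summable_even hl0' hl1 ht) (summable_odd hl0' hl1 ht)] at hle
  rw [hsplit]
  exact hle

lemma integrand_eq {l t : ℝ} (hl0 : 0 < l) (hl1 : l < 1) (ht : 0 ≤ t) :
    (∏' k : ℕ, (1 + t * l ^ k) ^ (-(1:ℝ)/2)) = Real.exp (Sf l t * (-(1:ℝ)/2)) := by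
  have hs := summable_term hl0.le hl1 ht
  have hsum : HasSum (fun k : ℕ => Real.log (1 + t * l ^ k) * (-(1:ℝ)/2))
      (Sf l t * (-(1:ℝ)/2)) := hs.hasSum.mul_right _
  have hprod := hsum.rexp
  have hfac : ∀ k : ℕ, (1 + t * l ^ k) ^ (-(1:ℝ)/2)
      = rexp (Real.log (1 + t * l ^ k) * (-(1:ℝ)/2)) := by
    intro k
    rw [Real.rpow_def_of_pos (term_pos hl0.le ht k)]
  calc (∏' k : ℕ, (1 + t * l ^ k) ^ (-(1:ℝ)/2))
      = ∏' k : ℕ, rexp (Real.log (1 + t * l ^ k) * (-(1:ℝ)/2)) := tprod_congr hfac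
    _ = Real.exp (Sf l t * (-(1:ℝ)/2)) := hprod.tprod_eq

end VProof

open VProof in
theorem stmt_8 (l : ℝ) (hl0 : 0.7 < l) (hl1 : l < 1) :
    l ^ (-1.45 : ℝ) * Real.log l⁻¹ / (l⁻¹ - 1) ≤ Vmult l ∧
      Vmult l ≤ l ^ (-1.5 : ℝ) * Real.log l⁻¹ / (l⁻¹ - 1) := by
  have hl0' : 0 < l := by linarith
  have hμ0 : (0:ℝ) < l ^ 2 := by positivity
  have hμ1 : l ^ 2 < 1 := by nlinarith
  set r : ℝ := Real.sqrt l with hr_def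
  set s : ℝ := l ^ (0.45:ℝ) with hs_def
  have hr0 : 0 < r := Real.sqrt_pos.2 hl0'
  have hs0 : 0 < s := Real.rpow_pos_of_pos hl0' _
  set I : ℝ → ℝ := fun t => ∏' k : ℕ, (1 + t * l ^ k) ^ (-(1:ℝ)/2) with hI
  have hle_up : ∀ᵐ t ∂(volume.restrict (Set.Ioi (0:ℝ))), I t ≤ Fc (l ^ 2) (r * t) := by
    filter_upwards [ae_restrict_mem measurableSet_Ioi] with t ht
    rw [hI]
    simp only
    rw [integrand_eq hl0' hl1 (le_of_lt ht),
      Fc_of_nonneg (mul_nonneg hr0.le (le_of_lt ht))]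
    apply Real.exp_le_exp.2
    have h := Sf_sandwich_lower hl0' hl1 (le_of_lt ht)
    rw [← hr_def] at h
    rw [mul_comm r t]
    linarith
  have hge_low : ∀ᵐ t ∂(volume.restrict (Set.Ioi (0:ℝ))), Fc (l ^ 2) (s * t) ≤ I t := by
    filter_upwards [ae_restrict_mem measurableSet_Ioi] with t ht
    rw [hI]
    simp only
    rw [integrand_eq hl0' hl1 (le_of_lt ht),
      Fc_of_nonneg (mul_nonneg hs0.le (le_of_lt ht))]
    apply Real.exp_le_exp.2
    have h := Sf_sandwich_upper hl0 hl1 (le_of_lt ht)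
    rw [← hs_def] at h
    rw [mul_comm s t]
    linarith
  have hup_int := key_integrableOn_scaled hμ0 hμ1 hr0
  have hlow_int := key_integrableOn_scaled hμ0 hμ1 hs0
  have hcontS : Continuous (fun t : ℝ => Real.exp (Sf l (max t 0) * (-(1:ℝ)/2))) := by
    have h1 : Continuous fun t : ℝ => Sf l (max t 0) :=
      (Sf_continuousOn hl0'.le hl1).comp_continuous
        (continuous_id.max continuous_const) (fun x => Set.mem_Ici.2 (le_max_right x 0))
    exact Real.continuous_exp.comp (h1.mul continuous_const)
  have hae_eq : I =ᵐ[volume.restrict (Set.Ioi (0:ℝ))]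
      (fun t => Real.exp (Sf l (max t 0) * (-(1:ℝ)/2))) := by
    filter_upwards [ae_restrict_mem measurableSet_Ioi] with t ht
    rw [hI]
    simp only
    rw [integrand_eq hl0' hl1 (le_of_lt ht), max_eq_left (le_of_lt ht)]
  have hasm : AEStronglyMeasurable I (volume.restrict (Set.Ioi (0:ℝ))) :=
    hcontS.aestronglyMeasurable.congr hae_eq.symm
  have hint : IntegrableOn I (Set.Ioi (0:ℝ)) := by
    apply Integrable.mono' hup_int hasm
    filter_upwards [hle_up, hae_eq] with t h1 h2
    rw [Real.norm_eq_abs, h2, abs_of_nonneg (Real.exp_nonneg _), ← h2]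
    exact h1
  have I_up : (∫ t in Set.Ioi (0:ℝ), I t) ≤ r⁻¹ * Real.log ((l ^ 2)⁻¹) := by
    rw [← key_integral_scaled hμ0 hμ1 hr0]
    exact integral_mono_ae hint hup_int hle_up
  have I_low : s⁻¹ * Real.log ((l ^ 2)⁻¹) ≤ ∫ t in Set.Ioi (0:ℝ), I t := by
    rw [← key_integral_scaled hμ0 hμ1 hs0]
    exact integral_mono_ae hlow_int hint hge_low
  have hlog : Real.log ((l ^ 2 : ℝ)⁻¹) = 2 * Real.log l⁻¹ := by
    rw [Real.log_inv, Real.log_inv, Real.log_pow]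
    push_cast
    ring
  have hpre : (0:ℝ) < 1 / (2 * (1 - l)) := by
    have h1 : (0:ℝ) < 1 - l := by linarith
    positivity
  have hVm : Vmult l = (1 / (2 * (1 - l))) * ∫ t in Set.Ioi (0:ℝ), I t := by
    rw [Vmult, hI]
  have hinv1 : l⁻¹ - 1 = (1 - l) / l := by field_simp
  have h1l : (1:ℝ) ≤ l⁻¹ := by
    have h := inv_anti₀ hl0' hl1.le
    rwa [inv_one] at h
  have hlogpos : 0 ≤ Real.log l⁻¹ := Real.log_nonneg h1l
  have hne : (1:ℝ) - l ≠ 0 := by intro h; linarith [h]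
  constructor
  · have hb := mul_le_mul_of_nonneg_left I_low hpre.le
    rw [← hVm] at hb
    refine le_trans (le_of_eq ?_) hb
    rw [hlog, hinv1]
    have hsinv : s⁻¹ = l ^ (-(0.45):ℝ) := by
      rw [hs_def, ← Real.rpow_neg hl0'.le]
    have h145 : l ^ (-1.45:ℝ) = l ^ (-(0.45):ℝ) * l⁻¹ := by
      rw [show (-1.45:ℝ) = (-(0.45)) + (-1) by norm_num, Real.rpow_add hl0',
        Real.rpow_neg_one]
    rw [hsinv, h145]
    field_simp
  · have hb := mul_le_mul_of_nonneg_left I_up hpre.le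
    rw [← hVm] at hb
    refine le_trans hb (le_of_eq ?_)
    rw [hlog, hinv1]
    have hrinv : r⁻¹ = l ^ (-(0.5):ℝ) := by
      rw [hr_def, Real.sqrt_eq_rpow, ← Real.rpow_neg hl0'.le]
      norm_num
    have h15 : l ^ (-1.5:ℝ) = l ^ (-(0.5):ℝ) * l⁻¹ := by
      rw [show (-1.5:ℝ) = (-(0.5)) + (-1) by norm_num, Real.rpow_add hl0',
        Real.rpow_neg_one]
    rw [hrinv, h15]
    field_simp
end

section
/- For every $t \ge 0$ and every $\lambda \in (0,1)$ and $\alpha \in (0, 1/2]$ satisfying $\alpha \le \frac{\log 2 - \log(1+\lambda)}{\log(\lambda^{-1})}$, and every integer $k \ge 0$, one has $(1 + t\lambda^{2k})(1 + t\lambda^{2k+1}) \le (1 + t\lambda^{2k+\alpha})^2$. -/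
open Real

theorem stmt_9 (t : ℝ) (ht : 0 ≤ t) (l : ℝ) (hl0 : 0 < l) (hl1 : l < 1)
    (a : ℝ) (ha0 : 0 < a) (ha1 : a ≤ 1/2)
    (ha : a ≤ (Real.log 2 - Real.log (1 + l)) / Real.log l⁻¹) (k : ℕ) :
    (1 + t * l^(2*k)) * (1 + t * l^(2*k+1)) ≤ (1 + t * l ^ ((2*k : ℝ) + a))^2 := by
  have hlogpos : 0 < Real.log l⁻¹ := Real.log_pos (by rw [lt_inv_comm₀] <;> simp [hl0, hl1])
  have hmul : a * Real.log l⁻¹ ≤ Real.log 2 - Real.log (1 + l) :=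
    (le_div_iff₀ hlogpos).mp ha
  rw [Real.log_inv] at hmul
  -- (1+l)/2 ≤ l^a
  have hB : (1 + l) / 2 ≤ l ^ a := by
    have h1l : 0 < 1 + l := by linarith
    have := Real.exp_le_exp.mpr (show Real.log ((1 + l) / 2) ≤ a * Real.log l by
      rw [Real.log_div (by positivity) (by norm_num)]
      linarith)
    rwa [Real.exp_log (by positivity), mul_comm, ← Real.rpow_def_of_pos hl0] at this
  -- l ≤ (l^a)^2
  have hB2 : l ≤ (l ^ a) ^ 2 := by
    have : l ^ (1 : ℝ) ≤ l ^ (2 * a) :=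
      Real.rpow_le_rpow_of_exponent_ge hl0 hl1.le (by linarith)
    rw [Real.rpow_one] at this
    calc l ≤ l ^ (2 * a) := this
      _ = (l ^ a) ^ 2 := by
        rw [← Real.rpow_natCast (l ^ a) 2, ← Real.rpow_mul hl0.le]
        norm_num [mul_comm]
  have hsplit : l ^ ((2*k : ℝ) + a) = l ^ (2*k) * l ^ a := by
    rw [Real.rpow_add hl0, show ((2*k:ℝ)) = ((2*k:ℕ):ℝ) by push_cast; ring,
      Real.rpow_natCast]
  rw [hsplit, pow_succ]
  have hA : (0:ℝ) ≤ l ^ (2*k) := by positivity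
  nlinarith [mul_nonneg (mul_nonneg ht ht) (mul_nonneg hA hA),
    mul_nonneg (mul_nonneg ht hA) (sub_nonneg.mpr hB),
    mul_nonneg (mul_nonneg (mul_nonneg ht ht) (mul_nonneg hA hA)) (sub_nonneg.mpr hB2)]
end

section
/- For every real $h > 0$, $\sqrt{2\pi}\,(1 - 2e^{-2\pi^2/h^2}) \le \sum_{n=-\infty}^{\infty} h\, e^{-(n+1/2)^2 h^2/2} \le \sqrt{2\pi}$. -/
open Real
lemma aux_A (h : ℝ) (hh : 0 < h) :
    ∑' n : ℤ, h * Real.exp (-((n : ℝ) + 1/2)^2 * h^2 / 2)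
      = Real.sqrt (2 * π) * ∑' n : ℤ, (-1:ℝ)^n * Real.exp (-(2*π^2/h^2) * (n:ℝ)^2) := by
  have hπ := Real.pi_pos
  set a : ℝ := 2*π/h^2 with ha0
  have hapos : 0 < a := by positivity
  have key := Complex.tsum_exp_neg_quadratic (a := (a:ℂ))
    (by simpa using hapos) (-Complex.I/2)
  have hL : ∀ n : ℤ, Complex.exp (-(π:ℂ) * (a:ℂ) * (n:ℂ)^2 + 2*(π:ℂ)*(-Complex.I/2)*(n:ℂ))
      = (((-1:ℝ)^n * Real.exp (-(2*π^2/h^2) * (n:ℝ)^2) : ℝ) : ℂ) := by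
    intro n
    have e1 : (-(π:ℂ) * (a:ℂ) * (n:ℂ)^2 + 2*(π:ℂ)*(-Complex.I/2)*(n:ℂ))
        = ((-(2*π^2/h^2) * (n:ℝ)^2 : ℝ) : ℂ) + (n:ℂ) * (-((π:ℂ) * Complex.I)) := by
      push_cast [ha0]
      ring
    rw [e1, Complex.exp_add, Complex.exp_int_mul]
    have e2 : Complex.exp (-((π:ℂ) * Complex.I)) = -1 := by
      rw [Complex.exp_neg, Complex.exp_pi_mul_I]
      norm_num
    rw [e2]
    push_cast
    ring
  have hR : ∀ n : ℤ, Complex.exp (-(π:ℂ) / (a:ℂ) * ((n:ℂ) + Complex.I * (-Complex.I/2))^2)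
      = ((Real.exp (-((n:ℝ) + 1/2)^2 * h^2 / 2) : ℝ) : ℂ) := by
    intro n
    have h12 : Complex.I * (-Complex.I / 2) = 1/2 := by
      rw [mul_comm, div_mul_eq_mul_div, neg_mul, Complex.I_mul_I]
      norm_num
    have hhc : (h:ℂ) ≠ 0 := by exact_mod_cast hh.ne'
    have hpc : (π:ℂ) ≠ 0 := by exact_mod_cast hπ.ne'
    have e2 : -(π:ℂ) / (a:ℂ) * ((n:ℂ) + Complex.I * (-Complex.I/2))^2
        = ((-((n:ℝ) + 1/2)^2 * h^2 / 2 : ℝ) : ℂ) := by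
      rw [h12]
      push_cast [ha0]
      field_simp
    rw [e2, Complex.ofReal_exp]
  have hcpow : (1:ℂ) / (a:ℂ) ^ (1/2 : ℂ) = (((Real.sqrt a)⁻¹ : ℝ) : ℂ) := by
    have h1 : ((Real.sqrt a : ℝ) : ℂ) = (a:ℂ) ^ (1/2 : ℂ) := by
      rw [Real.sqrt_eq_rpow, Complex.ofReal_cpow hapos.le]
      norm_num
    rw [← h1, Complex.ofReal_inv, one_div]
  have k2 : (∑' n : ℤ, (((-1:ℝ)^n * Real.exp (-(2*π^2/h^2) * (n:ℝ)^2) : ℝ) : ℂ))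
      = ((((Real.sqrt a)⁻¹ : ℝ)) : ℂ)
          * ∑' n : ℤ, ((Real.exp (-((n:ℝ)+1/2)^2*h^2/2) : ℝ) : ℂ) := by
    rw [← tsum_congr hL, key, hcpow, tsum_congr hR]
  have k3 : ∑' n : ℤ, (-1:ℝ)^n * Real.exp (-(2*π^2/h^2) * (n:ℝ)^2)
      = (Real.sqrt a)⁻¹ * ∑' n : ℤ, Real.exp (-((n:ℝ)+1/2)^2*h^2/2) := by
    rw [← Complex.ofReal_tsum, ← Complex.ofReal_tsum, ← Complex.ofReal_mul] at k2
    exact_mod_cast k2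
  have hsa : Real.sqrt a = Real.sqrt (2*π) / h := by
    rw [ha0, Real.sqrt_div (by positivity), Real.sqrt_sq hh.le]
  have hs2π : 0 < Real.sqrt (2*π) := Real.sqrt_pos.mpr (by positivity)
  rw [tsum_mul_left, k3, hsa]
  field_simp
  exact tsum_congr (fun x => by ring_nf)

-- helper: summability by geometric domination
lemma aux_summable (c : ℝ) (hc : 0 < c) (v : ℕ → ℝ)
    (hv : ∀ m, |v m| ≤ Real.exp (-c) ^ m) : Summable v := by
  have hq : Real.exp (-c) < 1 := Real.exp_lt_one_iff.mpr (by linarith)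
  exact Summable.of_abs (Summable.of_nonneg_of_le (fun m => abs_nonneg _) hv
    (summable_geometric_of_lt_one (Real.exp_nonneg _) hq))

lemma aux_g_le (c : ℝ) (hc : 0 < c) (m a : ℕ) (ham : (m : ℝ) ≤ (a:ℝ)^2) :
    Real.exp (-c * (a:ℝ)^2) ≤ Real.exp (-c) ^ m := by
  rw [← Real.exp_nat_mul]
  apply Real.exp_le_exp.mpr
  nlinarith

set_option maxHeartbeats 1000000 in
lemma aux_B (c : ℝ) (hc : 0 < c) :
    1 - 2 * Real.exp (-c) ≤ ∑' n : ℤ, (-1 : ℝ)^n * Real.exp (-c * (n:ℝ)^2) ∧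
    ∑' n : ℤ, (-1 : ℝ)^n * Real.exp (-c * (n:ℝ)^2) ≤ 1 := by
  set g : ℕ → ℝ := fun m => Real.exp (-c * (m:ℝ)^2) with hg
  set u : ℕ → ℝ := fun m => (-1 : ℝ)^(m+1) * g (m+1) with hu
  set f : ℤ → ℝ := fun n => (-1 : ℝ)^n * Real.exp (-c * (n:ℝ)^2) with hf
  have habs : ∀ m, |u m| = g (m+1) := by
    intro m
    simp [hu, hg, abs_mul, abs_pow, Real.abs_exp]
  have hgle : ∀ m a : ℕ, (m:ℝ) ≤ (a:ℝ)^2 → g a ≤ Real.exp (-c) ^ m :=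
    fun m a ham => aux_g_le c hc m a ham
  -- summabilities
  have hsu : Summable u := by
    apply aux_summable c hc
    intro m; rw [habs]; apply hgle; push_cast; nlinarith
  have hsu1 : Summable (fun m => u (m+1)) := by
    apply aux_summable c hc
    intro m; rw [habs]; apply hgle; push_cast; nlinarith
  have hse : Summable (fun k => u (2*k)) := by
    apply aux_summable c hc
    intro k; rw [habs]; apply hgle; push_cast; nlinarith
  have hso : Summable (fun k => u (2*k+1)) := by
    apply aux_summable c hc
    intro k; rw [habs]; apply hgle; push_cast; nlinarith
  have hse1 : Summable (fun k => u (2*k+1)) := hso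
  have hso1 : Summable (fun k => u (2*k+2)) := by
    apply aux_summable c hc
    intro k; rw [habs]; apply hgle; push_cast; nlinarith
  -- values of u
  have hue : ∀ k, u (2*k) = -g (2*k+1) := by
    intro k
    simp [hu, pow_succ, pow_mul]
  have huo : ∀ k, u (2*k+1) = g (2*k+2) := by
    intro k
    have : (-1:ℝ)^(2*k+1+1) = 1 := by
      rw [show 2*k+1+1 = 2*(k+1) by ring, pow_mul]; norm_num
    simp [hu, this]
  have huo2 : ∀ k, u (2*k+2) = -g (2*k+3) := by
    intro k
    have : (-1:ℝ)^(2*k+2+1) = -1 := by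
      rw [show 2*k+2+1 = 2*(k+1)+1 by ring, pow_succ, pow_mul]; norm_num
    simp [hu, this]
  have hganti : ∀ m n : ℕ, m ≤ n → g n ≤ g m := by
    intro m n hmn
    apply Real.exp_le_exp.mpr
    have : (m:ℝ) ≤ n := by exact_mod_cast hmn
    have hm0 : (0:ℝ) ≤ m := Nat.cast_nonneg m
    have h2 : (m:ℝ)^2 ≤ (n:ℝ)^2 := by nlinarith
    nlinarith [mul_nonneg hc.le (sub_nonneg.mpr h2)]
  -- T := tsum u, bounds
  have hT_le : ∑' m, u m ≤ 0 := by
    rw [← tsum_even_add_odd hse hso, ← Summable.tsum_add hse hso]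
    apply tsum_nonpos
    intro k
    rw [hue, huo]
    have := hganti (2*k+1) (2*k+2) (by omega)
    linarith
  have hT_ge : -g 1 ≤ ∑' m, u m := by
    rw [Summable.tsum_eq_zero_add hsu]
    have h0 : u 0 = -g 1 := by simp [hu]
    have : 0 ≤ ∑' m, u (m+1) := by
      rw [← tsum_even_add_odd hse1 hso1, ← Summable.tsum_add hse1 hso1]
      apply tsum_nonneg
      intro k
      rw [huo, huo2]
      have := hganti (2*k+2) (2*k+3) (by omega)
      linarith
    linarith [h0]
  -- sum over ℤ
  have hfn : ∀ n : ℕ, f (n : ℤ) = (-1:ℝ)^n * g n := by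
    intro n; simp [hf, hg, zpow_natCast]
  have hfneg : ∀ n : ℕ, f (-(n+1) : ℤ) = u n := by
    intro n
    simp only [hf, hu, hg]
    rw [show (-((n:ℤ)+1)) = -((n+1 : ℕ) : ℤ) by push_cast; ring]
    rw [zpow_neg, zpow_natCast]
    push_cast
    rw [neg_sq]
    rw [inv_eq_iff_eq_inv.mpr]
    rw [← inv_pow]
    norm_num
  have hsnat : Summable (fun n : ℕ => f (n : ℤ)) := by
    apply aux_summable c hc
    intro m
    rw [hfn]
    have : |(-1:ℝ)^m * g m| = g m := by
      simp [hg, abs_mul, abs_pow, Real.abs_exp]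
    rw [this]; apply hgle
    exact_mod_cast Nat.le_self_pow two_ne_zero m
  have hsneg : Summable (fun n : ℕ => f (-(n+1) : ℤ)) := by
    rw [show (fun n : ℕ => f (-(n+1) : ℤ)) = u by funext n; exact hfneg n]
    exact hsu
  have hsplit : ∑' n : ℤ, f n = (∑' n : ℕ, f (n:ℤ)) + ∑' n : ℕ, f (-(n+1) : ℤ) :=
    tsum_of_nat_of_neg_add_one hsnat hsneg
  have hnat : ∑' n : ℕ, f (n:ℤ) = 1 + ∑' m, u m := by
    rw [Summable.tsum_eq_zero_add hsnat]
    have h0 : f ((0:ℕ):ℤ) = 1 := by rw [hfn]; simp [hg]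
    have ht : ∑' n : ℕ, f ((n+1 : ℕ):ℤ) = ∑' m, u m := by
      apply tsum_congr; intro m
      rw [hfn (m+1)]
    rw [h0, ht]
  have hneg : ∑' n : ℕ, f (-(n+1) : ℤ) = ∑' m, u m := by
    apply tsum_congr; intro n; exact hfneg n
  have htotal : ∑' n : ℤ, f n = 1 + 2 * ∑' m, u m := by
    rw [hsplit, hnat, hneg]; ring
  have hg1 : g 1 = Real.exp (-c) := by simp [hg]
  constructor
  · rw [show (∑' n : ℤ, (-1 : ℝ)^n * Real.exp (-c * (n:ℝ)^2)) = ∑' n : ℤ, f n from rfl, htotal]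
    rw [hg1] at hT_ge
    linarith
  · rw [show (∑' n : ℤ, (-1 : ℝ)^n * Real.exp (-c * (n:ℝ)^2)) = ∑' n : ℤ, f n from rfl, htotal]
    linarith

theorem stmt_11 (h : ℝ) (hh : 0 < h) :
    Real.sqrt (2 * Real.pi) * (1 - 2 * Real.exp (-2 * Real.pi^2 / h^2))
        ≤ ∑' n : ℤ, h * Real.exp (-((n : ℝ) + 1/2)^2 * h^2 / 2) ∧
      ∑' n : ℤ, h * Real.exp (-((n : ℝ) + 1/2)^2 * h^2 / 2)
        ≤ Real.sqrt (2 * Real.pi) := by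
  have hπ := Real.pi_pos
  have hA := aux_A h hh
  have hB := aux_B (2*π^2/h^2) (by positivity)
  have he : Real.exp (-2 * π^2 / h^2) = Real.exp (-(2*π^2/h^2)) := by ring_nf
  constructor
  · rw [hA, he]
    exact mul_le_mul_of_nonneg_left hB.1 (Real.sqrt_nonneg _)
  · rw [hA]
    calc Real.sqrt (2*π) * ∑' n : ℤ, (-1:ℝ)^n * Real.exp (-(2*π^2/h^2) * (n:ℝ)^2)
        ≤ Real.sqrt (2*π) * 1 := mul_le_mul_of_nonneg_left hB.2 (Real.sqrt_nonneg _)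
      _ = Real.sqrt (2*π) := mul_one _
end

section
/- For every real $\lambda \in (0,1)$, $\sum_{n=0}^{\infty} \lambda^{n(n+1)/2} = \prod_{n=1}^{\infty} \frac{1 - \lambda^{2n}}{1 - \lambda^{2n-1}}$. -/
open Finset Filter Topology

namespace Gauss13

/-- triangular number -/
def T (n : ℕ) : ℕ := n * (n + 1) / 2

lemma two_T (n : ℕ) : 2 * T n = n * (n + 1) := by
  have h : 2 ∣ n * (n + 1) := (Nat.even_mul_succ_self n).two_dvd
  unfold T; omega

lemma T_succ (n : ℕ) : T (n + 1) = T n + (n + 1) := by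
  have h1 := two_T (n + 1); have h2 := two_T n; nlinarith

lemma T_ge (n : ℕ) : n ≤ T n := by
  have := two_T n; nlinarith

lemma sum_k1 (m : ℕ) : ∑ k ∈ range m, (k + 1) = T m := by
  induction m with
  | zero => simp [T]
  | succ m ih => rw [Finset.sum_range_succ, ih, T_succ]

lemma expo1 (n i : ℕ) (hi : i ≤ n + 1) :
    T (n + 1 + i) + (n + 1) * (n + 1 - i) = T i + (T (n + 1) + (n + 1) * (n + 1)) := by
  obtain ⟨d, hd⟩ : ∃ d, n + 1 = i + d := ⟨n + 1 - i, by omega⟩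
  rw [hd]
  have e : i + d - i = d := by omega
  rw [e]
  apply Nat.eq_of_mul_eq_mul_left (show 0 < 2 by norm_num)
  have h1 := two_T (i + d + i)
  have h2 := two_T i
  have h3 := two_T (i + d)
  zify at h1 h2 h3 ⊢
  linear_combination h1 - h2 - h3

lemma expo2 (n i : ℕ) (hi : i ≤ n) :
    T (n - i) + (n + 1) * (n + 2 + i) = T i + (T (n + 1) + (n + 1) * (n + 1)) := by
  obtain ⟨d, hd⟩ : ∃ d, n = i + d := ⟨n - i, by omega⟩
  rw [hd]
  have e : i + d - i = d := by omega
  rw [e]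
  apply Nat.eq_of_mul_eq_mul_left (show 0 < 2 by norm_num)
  have h1 := two_T d
  have h2 := two_T i
  have h3 := two_T (i + d + 1)
  zify at h1 h2 h3 ⊢
  linear_combination h1 - h2 - h3

noncomputable section

variable (q : ℝ)

/-- (q;q)_m -/
def P (m : ℕ) : ℝ := ∏ k ∈ range m, (1 - q ^ (k + 1))

/-- Gaussian binomial coefficient -/
def qb (m j : ℕ) : ℝ := if j ≤ m then P q m / (P q j * P q (m - j)) else 0

def E (m : ℕ) : ℝ := ∏ k ∈ range m, (1 + q ^ (k + 1))

def A (m : ℕ) : ℝ := ∏ k ∈ range m, (1 - q ^ (2 * k + 2))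

def Bo (m : ℕ) : ℝ := ∏ k ∈ range m, (1 - q ^ (2 * k + 1))

lemma P_zero : P q 0 = 1 := by simp [P]

lemma P_succ (m : ℕ) : P q (m + 1) = P q m * (1 - q ^ (m + 1)) := by
  unfold P; rw [Finset.prod_range_succ]

variable {q} (hq0 : 0 < q) (hq1 : q < 1)
include hq0 hq1

lemma one_sub_pow_pos (k : ℕ) : 0 < 1 - q ^ (k + 1) := by
  have : q ^ (k + 1) < 1 := pow_lt_one₀ hq0.le hq1 (Nat.succ_ne_zero k)
  linarith

lemma P_pos (m : ℕ) : 0 < P q m :=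
  Finset.prod_pos fun k _ => one_sub_pow_pos hq0 hq1 k

lemma P_ne (m : ℕ) : P q m ≠ 0 := (P_pos hq0 hq1 m).ne'

lemma qb_zero (m : ℕ) : qb q m 0 = 1 := by
  simp [qb, P_zero, P_ne hq0 hq1 m]

lemma qb_pascal (m i : ℕ) (hi : i ≤ m) :
    qb q (m + 1) (i + 1) = qb q m (i + 1) + q ^ (m - i) * qb q m i := by
  rcases eq_or_lt_of_le hi with rfl | hlt
  · simp only [qb, le_refl, if_pos, Nat.sub_self, Nat.add_sub_cancel_left,
      if_neg (by omega : ¬ i + 1 ≤ i)]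
    rw [P_zero, mul_one, mul_one, div_self (P_ne hq0 hq1 (i + 1)), div_self (P_ne hq0 hq1 i)]
    ring
  · obtain ⟨d, rfl⟩ : ∃ d, m = i + 1 + d := ⟨m - i - 1, by omega⟩
    simp only [qb, if_pos (by omega : i + 1 ≤ i + 1 + d + 1),
      if_pos (by omega : i + 1 ≤ i + 1 + d), if_pos (by omega : i ≤ i + 1 + d)]
    have e1 : i + 1 + d + 1 - (i + 1) = d + 1 := by omega
    have e2 : i + 1 + d - (i + 1) = d := by omega
    have e3 : i + 1 + d - i = d + 1 := by omega
    rw [e1, e2, e3]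
    rw [P_succ q (i + 1 + d), P_succ q i, P_succ q d]
    have n1 := P_ne hq0 hq1 i
    have n2 := P_ne hq0 hq1 d
    have n5 := P_ne hq0 hq1 (i + 1 + d)
    have n3 := (one_sub_pow_pos hq0 hq1 i).ne'
    have n4 := (one_sub_pow_pos hq0 hq1 d).ne'
    field_simp
    ring

lemma binet (m : ℕ) (z : ℝ) :
    ∏ k ∈ range m, (1 + z * q ^ (k + 1)) =
      ∑ j ∈ range (m + 1), qb q m j * q ^ (T j) * z ^ j := by
  induction m with
  | zero => simp [qb, P, T]
  | succ m ih =>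
    rw [Finset.prod_range_succ, ih]
    rw [Finset.sum_range_succ' (fun j => qb q (m + 1) j * q ^ (T j) * z ^ j)]
    have hpas : ∀ i ∈ range (m + 1),
        qb q (m + 1) (i + 1) * q ^ (T (i + 1)) * z ^ (i + 1)
          = qb q m (i + 1) * q ^ (T (i + 1)) * z ^ (i + 1)
            + (q ^ (m + 1) * z) * (qb q m i * q ^ (T i) * z ^ i) := by
      intro i hi
      have hi' : i ≤ m := Nat.lt_succ_iff.mp (mem_range.mp hi)
      rw [qb_pascal hq0 hq1 m i hi']
      have hexp : q ^ (m - i) * q ^ (T (i + 1)) = q ^ (m + 1) * q ^ (T i) := by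
        rw [← pow_add, ← pow_add]
        congr 1
        have := T_succ i
        omega
      linear_combination (qb q m i * z ^ (i + 1)) * hexp
    rw [Finset.sum_congr rfl hpas, Finset.sum_add_distrib, ← Finset.mul_sum]
    have h1 : (∑ i ∈ range (m + 1), qb q m (i + 1) * q ^ (T (i + 1)) * z ^ (i + 1))
        + qb q (m + 1) 0 * q ^ (T 0) * z ^ 0
        = ∑ j ∈ range (m + 1), qb q m j * q ^ (T j) * z ^ j := by
      rw [qb_zero hq0 hq1, ← qb_zero hq0 hq1 (q := q) (m := m)]
      rw [← Finset.sum_range_succ' (fun j => qb q m j * q ^ (T j) * z ^ j)]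
      rw [Finset.sum_range_succ]
      have : qb q m (m + 1) = 0 := by simp [qb]
      rw [this]; ring
    linear_combination (-1 : ℝ) * h1

lemma star (n : ℕ) :
    2 * E q n * E q (n + 1) =
      (∑ i ∈ range (n + 2), qb q (2 * n + 2) (n + 1 + i) * q ^ T i)
      + ∑ i ∈ range (n + 1), qb q (2 * n + 2) (n - i) * q ^ T i := by
  have hqne : q ≠ 0 := hq0.ne'
  set w : ℝ := q ^ (n + 1) with hw
  have hwne : w ≠ 0 := pow_ne_zero _ hqne
  set c : ℕ := T (n + 1) + (n + 1) * (n + 1) with hc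
  have hb := binet hq0 hq1 (2 * n + 2) w⁻¹
  have hb2 : (∏ k ∈ range (2 * n + 2), (1 + w⁻¹ * q ^ (k + 1))) * w ^ (2 * n + 2)
      = (∑ j ∈ range (2 * n + 2 + 1), qb q (2 * n + 2) j * q ^ T j * (w⁻¹) ^ j)
        * w ^ (2 * n + 2) := by rw [hb]
  -- LHS transformation
  have hL1 : (∏ k ∈ range (2 * n + 2), (1 + w⁻¹ * q ^ (k + 1))) * w ^ (2 * n + 2)
      = ∏ k ∈ range (2 * n + 2), (w + q ^ (k + 1)) := by
    have : w ^ (2 * n + 2) = ∏ _k ∈ range (2 * n + 2), w := by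
      rw [Finset.prod_const, card_range]
    rw [this, ← Finset.prod_mul_distrib]
    refine Finset.prod_congr rfl fun k _ => ?_
    field_simp
  have hL2 : ∏ k ∈ range (2 * n + 2), (w + q ^ (k + 1))
      = (2 * E q n * E q (n + 1)) * q ^ c := by
    have hsplit : (2 : ℕ) * n + 2 = (n + 1) + (n + 1) := by omega
    rw [hsplit, Finset.prod_range_add]
    have hpart1 : ∏ k ∈ range (n + 1), (w + q ^ (k + 1))
        = q ^ (T (n + 1)) * (2 * E q n) := by
      have hpt : ∀ k ∈ range (n + 1), (w + q ^ (k + 1))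
          = q ^ (k + 1) * (1 + q ^ (n - k)) := by
        intro k hk
        have hk' : k ≤ n := Nat.lt_succ_iff.mp (mem_range.mp hk)
        have : q ^ (k + 1) * q ^ (n - k) = w := by
          rw [hw, ← pow_add]; congr 1; omega
        rw [mul_add, mul_one, this]; ring
      rw [Finset.prod_congr rfl hpt, Finset.prod_mul_distrib,
        Finset.prod_pow_eq_pow_sum, sum_k1]
      congr 1
      have hrefl : ∏ k ∈ range (n + 1), (1 + q ^ (n - k))
          = ∏ k ∈ range (n + 1), (1 + q ^ k) := by
        have := Finset.prod_range_reflect (fun k => (1 + q ^ k)) (n + 1)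
        simpa using this
      rw [hrefl, Finset.prod_range_succ' (fun k => 1 + q ^ k)]
      simp [E]
      ring
    have hpart2 : ∏ k ∈ range (n + 1), (w + q ^ (n + 1 + k + 1))
        = q ^ ((n + 1) * (n + 1)) * E q (n + 1) := by
      have hpt : ∀ k ∈ range (n + 1), (w + q ^ (n + 1 + k + 1))
          = w * (1 + q ^ (k + 1)) := by
        intro k _
        have e : n + 1 + k + 1 = n + 1 + (k + 1) := by omega
        rw [e, mul_add, mul_one, hw, ← pow_add]
      rw [Finset.prod_congr rfl hpt, Finset.prod_mul_distrib, Finset.prod_const,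
        card_range, hw, ← pow_mul]
      rfl
    rw [hpart1, hpart2, hc, pow_add]
    ring
  -- RHS transformation
  have hR1 : (∑ j ∈ range (2 * n + 2 + 1), qb q (2 * n + 2) j * q ^ T j * (w⁻¹) ^ j)
        * w ^ (2 * n + 2)
      = ∑ j ∈ range (2 * n + 2 + 1), qb q (2 * n + 2) j * q ^ (T j + (n + 1) * (2 * n + 2 - j)) := by
    rw [Finset.sum_mul]
    refine Finset.sum_congr rfl fun j hj => ?_
    have hj' : j ≤ 2 * n + 2 := Nat.lt_succ_iff.mp (mem_range.mp hj)
    have h1 : w ^ (2 * n + 2) = w ^ j * w ^ (2 * n + 2 - j) := by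
      rw [← pow_add]; congr 1; omega
    rw [h1, inv_pow, pow_add]
    rw [show qb q (2*n+2) j * q ^ T j * (w ^ j)⁻¹ * (w ^ j * w ^ (2*n+2-j))
        = qb q (2*n+2) j * q ^ T j * ((w ^ j)⁻¹ * w ^ j) * w ^ (2*n+2-j) by ring,
      inv_mul_cancel₀ (pow_ne_zero _ hwne), mul_one, hw, ← pow_mul, mul_assoc, ← pow_add]
  have hR2 : ∑ j ∈ range (2 * n + 2 + 1), qb q (2 * n + 2) j * q ^ (T j + (n + 1) * (2 * n + 2 - j))
      = ((∑ i ∈ range (n + 2), qb q (2 * n + 2) (n + 1 + i) * q ^ T i)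
          + ∑ i ∈ range (n + 1), qb q (2 * n + 2) (n - i) * q ^ T i) * q ^ c := by
    have hsplit : 2 * n + 2 + 1 = (n + 1) + (n + 2) := by omega
    rw [hsplit, Finset.sum_range_add]
    have hsecond : ∑ i ∈ range (n + 2),
          qb q (2 * n + 2) (n + 1 + i) * q ^ (T (n + 1 + i) + (n + 1) * (2 * n + 2 - (n + 1 + i)))
        = (∑ i ∈ range (n + 2), qb q (2 * n + 2) (n + 1 + i) * q ^ T i) * q ^ c := by
      rw [Finset.sum_mul]
      refine Finset.sum_congr rfl fun i hi => ?_
      have hi' : i ≤ n + 1 := Nat.lt_succ_iff.mp (mem_range.mp hi)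
      have e1 : 2 * n + 2 - (n + 1 + i) = n + 1 - i := by omega
      rw [e1, expo1 n i hi', pow_add]
      ring
    have hfirst : ∑ j ∈ range (n + 1),
          qb q (2 * n + 2) j * q ^ (T j + (n + 1) * (2 * n + 2 - j))
        = (∑ i ∈ range (n + 1), qb q (2 * n + 2) (n - i) * q ^ T i) * q ^ c := by
      rw [Finset.sum_mul]
      rw [← Finset.sum_range_reflect
        (fun j => qb q (2 * n + 2) j * q ^ (T j + (n + 1) * (2 * n + 2 - j))) (n + 1)]
      refine Finset.sum_congr rfl fun i hi => ?_
      have hi' : i ≤ n := Nat.lt_succ_iff.mp (mem_range.mp hi)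
      have e0 : n + 1 - 1 - i = n - i := by omega
      have e1 : 2 * n + 2 - (n - i) = n + 2 + i := by omega
      rw [e0, e1, expo2 n i hi', pow_add]
      ring
    rw [hsecond, hfirst]
    ring
  rw [hL1, hL2, hR1, hR2] at hb2
  exact mul_right_cancel₀ (pow_ne_zero c hqne) hb2

lemma P_antitone : Antitone (P q) := by
  apply antitone_nat_of_succ_le
  intro m
  rw [P_succ]
  nlinarith [P_pos hq0 hq1 m, one_sub_pow_pos hq0 hq1 m,
    pow_pos hq0 (m + 1), pow_lt_one₀ hq0.le hq1 (Nat.succ_ne_zero m)]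

lemma P_lb (m : ℕ) : Real.exp (-(q / (1 - q) ^ 2)) ≤ P q m := by
  have hq1' : 0 < 1 - q := by linarith
  have step1 : ∏ k ∈ range m, Real.exp (-(q ^ (k + 1) / (1 - q))) ≤ P q m := by
    apply Finset.prod_le_prod (fun k _ => (Real.exp_pos _).le)
    intro k _
    have hx1 : q ^ (k + 1) < 1 := pow_lt_one₀ hq0.le hq1 (Nat.succ_ne_zero k)
    have hxq : q ^ (k + 1) ≤ q := by
      calc q ^ (k + 1) ≤ q ^ 1 := pow_le_pow_of_le_one hq0.le hq1.le (by omega)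
        _ = q := pow_one q
    -- exp(x/(1-x)) ≥ 1 + x/(1-x) = 1/(1-x) hence 1-x ≥ exp(-x/(1-x)) ≥ exp(-x/(1-q))
    set x := q ^ (k + 1) with hxd
    have hx0 : 0 < x := pow_pos hq0 _
    have h1x : 0 < 1 - x := by linarith
    have h1 : 1 / (1 - x) ≤ Real.exp (x / (1 - x)) := by
      have := Real.add_one_le_exp (x / (1 - x))
      have he : x / (1 - x) + 1 = 1 / (1 - x) := by field_simp; ring
      linarith
    have h2 : Real.exp (-(x / (1 - x))) ≤ 1 - x := by
      rw [Real.exp_neg]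
      refine inv_le_of_inv_le₀ h1x ?_
      rw [← one_div]
      exact h1
    calc Real.exp (-(x / (1 - q))) ≤ Real.exp (-(x / (1 - x))) := by
          apply Real.exp_le_exp.2
          have : x / (1 - x) ≤ x / (1 - q) :=
            div_le_div_of_nonneg_left hx0.le hq1' (by linarith)
          linarith
      _ ≤ 1 - x := h2
  have step2 : Real.exp (-(q / (1 - q) ^ 2))
      ≤ ∏ k ∈ range m, Real.exp (-(q ^ (k + 1) / (1 - q))) := by
    rw [← Real.exp_sum]
    apply Real.exp_le_exp.2
    have hneg : ∑ k ∈ range m, -(q ^ (k + 1) / (1 - q))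
        = -(∑ k ∈ range m, q ^ (k + 1) / (1 - q)) := by
      rw [Finset.sum_neg_distrib]
    rw [hneg, neg_le_neg_iff]
    have hsum : ∑ k ∈ range m, q ^ (k + 1) / (1 - q)
        = (∑ k ∈ range m, q ^ (k + 1)) / (1 - q) := by
      rw [Finset.sum_div]
    rw [hsum]
    rw [div_le_div_iff₀ hq1' (by positivity)]
    have hgeo : ∑ k ∈ range m, q ^ (k + 1) ≤ q / (1 - q) := by
      have h1 : ∑ k ∈ range m, q ^ (k + 1) = q * ∑ k ∈ range m, q ^ k := by
        rw [Finset.mul_sum]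
        exact Finset.sum_congr rfl fun k _ => by rw [pow_succ]; ring
      have h2 : ∑ k ∈ range m, q ^ k ≤ ∑' k : ℕ, q ^ k :=
        Summable.sum_le_tsum (range m) (fun k _ => by positivity)
          (summable_geometric_of_lt_one hq0.le hq1)
      rw [tsum_geometric_of_lt_one hq0.le hq1] at h2
      rw [h1, div_eq_mul_inv]
      exact mul_le_mul_of_nonneg_left h2 hq0.le
    calc (∑ k ∈ range m, q ^ (k + 1)) * (1 - q) ^ 2
          ≤ (q / (1 - q)) * (1 - q) ^ 2 := by
          apply mul_le_mul_of_nonneg_right hgeo (by positivity)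
      _ = q * (1 - q) := by field_simp
  exact step2.trans step1

lemma P_limit : ∃ L : ℝ, 0 < L ∧ Tendsto (P q) atTop (𝓝 L) ∧ ∀ m, L ≤ P q m := by
  have hbdd : BddBelow (Set.range (P q)) := by
    refine ⟨Real.exp (-(q / (1 - q) ^ 2)), ?_⟩
    rintro x ⟨m, rfl⟩
    exact P_lb hq0 hq1 m
  refine ⟨⨅ m, P q m, ?_, tendsto_atTop_ciInf (P_antitone hq0 hq1) hbdd, fun m => ciInf_le hbdd m⟩
  exact lt_of_lt_of_le (Real.exp_pos _) (le_ciInf fun m => P_lb hq0 hq1 m)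

def u (x : ℝ) (n i : ℕ) : ℝ := if i ≤ n + 1 then x ^ T i / (P x (n+1+i) * P x (n+1-i)) else 0

def v (x : ℝ) (n i : ℕ) : ℝ := if i ≤ n then x ^ T i / (P x (n-i) * P x (n+2+i)) else 0

lemma summable_qT : Summable fun i : ℕ => q ^ T i := by
  refine Summable.of_nonneg_of_le (fun i => by positivity) (fun i => ?_)
    (summable_geometric_of_lt_one hq0.le hq1)
  exact pow_le_pow_of_le_one hq0.le hq1.le (T_ge i)

lemma star2 (n : ℕ) :
    2 * E q n * E q (n + 1) / P q (2 * n + 2) = (∑' i, u q n i) + (∑' i, v q n i) := by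
  have hu : ∑' i, u q n i = ∑ i ∈ range (n + 2), u q n i := by
    apply tsum_eq_sum
    intro i hi
    rw [mem_range, not_lt] at hi
    exact if_neg (by omega)
  have hv : ∑' i, v q n i = ∑ i ∈ range (n + 1), v q n i := by
    apply tsum_eq_sum
    intro i hi
    rw [mem_range, not_lt] at hi
    exact if_neg (by omega)
  rw [hu, hv]
  have hu2 : ∀ i ∈ range (n + 2),
      u q n i = qb q (2 * n + 2) (n + 1 + i) * q ^ T i / P q (2 * n + 2) := by
    intro i hi
    have hi' : i ≤ n + 1 := Nat.lt_succ_iff.mp (mem_range.mp hi)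
    rw [u, if_pos hi', qb, if_pos (by omega : n + 1 + i ≤ 2 * n + 2)]
    rw [show 2 * n + 2 - (n + 1 + i) = n + 1 - i by omega]
    rw [div_mul_eq_mul_div, div_div]
    rw [div_eq_div_iff (mul_pos (P_pos hq0 hq1 (n+1+i)) (P_pos hq0 hq1 (n+1-i))).ne'
      (mul_pos (mul_pos (P_pos hq0 hq1 (n+1+i)) (P_pos hq0 hq1 (n+1-i)))
        (P_pos hq0 hq1 (2*n+2))).ne']
    ring
  have hv2 : ∀ i ∈ range (n + 1),
      v q n i = qb q (2 * n + 2) (n - i) * q ^ T i / P q (2 * n + 2) := by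
    intro i hi
    have hi' : i ≤ n := Nat.lt_succ_iff.mp (mem_range.mp hi)
    rw [v, if_pos hi', qb, if_pos (by omega : n - i ≤ 2 * n + 2)]
    rw [show 2 * n + 2 - (n - i) = n + 2 + i by omega]
    rw [div_mul_eq_mul_div, div_div]
    rw [div_eq_div_iff (mul_pos (P_pos hq0 hq1 (n-i)) (P_pos hq0 hq1 (n+2+i))).ne'
      (mul_pos (mul_pos (P_pos hq0 hq1 (n-i)) (P_pos hq0 hq1 (n+2+i)))
        (P_pos hq0 hq1 (2*n+2))).ne']
    ring
  rw [Finset.sum_congr rfl hu2, Finset.sum_congr rfl hv2, ← Finset.sum_div,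
    ← Finset.sum_div, star hq0 hq1 n, add_div]

lemma tendsto_Q :
    Tendsto (fun m => ∏ k ∈ range m, ((1 - q ^ (2 * k + 2)) / (1 - q ^ (2 * k + 1))))
      atTop (𝓝 (∑' i : ℕ, q ^ T i)) := by
  obtain ⟨L, hL0, hLtend, hLle⟩ := P_limit hq0 hq1
  have hLL : (0:ℝ) < L * L := mul_pos hL0 hL0
  set S : ℝ := ∑' i : ℕ, q ^ T i with hS
  have hSsum := summable_qT hq0 hq1
  have hbound_sum : Summable (fun i : ℕ => q ^ T i / (L * L)) := hSsum.div_const _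
  -- limits of u
  have hU : Tendsto (fun n => ∑' i, u q n i) atTop (𝓝 (∑' i : ℕ, q ^ T i / (L * L))) := by
    apply tendsto_tsum_of_dominated_convergence hbound_sum
    · intro i
      have hP1 : Tendsto (fun n : ℕ => P q (n + 1 + i)) atTop (𝓝 L) :=
        hLtend.comp (tendsto_atTop_mono (fun n => (by omega : n ≤ n + 1 + i)) tendsto_id)
      have hP2 : Tendsto (fun n : ℕ => P q (n + 1 - i)) atTop (𝓝 L) :=
        hLtend.comp ((tendsto_sub_atTop_nat i).comp (tendsto_add_atTop_nat 1))
      have hmain : Tendsto (fun n : ℕ => q ^ T i / (P q (n + 1 + i) * P q (n + 1 - i)))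
          atTop (𝓝 (q ^ T i / (L * L))) :=
        tendsto_const_nhds.div (hP1.mul hP2) hLL.ne'
      apply hmain.congr'
      filter_upwards [eventually_ge_atTop i] with n hn
      rw [u, if_pos (by omega)]
    · apply Eventually.of_forall
      intro n i
      rw [u]
      split_ifs with h
      · rw [Real.norm_eq_abs, abs_of_nonneg (div_nonneg (pow_nonneg hq0.le _)
          (mul_pos (P_pos hq0 hq1 _) (P_pos hq0 hq1 _)).le)]
        apply div_le_div_of_nonneg_left (by positivity) hLL
        exact mul_le_mul (hLle _) (hLle _) hL0.le (P_pos hq0 hq1 _).le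
      · simp [div_nonneg (pow_nonneg hq0.le _) hLL.le]
  have hV : Tendsto (fun n => ∑' i, v q n i) atTop (𝓝 (∑' i : ℕ, q ^ T i / (L * L))) := by
    apply tendsto_tsum_of_dominated_convergence hbound_sum
    · intro i
      have hP1 : Tendsto (fun n : ℕ => P q (n - i)) atTop (𝓝 L) :=
        hLtend.comp (tendsto_sub_atTop_nat i)
      have hP2 : Tendsto (fun n : ℕ => P q (n + 2 + i)) atTop (𝓝 L) :=
        hLtend.comp (tendsto_atTop_mono (fun n => (by omega : n ≤ n + 2 + i)) tendsto_id)
      have hmain : Tendsto (fun n : ℕ => q ^ T i / (P q (n - i) * P q (n + 2 + i)))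
          atTop (𝓝 (q ^ T i / (L * L))) :=
        tendsto_const_nhds.div (hP1.mul hP2) hLL.ne'
      apply hmain.congr'
      filter_upwards [eventually_ge_atTop i] with n hn
      rw [v, if_pos (by omega)]
    · apply Eventually.of_forall
      intro n i
      rw [v]
      split_ifs with h
      · rw [Real.norm_eq_abs, abs_of_nonneg (div_nonneg (pow_nonneg hq0.le _)
          (mul_pos (P_pos hq0 hq1 _) (P_pos hq0 hq1 _)).le)]
        apply div_le_div_of_nonneg_left (by positivity) hLL
        exact mul_le_mul (hLle _) (hLle _) hL0.le (P_pos hq0 hq1 _).le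
      · simp [div_nonneg (pow_nonneg hq0.le _) hLL.le]
  have hdiv : (∑' i : ℕ, q ^ T i / (L * L)) = S / (L * L) := tsum_div_const
  rw [hdiv] at hU hV
  have hsum_lim : Tendsto (fun n => 2 * E q n * E q (n + 1) / P q (2 * n + 2)) atTop
      (𝓝 (S / (L * L) + S / (L * L))) :=
    (hU.add hV).congr fun n => (star2 hq0 hq1 n).symm
  -- algebraic identities
  have hAE : ∀ m, A q m = P q m * E q m := by
    intro m
    rw [A, P, E, ← Finset.prod_mul_distrib]
    refine Finset.prod_congr rfl fun k _ => ?_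
    ring
  have hP2m : ∀ m, P q (2 * m) = A q m * Bo q m := by
    intro m
    induction m with
    | zero => simp [P, A, Bo]
    | succ m ih =>
      have hA1 : A q (m + 1) = A q m * (1 - q ^ (2 * m + 2)) := by
        rw [A, Finset.prod_range_succ, ← A]
      have hBo1 : Bo q (m + 1) = Bo q m * (1 - q ^ (2 * m + 1)) := by
        rw [Bo, Finset.prod_range_succ, ← Bo]
      have e1 : 2 * (m + 1) = (2 * m + 1) + 1 := by ring
      rw [e1, P_succ, P_succ, ih, hA1, hBo1]
      ring
  have hApos : ∀ m, 0 < A q m := fun m =>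
    Finset.prod_pos fun k _ => by
      have := one_sub_pow_pos hq0 hq1 (2 * k + 1)
      rw [show 2 * k + 1 + 1 = 2 * k + 2 by ring] at this
      exact this
  have hBopos : ∀ m, 0 < Bo q m := fun m =>
    Finset.prod_pos fun k _ => one_sub_pow_pos hq0 hq1 (2 * k)
  have hXeq : ∀ n, A q n / Bo q (n + 1)
      = (2 * E q n * E q (n + 1) / P q (2 * n + 2)) * (P q n * P q (n + 1)) / 2 := by
    intro n
    have h2 : P q (2 * n + 2) = A q (n + 1) * Bo q (n + 1) := by
      rw [show 2 * n + 2 = 2 * (n + 1) by ring, hP2m]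
    have hAn := hAE n
    have hAn1 := hAE (n + 1)
    have hPn := P_ne hq0 hq1 n
    have hPn1 := P_ne hq0 hq1 (n + 1)
    have hBon1 := (hBopos (n + 1)).ne'
    have hEn1 : E q (n + 1) ≠ 0 := by
      have := hApos (n + 1)
      rw [hAn1] at this
      intro h
      rw [h, mul_zero] at this
      exact lt_irrefl 0 this
    rw [h2, hAn1]
    rw [show A q n = P q n * E q n from hAn]
    field_simp
  have hXlim : Tendsto (fun n => A q n / Bo q (n + 1)) atTop (𝓝 S) := by
    have hP1' : Tendsto (fun n : ℕ => P q (n + 1)) atTop (𝓝 L) :=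
      hLtend.comp (tendsto_add_atTop_nat 1)
    have h := ((hsum_lim.mul (hLtend.mul hP1')).div_const 2).congr
      fun n => (hXeq n).symm
    have hval : (S / (L * L) + S / (L * L)) * (L * L) / 2 = S := by
      field_simp
      ring
    rwa [hval] at h
  have hpow : Tendsto (fun n : ℕ => 1 - q ^ (2 * n + 2)) atTop (𝓝 1) := by
    have h0 : Tendsto (fun n : ℕ => q ^ (2 * n + 2)) atTop (𝓝 0) := by
      apply squeeze_zero (fun n => by positivity)
        (fun n => pow_le_pow_of_le_one hq0.le hq1.le (by omega : n ≤ 2 * n + 2))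
      exact tendsto_pow_atTop_nhds_zero_of_lt_one hq0.le hq1
    simpa using tendsto_const_nhds.sub h0
  have hQ1 : ∀ n, ∏ k ∈ range (n + 1), ((1 - q ^ (2 * k + 2)) / (1 - q ^ (2 * k + 1)))
      = (A q n / Bo q (n + 1)) * (1 - q ^ (2 * n + 2)) := by
    intro n
    have hQA : ∀ m, ∏ k ∈ range m, ((1 - q ^ (2 * k + 2)) / (1 - q ^ (2 * k + 1)))
        = A q m / Bo q m := by
      intro m
      rw [A, Bo, ← Finset.prod_div_distrib]
    rw [hQA (n + 1)]
    rw [show A q (n + 1) = A q n * (1 - q ^ (2 * n + 2)) from by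
      rw [A, Finset.prod_range_succ, ← A]]
    ring
  have hfin : Tendsto (fun n => ∏ k ∈ range (n + 1),
      ((1 - q ^ (2 * k + 2)) / (1 - q ^ (2 * k + 1)))) atTop (𝓝 S) := by
    have h := hXlim.mul hpow
    rw [mul_one] at h
    exact h.congr fun n => (hQ1 n).symm
  exact (tendsto_add_atTop_iff_nat 1).mp hfin

end
end Gauss13

theorem stmt_13 (l : ℝ) (hl0 : 0 < l) (hl1 : l < 1) :
    ∑' n : ℕ, l ^ (n * (n+1) / 2) = ∏' n : ℕ, (1 - l^(2*n+2)) / (1 - l^(2*n+1)) := by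
  classical
  have hQ := Gauss13.tendsto_Q hl0 hl1
  set S : ℝ := ∑' i : ℕ, l ^ Gauss13.T i with hS
  set f : ℕ → ℝ := fun k => (1 - l ^ (2 * k + 2)) / (1 - l ^ (2 * k + 1)) with hf
  have hden : ∀ k : ℕ, (0:ℝ) < 1 - l ^ (2 * k + 1) := fun k =>
    Gauss13.one_sub_pow_pos hl0 hl1 (2 * k)
  have hnum : ∀ k : ℕ, (0:ℝ) < 1 - l ^ (2 * k + 2) := fun k => by
    have := Gauss13.one_sub_pow_pos hl0 hl1 (2 * k + 1)
    rw [show 2 * k + 1 + 1 = 2 * k + 2 by ring] at this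
    exact this
  have hfpos : ∀ k, 0 < f k := fun k => div_pos (hnum k) (hden k)
  have hf1 : ∀ k, 1 ≤ f k := by
    intro k
    rw [hf]
    rw [one_le_div (hden k)]
    have : l ^ (2 * k + 2) ≤ l ^ (2 * k + 1) :=
      pow_le_pow_of_le_one hl0.le hl1.le (by omega)
    linarith
  have hmono : Monotone (fun n => ∏ k ∈ Finset.range n, f k) := by
    apply monotone_nat_of_le_succ
    intro n
    rw [Finset.prod_range_succ]
    exact le_mul_of_one_le_right
      (Finset.prod_pos fun k _ => hfpos k).le (hf1 n)
  have hmono_fin : Monotone (fun s : Finset ℕ => ∏ i ∈ s, f i) := by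
    intro s t hst
    have hone : (1:ℝ) ≤ ∏ i ∈ t \ s, f i := by
      have := Finset.prod_le_prod (f := fun _ : ℕ => (1:ℝ)) (g := f)
        (fun i _ => zero_le_one) (fun i (_ : i ∈ t \ s) => hf1 i)
      simpa using this
    have hsd := Finset.prod_sdiff (f := f) hst
    have hnn : (0:ℝ) ≤ ∏ i ∈ s, f i :=
      (Finset.prod_pos fun k _ => hfpos k).le
    calc ∏ i ∈ s, f i ≤ (∏ i ∈ t \ s, f i) * ∏ i ∈ s, f i :=
          le_mul_of_one_le_left hnn hone
      _ = ∏ i ∈ t, f i := hsd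
  have hub : ∀ s : Finset ℕ, ∏ i ∈ s, f i ≤ S := by
    intro s
    obtain ⟨n, hsub⟩ := s.exists_nat_subset_range
    calc ∏ i ∈ s, f i ≤ ∏ i ∈ Finset.range n, f i := hmono_fin hsub
      _ ≤ S := hmono.ge_of_tendsto hQ n
  have hlub : IsLUB (Set.range fun s : Finset ℕ => ∏ i ∈ s, f i) S := by
    constructor
    · rintro x ⟨s, rfl⟩
      exact hub s
    · intro b hb
      refine le_of_tendsto hQ (Filter.Eventually.of_forall fun n => ?_)
      exact hb ⟨Finset.range n, rfl⟩
  have hprod : HasProd f S := tendsto_atTop_isLUB hmono_fin hlub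
  rw [hprod.tprod_eq, hS]
  exact tsum_congr fun n => rfl
end

section
/- Let $\lambda \in (0,1)$, let $\{Z_k\}_{k\ge 1}$ be i.i.d. standard normal random variables, $v_0 > 0$, and define $u_n = \lambda^n v_0 + (1-\lambda)\sum_{k=1}^n \lambda^{n-k} Z_k^2$ for $n \ge 0$. Then for every $\alpha > 0$, $\sup_{n \ge 0} \mathbb{E}\big[ u_n^{-\alpha} \big] < \infty$. -/
open MeasureTheory ProbabilityTheory Real Set


lemma aux_gauss_int {s : ℝ} (hs1 : -1 < s) (hs0 : s < 0) :
    Integrable (fun x : ℝ => |x| ^ s) (gaussianReal 0 1) := by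
  rw [gaussianReal_of_var_ne_zero 0 one_ne_zero,
    integrable_withDensity_iff (measurable_gaussianPDF 0 1)
      (Filter.Eventually.of_forall fun x => ENNReal.ofReal_lt_top)]
  have hpdf : ∀ x : ℝ, (gaussianPDF 0 1 x).toReal = gaussianPDFReal 0 1 x := fun x =>
    ENNReal.toReal_ofReal (gaussianPDFReal_nonneg 0 1 x)
  set K : ℝ := (Real.sqrt (2 * π))⁻¹ with hK
  have hKpos : 0 < K := by rw [hK]; positivity
  have hpdf_le : ∀ x : ℝ, gaussianPDFReal 0 1 x = K * Real.exp (-(1/2) * x ^ 2) := by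
    intro x
    rw [gaussianPDFReal, hK]
    simp only [NNReal.coe_one, mul_one, sub_zero]
    rw [show -x^2/2 = -(1/2)*x^2 from by ring]
  set f1 : ℝ → ℝ := Set.indicator (Set.Ioc (0:ℝ) 1) (fun x => x ^ s) with hf1def
  have hf1 : Integrable f1 volume := by
    rw [hf1def, integrable_indicator_iff measurableSet_Ioc]
    exact ((intervalIntegral.integrableOn_Ioo_rpow_iff zero_lt_one).mpr hs1).congr_set_ae
      Ioo_ae_eq_Ioc.symm
  have hf2 : Integrable (fun x => f1 (-x)) volume := hf1.comp_neg
  have hf3 : Integrable (fun x : ℝ => Real.exp (-(1/2) * x ^ 2)) volume := by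
    simpa [mul_comm, neg_mul, mul_pow] using integrable_exp_neg_mul_sq (b := 1/2) (by norm_num)
  have hf1nn : ∀ x, 0 ≤ f1 x := fun x =>
    Set.indicator_nonneg (fun y _ => Real.rpow_nonneg (by rcases Set.mem_Ioc.mp ‹_› with ⟨h,_⟩; exact h.le) s) x
  have hg : Integrable (fun x => K * (f1 x + f1 (-x) + Real.exp (-(1/2) * x ^ 2))) volume :=
    ((hf1.add hf2).add hf3).const_mul K
  refine hg.mono' ?_ (Filter.Eventually.of_forall fun x => ?_)
  · have : Measurable fun x : ℝ => |x| ^ s * (gaussianPDF 0 1 x).toReal := by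
      apply Measurable.mul
      · fun_prop
      · exact (measurable_gaussianPDF 0 1).ennreal_toReal
    exact this.aestronglyMeasurable
  · rw [Real.norm_eq_abs, abs_of_nonneg (mul_nonneg (Real.rpow_nonneg (abs_nonneg x) s)
      ENNReal.toReal_nonneg), hpdf, hpdf_le]
    have hE1 : Real.exp (-(1/2) * x ^ 2) ≤ 1 := Real.exp_le_one_iff.mpr (by nlinarith [sq_nonneg x])
    have hEpos : 0 < Real.exp (-(1/2) * x ^ 2) := Real.exp_pos _
    have hAnn : 0 ≤ |x| ^ s := Real.rpow_nonneg (abs_nonneg x) s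
    rcases le_or_gt (|x|) 1 with hx1 | hx1
    · rcases lt_trichotomy x 0 with hx | hx | hx
      · have hmem : -x ∈ Set.Ioc (0:ℝ) 1 := ⟨by linarith, by rw [abs_of_neg hx] at hx1; linarith⟩
        have heq : f1 (-x) = |x| ^ s := by
          rw [hf1def, Set.indicator_of_mem hmem, abs_of_neg hx]
        rw [heq] at *
        nlinarith [mul_le_mul_of_nonneg_left (mul_le_of_le_one_right hAnn hE1) hKpos.le,
          mul_nonneg hKpos.le (hf1nn x), mul_nonneg hKpos.le hEpos.le]
      · have : |x| ^ s = 0 := by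
          rw [hx, abs_zero, Real.zero_rpow hs0.ne]
        rw [this]
        nlinarith [mul_nonneg hKpos.le (hf1nn x), mul_nonneg hKpos.le (hf1nn (-x)),
          mul_nonneg hKpos.le hEpos.le]
      · have hmem : x ∈ Set.Ioc (0:ℝ) 1 := ⟨hx, by rw [abs_of_pos hx] at hx1; linarith⟩
        have heq : f1 x = |x| ^ s := by
          rw [hf1def, Set.indicator_of_mem hmem, abs_of_pos hx]
        rw [heq] at *
        nlinarith [mul_le_mul_of_nonneg_left (mul_le_of_le_one_right hAnn hE1) hKpos.le,
          mul_nonneg hKpos.le (hf1nn (-x)), mul_nonneg hKpos.le hEpos.le]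
    · have hle : |x| ^ s ≤ 1 := Real.rpow_le_one_of_one_le_of_nonpos hx1.le hs0.le
      nlinarith [mul_le_mul_of_nonneg_right hle (mul_nonneg hKpos.le hEpos.le),
        mul_nonneg hKpos.le (hf1nn x), mul_nonneg hKpos.le (hf1nn (-x))]


lemma aux_prod {Ω : Type*} [MeasureSpace Ω] {μ : Measure Ω} [IsProbabilityMeasure μ]
    (f : ℕ → Ω → ℝ) (hindep : iIndepFun f μ)
    (hmeas : ∀ k, Measurable (f k)) (hnn : ∀ k ω, 0 ≤ f k ω)
    (hint : ∀ k, Integrable (f k) μ) (s : Finset ℕ) :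
    Integrable (fun ω => ∏ k ∈ s, f k ω) μ ∧
      ∫ ω, ∏ k ∈ s, f k ω ∂μ = ∏ k ∈ s, ∫ ω, f k ω ∂μ := by
  classical
  induction s using Finset.induction_on with
  | empty => simp
  | @insert i t hi ih =>
    have hfun : (fun ω => ∏ k ∈ insert i t, f k ω) = (∏ j ∈ t, f j) * f i := by
      funext ω
      rw [Finset.prod_insert hi, mul_comm]
      simp [Finset.prod_apply]
    have hprodeq : (∏ j ∈ t, f j : Ω → ℝ) = fun ω => ∏ k ∈ t, f k ω := by
      funext ω; simp [Finset.prod_apply]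
    have hXint : Integrable (∏ j ∈ t, f j) μ := by
      rw [hprodeq]; exact ih.1
    have hIndep : IndepFun (∏ j ∈ t, f j) (f i) μ :=
      hindep.indepFun_finsetProd_of_notMem hmeas hi
    have hmul : Integrable ((∏ j ∈ t, f j) * f i) μ :=
      hIndep.integrable_mul hXint (hint i)
    have hXnn : 0 ≤ (∏ j ∈ t, f j : Ω → ℝ) := by
      intro ω
      simp only [Finset.prod_apply]
      exact Finset.prod_nonneg fun k _ => hnn k ω
    have hval : integral μ ((∏ j ∈ t, f j) * f i)
        = integral μ (∏ j ∈ t, f j) * integral μ (f i) :=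
      hIndep.integral_mul_eq_mul_integral
        hXint.aestronglyMeasurable (hint i).aestronglyMeasurable
    constructor
    · rw [hfun]; exact hmul
    · rw [hfun, hval, Finset.prod_insert hi]
      have : integral μ (∏ j ∈ t, f j) = ∏ k ∈ t, ∫ ω, f k ω ∂μ := by
        rw [← ih.2, hprodeq]
      rw [this]; ring

theorem stmt_18 {Ω : Type*} [MeasureSpace Ω] (μ : Measure Ω) [IsProbabilityMeasure μ]
    (Z : ℕ → Ω → ℝ) (hmeas : ∀ k, Measurable (Z k))
    (hindep : iIndepFun Z μ)
    (hdist : ∀ k, μ.map (Z k) = gaussianReal 0 1)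
    (l : ℝ) (hl0 : 0 < l) (hl1 : l < 1) (v0 : ℝ) (hv0 : 0 < v0) :
    ∀ α > (0:ℝ), ∃ C : ℝ, ∀ n : ℕ,
      (∫ ω, (l^n * v0 + (1 - l) * ∑ k ∈ Finset.Icc 1 n, l^(n-k) * (Z k ω)^2) ^ (-α) ∂μ)
        ≤ C := by
  intro α hα
  set m : ℕ := ⌊2*α⌋₊ + 1 with hmdef
  have hmR : (0:ℝ) < m := by positivity
  have hm2 : 2*α < m := by
    have h := Nat.lt_floor_add_one (2*α)
    rw [hmdef]; push_cast; push_cast at h; linarith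
  set γ : ℝ := α / m with hγdef
  have hγpos : 0 < γ := div_pos hα hmR
  set sexp : ℝ := -(2*γ) with hsdef
  have hs0 : sexp < 0 := by rw [hsdef]; linarith
  have hs1 : -1 < sexp := by
    rw [hsdef, hγdef]
    have h : 2 * (α/(m:ℝ)) = (2*α)/m := by ring
    rw [h]
    have : (2*α)/(m:ℝ) < 1 := (div_lt_one hmR).mpr hm2
    linarith
  have hg0 : Measurable (fun x : ℝ => |x| ^ sexp) := by fun_prop
  have hEint : Integrable (fun x : ℝ => |x| ^ sexp) (gaussianReal 0 1) := aux_gauss_int hs1 hs0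
  set E : ℝ := ∫ x, |x| ^ sexp ∂(gaussianReal 0 1) with hEdef
  set f : ℕ → Ω → ℝ := fun k ω => |Z k ω| ^ sexp with hfdef
  have hfmeas : ∀ k, Measurable (f k) := fun k => hg0.comp (hmeas k)
  have hfint : ∀ k, Integrable (f k) μ := by
    intro k
    have h := hEint
    rw [← hdist k] at h
    exact (integrable_map_measure hg0.aestronglyMeasurable (hmeas k).aemeasurable).mp h
  have hfE : ∀ k, ∫ ω, f k ω ∂μ = E := by
    intro k
    have h := integral_map (μ := μ) (f := fun x : ℝ => |x| ^ sexp) (hmeas k).aemeasurable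
      hg0.aestronglyMeasurable
    rw [hdist k] at h
    exact h.symm
  have hfindep : iIndepFun f μ :=
    hindep.comp (fun _ => fun x => |x| ^ sexp) (fun _ => hg0)
  have hfnn : ∀ k ω, 0 ≤ f k ω := fun k ω => Real.rpow_nonneg (abs_nonneg _) _
  set c : ℝ := (1 - l) * l ^ (m - 1) with hcdef
  have hc : 0 < c := mul_pos (by linarith) (pow_pos hl0 _)
  refine ⟨max ((l^m * v0) ^ (-α)) (c ^ (-α) * E ^ m), fun n => ?_⟩
  set u : Ω → ℝ := fun ω => l^n * v0 + (1 - l) * ∑ k ∈ Finset.Icc 1 n, l^(n-k) * (Z k ω)^2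
    with hudef
  show (∫ ω, (u ω) ^ (-α) ∂μ) ≤ _
  have hsum_nn : ∀ ω, 0 ≤ ∑ k ∈ Finset.Icc 1 n, l^(n-k) * (Z k ω)^2 :=
    fun ω => Finset.sum_nonneg fun k _ => mul_nonneg (pow_nonneg hl0.le _) (sq_nonneg _)
  have hu_pos : ∀ ω, 0 < u ω := fun ω =>
    add_pos_of_pos_of_nonneg (mul_pos (pow_pos hl0 n) hv0) (mul_nonneg (by linarith) (hsum_nn ω))
  have hint_nn : 0 ≤ᵐ[μ] fun ω => (u ω) ^ (-α) :=
    Filter.Eventually.of_forall fun ω => Real.rpow_nonneg (hu_pos ω).le _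
  by_cases hnm : n < m
  · have hbound : ∀ ω, (u ω) ^ (-α) ≤ (l^m * v0) ^ (-α) := by
      intro ω
      apply Real.rpow_le_rpow_of_nonpos (mul_pos (pow_pos hl0 m) hv0) ?_ (neg_nonpos.mpr hα.le)
      have hl_le : l ^ m ≤ l ^ n := pow_le_pow_of_le_one hl0.le hl1.le hnm.le
      have h2 := hsum_nn ω
      rw [hudef]
      simp only
      nlinarith
    calc ∫ ω, (u ω)^(-α) ∂μ ≤ ∫ _ω, (l^m*v0)^(-α) ∂μ :=
          integral_mono_of_nonneg hint_nn (integrable_const _)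
            (Filter.Eventually.of_forall hbound)
      _ = (l^m*v0)^(-α) := by simp
      _ ≤ _ := le_max_left _ _
  · push_neg at hnm
    set W : Finset ℕ := Finset.Icc (n-m+1) n with hWdef
    have hWcard : W.card = m := by rw [hWdef, Nat.card_Icc]; omega
    have hWsub : W ⊆ Finset.Icc 1 n := by
      intro k hk
      rw [hWdef, Finset.mem_Icc] at hk
      rw [Finset.mem_Icc]
      omega
    have hae : ∀ᵐ ω ∂μ, ∀ k, Z k ω ≠ 0 := by
      rw [ae_all_iff]
      intro k
      rw [ae_iff]
      have h0 : {ω | ¬ Z k ω ≠ 0} = Z k ⁻¹' {0} := by ext ω; simp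
      rw [h0, ← Measure.map_apply (hmeas k) (measurableSet_singleton 0), hdist k]
      exact gaussianReal_absolutelyContinuous 0 one_ne_zero (measure_singleton 0)
    have hptwise : ∀ᵐ ω ∂μ, (u ω)^(-α) ≤ c^(-α) * ∏ k ∈ W, f k ω := by
      filter_upwards [hae] with ω hω
      have hkey : ∀ k ∈ W, 0 < c * (Z k ω)^2 ∧ c * (Z k ω)^2 ≤ u ω := by
        intro k hk
        have hz2 : 0 < (Z k ω)^2 := pow_two_pos_of_ne_zero (hω k)
        refine ⟨mul_pos hc hz2, ?_⟩
        have hk' := hk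
        rw [hWdef, Finset.mem_Icc] at hk'
        have hnk : n - k ≤ m - 1 := by omega
        have hlk : l ^ (m-1) ≤ l ^ (n-k) := pow_le_pow_of_le_one hl0.le hl1.le hnk
        have hterm : l^(n-k) * (Z k ω)^2 ≤ ∑ j ∈ Finset.Icc 1 n, l^(n-j)*(Z j ω)^2 :=
          Finset.single_le_sum (f := fun j => l^(n-j)*(Z j ω)^2)
            (fun j _ => mul_nonneg (pow_nonneg hl0.le _) (sq_nonneg _)) (hWsub hk)
        have h1l : (0:ℝ) ≤ 1 - l := by linarith
        have hA := mul_le_mul_of_nonneg_left hterm h1l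
        have hB := mul_le_mul_of_nonneg_right hlk (sq_nonneg (Z k ω))
        have hC := mul_le_mul_of_nonneg_left hB h1l
        have hD := mul_pos (pow_pos hl0 n) hv0
        rw [hudef, hcdef]
        simp only
        nlinarith
      have h1 : (u ω)^(-α) = ∏ _k ∈ W, (u ω)^(-γ) := by
        rw [Finset.prod_const, hWcard, ← Real.rpow_natCast ((u ω)^(-γ)) m,
          ← Real.rpow_mul (hu_pos ω).le]
        congr 1
        rw [hγdef]
        field_simp
      have h2 : ∏ _k ∈ W, (u ω)^(-γ) ≤ ∏ k ∈ W, (c * (Z k ω)^2)^(-γ) :=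
        Finset.prod_le_prod (fun k _ => Real.rpow_nonneg (hu_pos ω).le _)
          (fun k hk => Real.rpow_le_rpow_of_nonpos (hkey k hk).1 (hkey k hk).2
            (neg_nonpos.mpr hγpos.le))
      have h3 : ∀ k ∈ W, (c * (Z k ω)^2)^(-γ) = c^(-γ) * f k ω := by
        intro k _
        rw [Real.mul_rpow hc.le (sq_nonneg _)]
        congr 1
        rw [hfdef]
        simp only
        rw [← sq_abs, ← Real.rpow_natCast |Z k ω| 2, ← Real.rpow_mul (abs_nonneg _)]
        congr 1
        rw [hsdef]
        push_cast
        ring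
      calc (u ω)^(-α) = ∏ _k ∈ W, (u ω)^(-γ) := h1
        _ ≤ ∏ k ∈ W, (c * (Z k ω)^2)^(-γ) := h2
        _ = ∏ k ∈ W, (c^(-γ) * f k ω) := Finset.prod_congr rfl h3
        _ = c^(-α) * ∏ k ∈ W, f k ω := by
            rw [Finset.prod_mul_distrib, Finset.prod_const, hWcard,
              ← Real.rpow_natCast (c^(-γ)) m, ← Real.rpow_mul hc.le]
            congr 2
            rw [hγdef]
            field_simp
    obtain ⟨hPint, hPval⟩ := aux_prod f hfindep hfmeas hfnn hfint W
    calc ∫ ω, (u ω)^(-α) ∂μ ≤ ∫ ω, c^(-α) * ∏ k ∈ W, f k ω ∂μ :=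
          integral_mono_of_nonneg hint_nn (hPint.const_mul _) hptwise
      _ = c^(-α) * ∏ k ∈ W, ∫ ω, f k ω ∂μ := by rw [integral_const_mul, hPval]
      _ = c^(-α) * E ^ m := by
          rw [Finset.prod_congr rfl fun k _ => hfE k, Finset.prod_const, hWcard]
      _ ≤ _ := le_max_right _ _
end
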